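/- arXiv:1804.10100 — 9 statements merged into one kernel-verified Lean document; each statement's English description precedes it below -/
import Mathlib

section
/- Fix a positive definite density matrix σ on a finite-dimensional Hilbert space and define ‖X‖_{p,σ} := (tr|σ^{1/(2p)} X σ^{1/(2p)}|^p)^{1/p}. Then for positive definite X and Y and any p < 1 (p ≠ 0) with Hölder conjugate p̂, the weighted inner product ⟨X,Y⟩_σ := tr(σ^{1/2} X σ^{1/2} Y) satisfies ⟨X,Y⟩_σ ≥ ‖X‖_{p,σ} · ‖Y‖_{p̂,σ}. -/
open Matrix BigOperators
open scoped ComplexOrder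

noncomputable section

variable {n : Type*} [Fintype n] [DecidableEq n]

/-- Apply a real function to a matrix via its spectral decomposition
(defined to be `0` if the matrix is not Hermitian). -/
noncomputable def matFun (A : Matrix n n ℂ) (f : ℝ → ℝ) : Matrix n n ℂ :=
  if hA : A.IsHermitian then
    (hA.eigenvectorUnitary : Matrix n n ℂ) *
      Matrix.diagonal (fun i => (f (hA.eigenvalues i) : ℂ)) *
      star (hA.eigenvectorUnitary : Matrix n n ℂ)
  else 0

/-- Real power of a (Hermitian) matrix. -/
noncomputable def mpow (A : Matrix n n ℂ) (r : ℝ) : Matrix n n ℂ :=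
  matFun A (fun x => x ^ r)

/-- Logarithm of a (Hermitian) matrix. -/
noncomputable def mlog (A : Matrix n n ℂ) : Matrix n n ℂ :=
  matFun A Real.log

/-- Absolute value `|X| = √(X† X)` of a matrix. -/
noncomputable def mAbs (X : Matrix n n ℂ) : Matrix n n ℂ :=
  mpow (Xᴴ * X) (1/2 : ℝ)

/-- Schatten `p`-(quasi)norm `(tr |X|^p)^{1/p}`. -/
noncomputable def schatten (p : ℝ) (X : Matrix n n ℂ) : ℝ :=
  ((mpow (mAbs X) p).trace.re) ^ (1/p)

/-- `Γ_σ^{1/p}(X) = σ^{1/(2p)} X σ^{1/(2p)}`. -/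
noncomputable def gammaPow (σ : Matrix n n ℂ) (p : ℝ) (X : Matrix n n ℂ) :
    Matrix n n ℂ :=
  mpow σ (1/(2*p)) * X * mpow σ (1/(2*p))

/-- Weighted norm `‖X‖_{p,σ} = ‖Γ_σ^{1/p}(X)‖_p`. -/
noncomputable def wnorm (σ : Matrix n n ℂ) (p : ℝ) (X : Matrix n n ℂ) : ℝ :=
  schatten p (gammaPow σ p X)

/-- The power operator `I_{q,p}(X) = Γ_σ^{-1/q}(|Γ_σ^{1/p}(X)|^{p/q})`. -/
noncomputable def powOp (σ : Matrix n n ℂ) (q p : ℝ) (X : Matrix n n ℂ) :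
    Matrix n n ℂ :=
  mpow σ (-(1/(2*q))) * mpow (mAbs (gammaPow σ p X)) (p/q) * mpow σ (-(1/(2*q)))

/-- Umegaki relative entropy `D(ρ‖σ) = tr(ρ log ρ) - tr(ρ log σ)`. -/
noncomputable def relEnt (ρ σ : Matrix n n ℂ) : ℝ :=
  ((ρ * mlog ρ).trace - (ρ * mlog σ).trace).re

/-- The entropy function `Ent_{p,σ}(X)`. -/
noncomputable def Ent (σ : Matrix n n ℂ) (p : ℝ) (X : Matrix n n ℂ) : ℝ :=
  ((mpow (gammaPow σ p X) p * mlog (mpow (gammaPow σ p X) p)).trace).re -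
    ((mpow (gammaPow σ p X) p * mlog σ).trace).re -
    (wnorm σ p X) ^ p * Real.log ((wnorm σ p X) ^ p)

end

section AuxProofs
variable {n : Type*} [Fintype n] [DecidableEq n]

namespace RevHolderAux

open Finset in
lemma rev_holder_aux {ι : Type*} [Fintype ι] (w f g : ι → ℝ)
    (hw : ∀ i, 0 ≤ w i) (hf : ∀ i, 0 < f i) (hg : ∀ i, 0 < g i)
    {p q : ℝ} (hp0 : 0 < p) (hp1 : p < 1) (hc : 1/p + 1/q = 1) :
    (∑ i, w i * f i ^ p) ^ (1/p) * (∑ i, w i * g i ^ q) ^ (1/q) ≤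
      ∑ i, w i * f i * g i := by
  have hp0' : p ≠ 0 := hp0.ne'
  have h1p : (0:ℝ) < 1 - p := by linarith
  have hinvp : 1 < 1/p := (one_lt_div hp0).mpr (by linarith)
  have hq0 : 1/q = 1 - 1/p := by linarith
  have hqneg : q < 0 := one_div_neg.mp (by linarith)
  have hq0' : q ≠ 0 := hqneg.ne
  have hqval : q * (1 - p) = -p := by
    field_simp at hc
    linear_combination hc
  set S := ∑ i, w i * f i * g i with hS
  set T := ∑ i, w i * f i ^ p with hT
  set R := ∑ i, w i * g i ^ q with hR
  have hSnn : 0 ≤ S := Finset.sum_nonneg fun i _ =>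
    mul_nonneg (mul_nonneg (hw i) (hf i).le) (hg i).le
  have hTnn : 0 ≤ T := Finset.sum_nonneg fun i _ =>
    mul_nonneg (hw i) (Real.rpow_nonneg (hf i).le _)
  have hRnn : 0 ≤ R := Finset.sum_nonneg fun i _ =>
    mul_nonneg (hw i) (Real.rpow_nonneg (hg i).le _)
  rcases eq_or_lt_of_le hRnn with hR0 | hRpos
  · rw [← hR0, Real.zero_rpow (by positivity : (1:ℝ)/q ≠ 0), mul_zero]
    exact hSnn
  have hpq : (1/p).HolderConjugate (1/(1-p)) := by
    constructor
    · simp only [one_div, inv_inv, inv_one]; ring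
    · linarith
    · exact one_div_pos.mpr h1p
  have key : T ≤ S ^ p * R ^ (1 - p) := by
    have e1 : ∀ i : ι, (w i * (f i * g i)) ^ p * (w i * g i ^ q) ^ (1 - p)
        = w i * f i ^ p := by
      intro i
      rw [Real.mul_rpow (hw i) (mul_nonneg (hf i).le (hg i).le),
        Real.mul_rpow (hw i) (Real.rpow_nonneg (hg i).le _),
        Real.mul_rpow (hf i).le (hg i).le,
        ← Real.rpow_mul (hg i).le, hqval,
        show w i ^ p * (f i ^ p * g i ^ p) * (w i ^ (1-p) * g i ^ (-p))
          = (w i ^ p * w i ^ (1-p)) * f i ^ p * (g i ^ p * g i ^ (-p)) from by ring,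
        ← Real.rpow_add_of_nonneg (hw i) hp0.le h1p.le, ← Real.rpow_add (hg i)]
      have e2 : p + (1 - p) = 1 := by ring
      rw [e2, Real.rpow_one, add_neg_cancel, Real.rpow_zero, mul_one]
    have e3 : ∀ i : ι, ((w i * (f i * g i)) ^ p) ^ (1/p) = w i * f i * g i := by
      intro i
      rw [← Real.rpow_mul (mul_nonneg (hw i) (mul_nonneg (hf i).le (hg i).le)),
        mul_one_div_cancel hp0', Real.rpow_one, mul_assoc]
    have e4 : ∀ i : ι, ((w i * g i ^ q) ^ (1 - p)) ^ (1/(1-p)) = w i * g i ^ q := by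
      intro i
      rw [← Real.rpow_mul (mul_nonneg (hw i) (Real.rpow_nonneg (hg i).le _)),
        mul_one_div_cancel h1p.ne', Real.rpow_one]
    have holder := Real.inner_le_Lp_mul_Lq_of_nonneg (s := univ)
      (f := fun i => (w i * (f i * g i)) ^ p)
      (g := fun i => (w i * g i ^ q) ^ (1 - p)) hpq
      (fun i _ => Real.rpow_nonneg (mul_nonneg (hw i) (mul_nonneg (hf i).le (hg i).le)) _)
      (fun i _ => Real.rpow_nonneg (mul_nonneg (hw i) (Real.rpow_nonneg (hg i).le _)) _)
    simp only [e1, e3, e4] at holder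
    rw [one_div_one_div, one_div_one_div] at holder
    exact holder
  -- now conclude
  have step1 : T ^ (1/p) ≤ S * R ^ ((1-p)/p) := by
    have h1 : T ^ (1/p) ≤ (S ^ p * R ^ (1-p)) ^ (1/p) :=
      Real.rpow_le_rpow hTnn key (by positivity)
    have h2 : (S ^ p * R ^ (1-p)) ^ (1/p) = S * R ^ ((1-p)/p) := by
      rw [Real.mul_rpow (Real.rpow_nonneg hSnn _) (Real.rpow_nonneg hRnn _),
        ← Real.rpow_mul hSnn, ← Real.rpow_mul hRnn,
        mul_one_div_cancel hp0', Real.rpow_one, mul_one_div]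
    rwa [h2] at h1
  have step2 : T ^ (1/p) * R ^ (1/q) ≤ S * R ^ ((1-p)/p) * R ^ (1/q) :=
    mul_le_mul_of_nonneg_right step1 (Real.rpow_nonneg hRnn _)
  have step3 : S * R ^ ((1-p)/p) * R ^ (1/q) = S := by
    rw [mul_assoc, ← Real.rpow_add hRpos]
    have : (1-p)/p + 1/q = 0 := by
      rw [hq0]; field_simp; ring
    rw [this, Real.rpow_zero, mul_one]
  rwa [step3] at step2

open Finset in
lemma rev_holder {ι : Type*} [Fintype ι] (w f g : ι → ℝ)
    (hw : ∀ i, 0 ≤ w i) (hf : ∀ i, 0 < f i) (hg : ∀ i, 0 < g i)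
    {p q : ℝ} (hp1 : p < 1) (hp0 : p ≠ 0) (hc : 1/p + 1/q = 1) :
    (∑ i, w i * f i ^ p) ^ (1/p) * (∑ i, w i * g i ^ q) ^ (1/q) ≤
      ∑ i, w i * f i * g i := by
  rcases lt_or_gt_of_ne hp0 with hneg | hpos
  · -- p < 0, so 0 < q < 1
    have hqpos : 0 < 1/q := by
      have : 1/p < 0 := one_div_neg.mpr hneg
      linarith [hc]
    have hq0 : 0 < q := one_div_pos.mp hqpos
    have hq1 : q < 1 := by
      by_contra h
      push_neg at h
      have : 1/q ≤ 1 := by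
        rw [div_le_one hq0]; linarith
      have h2 : 1/p < 0 := one_div_neg.mpr hneg
      linarith
    have := rev_holder_aux w g f hw hg hf (p := q) (q := p) hq0 hq1 (by linarith)
    calc (∑ i, w i * f i ^ p) ^ (1/p) * (∑ i, w i * g i ^ q) ^ (1/q)
        = (∑ i, w i * g i ^ q) ^ (1/q) * (∑ i, w i * f i ^ p) ^ (1/p) := by ring
      _ ≤ ∑ i, w i * g i * f i := this
      _ = ∑ i, w i * f i * g i := by
          apply Finset.sum_congr rfl; intro i _; ring
  · exact rev_holder_aux w f g hw hf hg hpos hp1 hc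


lemma matFun_eq {A : Matrix n n ℂ} (hA : A.IsHermitian) (f : ℝ → ℝ) :
    matFun A f = (hA.eigenvectorUnitary : Matrix n n ℂ) *
      Matrix.diagonal (fun i => (f (hA.eigenvalues i) : ℂ)) *
      star (hA.eigenvectorUnitary : Matrix n n ℂ) := dif_pos hA

lemma star_mul_self_eigenvectorUnitary {A : Matrix n n ℂ} (hA : A.IsHermitian) :
    star (hA.eigenvectorUnitary : Matrix n n ℂ) * (hA.eigenvectorUnitary : Matrix n n ℂ) = 1 :=
  (Matrix.mem_unitaryGroup_iff').mp hA.eigenvectorUnitary.2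

lemma mul_star_self_eigenvectorUnitary {A : Matrix n n ℂ} (hA : A.IsHermitian) :
    (hA.eigenvectorUnitary : Matrix n n ℂ) * star (hA.eigenvectorUnitary : Matrix n n ℂ) = 1 :=
  (Matrix.mem_unitaryGroup_iff).mp hA.eigenvectorUnitary.2

lemma matFun_mul {A : Matrix n n ℂ} (hA : A.IsHermitian) (f g : ℝ → ℝ) :
    matFun A f * matFun A g = matFun A (fun x => f x * g x) := by
  rw [matFun_eq hA f, matFun_eq hA g, matFun_eq hA (fun x => f x * g x)]
  set U := (hA.eigenvectorUnitary : Matrix n n ℂ)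
  set Df := Matrix.diagonal (fun i => (f (hA.eigenvalues i) : ℂ))
  set Dg := Matrix.diagonal (fun i => (g (hA.eigenvalues i) : ℂ))
  have h1 : U * Df * star U * (U * Dg * star U)
      = U * (Df * ((star U * U) * (Dg * star U))) := by noncomm_ring
  rw [h1, star_mul_self_eigenvectorUnitary hA, one_mul]
  have h2 : U * (Df * (Dg * star U)) = U * (Df * Dg) * star U := by noncomm_ring
  rw [h2]
  congr 1
  congr 1
  rw [Matrix.diagonal_mul_diagonal]
  congr 1
  funext i
  push_cast
  ring

lemma matFun_trace {A : Matrix n n ℂ} (hA : A.IsHermitian) (f : ℝ → ℝ) :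
    (matFun A f).trace = ∑ i, (f (hA.eigenvalues i) : ℂ) := by
  rw [matFun_eq hA f, Matrix.trace_mul_cycle,
    star_mul_self_eigenvectorUnitary hA, Matrix.one_mul, Matrix.trace_diagonal]

lemma posDef_mul_mul_conjTranspose {A B : Matrix n n ℂ} (hA : A.PosDef) (hB : IsUnit B) :
    (B * A * Bᴴ).PosDef := by
  rw [Matrix.posDef_iff_dotProduct_mulVec]
  constructor
  · exact Matrix.isHermitian_mul_mul_conjTranspose _ hA.1
  · intro x hx
    have hBH : IsUnit Bᴴ := (Matrix.isUnit_iff_isUnit_det _).mpr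
      (by rw [Matrix.det_conjTranspose]; exact ((Matrix.isUnit_iff_isUnit_det _).mp hB).star)
    have hinj : Function.Injective (Bᴴ.mulVec) := Matrix.mulVec_injective_iff_isUnit.mpr hBH
    have hy : Bᴴ *ᵥ x ≠ 0 := by
      intro h
      apply hx
      apply hinj
      simpa using h
    have h1 : (B * A * Bᴴ) *ᵥ x = B *ᵥ (A *ᵥ (Bᴴ *ᵥ x)) := by
      rw [← Matrix.mulVec_mulVec, ← Matrix.mulVec_mulVec]
    rw [h1, Matrix.dotProduct_mulVec (star x) B,
      show star x ᵥ* B = star (Bᴴ *ᵥ x) from by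
        rw [Matrix.star_mulVec, Matrix.conjTranspose_conjTranspose]]
    exact hA.dotProduct_mulVec_pos hy

lemma matFun_posDef {A : Matrix n n ℂ} (hA : A.IsHermitian) (f : ℝ → ℝ)
    (hf : ∀ i, 0 < f (hA.eigenvalues i)) : (matFun A f).PosDef := by
  rw [matFun_eq hA f]
  have hd : (Matrix.diagonal (fun i => (f (hA.eigenvalues i) : ℂ))).PosDef :=
    Matrix.PosDef.diagonal (fun i => by
      rw [show ((f (hA.eigenvalues i) : ℝ) : ℂ) = Complex.ofReal (f (hA.eigenvalues i)) from rfl]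
      exact_mod_cast hf i)
  have hU : IsUnit (hA.eigenvectorUnitary : Matrix n n ℂ) :=
    ⟨⟨_, star (hA.eigenvectorUnitary : Matrix n n ℂ),
      mul_star_self_eigenvectorUnitary hA, star_mul_self_eigenvectorUnitary hA⟩, rfl⟩
  have := posDef_mul_mul_conjTranspose hd hU
  rwa [← Matrix.star_eq_conjTranspose] at this

lemma mpow_posDef {A : Matrix n n ℂ} (hA : A.PosDef) (r : ℝ) : (mpow A r).PosDef :=
  matFun_posDef hA.1 _ (fun i => Real.rpow_pos_of_pos (hA.eigenvalues_pos i) r)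

lemma matFun_congr {A : Matrix n n ℂ} (hA : A.IsHermitian) {f g : ℝ → ℝ}
    (h : ∀ i, f (hA.eigenvalues i) = g (hA.eigenvalues i)) : matFun A f = matFun A g := by
  rw [matFun_eq hA f, matFun_eq hA g]
  have : (fun i => ((f (hA.eigenvalues i) : ℝ) : ℂ)) = fun i => ((g (hA.eigenvalues i) : ℝ) : ℂ) := by
    funext i; rw [h i]
  rw [this]

lemma matFun_id {A : Matrix n n ℂ} (hA : A.IsHermitian) : matFun A (fun x => x) = A := by
  rw [matFun_eq hA]
  conv_rhs => rw [hA.spectral_theorem]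
  congr 1

lemma mpow_mul_mpow {A : Matrix n n ℂ} (hA : A.PosDef) (r s : ℝ) :
    mpow A r * mpow A s = mpow A (r + s) := by
  rw [mpow, mpow, mpow, matFun_mul hA.1]
  exact matFun_congr hA.1 (fun i => (Real.rpow_add (hA.eigenvalues_pos i) r s).symm)

lemma mpow_one {A : Matrix n n ℂ} (hA : A.PosDef) : mpow A 1 = A := by
  rw [mpow, matFun_congr hA.1 (g := fun x => x) (fun i => Real.rpow_one _), matFun_id hA.1]

lemma mAbs_of_posDef {A : Matrix n n ℂ} (hA : A.PosDef) : mAbs A = A := by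
  have hAA : (Aᴴ * A).PosDef := by
    have e : Aᴴ * A = A * 1 * Aᴴ := by rw [hA.1.eq, Matrix.mul_one]
    rw [e]
    exact posDef_mul_mul_conjTranspose Matrix.PosDef.one hA.isUnit
  have h1 : (mpow (Aᴴ * A) ((1:ℝ)/2)).PosSemidef := (mpow_posDef hAA _).posSemidef
  have h2 : mpow (Aᴴ * A) ((1:ℝ)/2) ^ 2 = A ^ 2 := by
    rw [pow_two, pow_two, mpow_mul_mpow hAA,
      show ((1:ℝ)/2 + 1/2 : ℝ) = 1 from by norm_num, mpow_one hAA, hA.1.eq]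
  open scoped MatrixOrder in exact (CFC.sq_eq_sq_iff _ _ h1.nonneg hA.posSemidef.nonneg).mp h2

lemma schatten_of_posDef {A : Matrix n n ℂ} (hA : A.PosDef) (p : ℝ) :
    schatten p A = (∑ i, hA.1.eigenvalues i ^ p) ^ (1/p) := by
  rw [schatten, mAbs_of_posDef hA, mpow, matFun_trace hA.1]
  congr 1
  push_cast
  rw [Complex.re_sum]
  simp

lemma trace_pair {A B : Matrix n n ℂ} (hA : A.PosDef) (hB : B.PosDef)
    {p q : ℝ} (hp1 : p < 1) (hp0 : p ≠ 0) (hc : 1/p + 1/q = 1) :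
    (∑ i, hA.1.eigenvalues i ^ p) ^ (1/p) * (∑ i, hB.1.eigenvalues i ^ q) ^ (1/q)
      ≤ (A * B).trace.re := by
  set U := (hA.1.eigenvectorUnitary : Matrix n n ℂ) with hU
  set V := (hB.1.eigenvectorUnitary : Matrix n n ℂ) with hV
  set a := hA.1.eigenvalues with ha
  set b := hB.1.eigenvalues with hb
  set Da := Matrix.diagonal (RCLike.ofReal ∘ a : n → ℂ) with hDa
  set Db := Matrix.diagonal (RCLike.ofReal ∘ b : n → ℂ) with hDb
  set W := star U * V with hW
  have hAe : A = U * Da * star U := by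
    rw [hU, hDa, ha]; exact hA.1.spectral_theorem
  have hBe : B = V * Db * star V := by
    rw [hV, hDb, hb]; exact hB.1.spectral_theorem
  -- step 1 : trace identity
  have key : (A * B).trace = (Da * W * Db * star W).trace := by
    have e2 : Da * W * Db * star W = (Da * star U * (V * (Db * star V))) * U := by
      rw [hW, Matrix.star_mul, star_star]
      simp only [Matrix.mul_assoc]
    rw [hAe, hBe, e2]
    conv_rhs => rw [Matrix.trace_mul_comm]
    congr 1
    simp only [Matrix.mul_assoc]
  -- step 2 : entrywise
  have key2 : (Da * W * Db * star W).trace.re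
      = ∑ i, ∑ j, a i * b j * Complex.normSq (W i j) := by
    have he : ∀ i, (Da * W * Db * star W) i i
        = ∑ j, ((a i * b j * Complex.normSq (W i j) : ℝ) : ℂ) := by
      intro i
      rw [Matrix.mul_apply]
      apply Finset.sum_congr rfl
      intro j _
      rw [Matrix.star_eq_conjTranspose, Matrix.conjTranspose_apply,
        Matrix.mul_diagonal, Matrix.diagonal_mul]
      rw [show ((RCLike.ofReal ∘ a) i : ℂ) = ((a i : ℝ) : ℂ) from rfl,
        show ((RCLike.ofReal ∘ b) j : ℂ) = ((b j : ℝ) : ℂ) from rfl,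
        Complex.star_def]
      have e : ((a i : ℝ) : ℂ) * W i j * ((b j : ℝ) : ℂ) * (starRingEnd ℂ) (W i j)
          = ((a i : ℝ) : ℂ) * ((b j : ℝ) : ℂ) * (W i j * (starRingEnd ℂ) (W i j)) := by ring
      rw [e, Complex.mul_conj]
      push_cast
      ring
    rw [Matrix.trace]
    simp only [Matrix.diag_apply, he]
    rw [Complex.re_sum]
    apply Finset.sum_congr rfl
    intro i _
    rw [Complex.re_sum]
    apply Finset.sum_congr rfl
    intro j _
    rw [Complex.ofReal_re]
  -- step 3 : doubly stochastic
  have hWW : W * star W = 1 := by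
    rw [hW, Matrix.star_mul, star_star,
      show (star U * V) * (star V * U) = star U * (V * star V * U) from by
        simp only [Matrix.mul_assoc],
      mul_star_self_eigenvectorUnitary hB.1, Matrix.one_mul,
      star_mul_self_eigenvectorUnitary hA.1]
  have hsWW : star W * W = 1 := by
    rw [hW, Matrix.star_mul, star_star,
      show (star V * U) * (star U * V) = star V * (U * star U * V) from by
        simp only [Matrix.mul_assoc],
      mul_star_self_eigenvectorUnitary hA.1, Matrix.one_mul,
      star_mul_self_eigenvectorUnitary hB.1]
  have hrow : ∀ i, ∑ j, Complex.normSq (W i j) = 1 := by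
    intro i
    have h : (W * star W) i i = (1 : Matrix n n ℂ) i i := by rw [hWW]
    rw [Matrix.mul_apply, Matrix.one_apply_eq] at h
    have h2 : ∀ j, W i j * (star W) j i = ((Complex.normSq (W i j) : ℝ) : ℂ) := fun j => by
      rw [Matrix.star_eq_conjTranspose, Matrix.conjTranspose_apply]
      rw [Complex.star_def, Complex.mul_conj]
    rw [Finset.sum_congr rfl (fun j _ => h2 j)] at h
    exact_mod_cast h
  have hcol : ∀ j, ∑ i, Complex.normSq (W i j) = 1 := by
    intro j
    have h : (star W * W) j j = (1 : Matrix n n ℂ) j j := by rw [hsWW]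
    rw [Matrix.mul_apply, Matrix.one_apply_eq] at h
    have h2 : ∀ i, (star W) j i * W i j = ((Complex.normSq (W i j) : ℝ) : ℂ) := fun i => by
      rw [Matrix.star_eq_conjTranspose, Matrix.conjTranspose_apply]
      rw [Complex.star_def, mul_comm, Complex.mul_conj]
    rw [Finset.sum_congr rfl (fun i _ => h2 i)] at h
    exact_mod_cast h
  -- step 4 : scalar reverse Hölder
  have main := rev_holder (ι := n × n) (fun ij => Complex.normSq (W ij.1 ij.2))
    (fun ij => a ij.1) (fun ij => b ij.2) (fun ij => Complex.normSq_nonneg _)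
    (fun ij => hA.eigenvalues_pos ij.1) (fun ij => hB.eigenvalues_pos ij.2) hp1 hp0 hc
  have s1 : ∑ ij : n × n, Complex.normSq (W ij.1 ij.2) * a ij.1 ^ p = ∑ i, a i ^ p := by
    rw [Fintype.sum_prod_type]
    apply Finset.sum_congr rfl
    intro i _
    show (∑ j, Complex.normSq (W i j) * a i ^ p) = a i ^ p
    rw [← Finset.sum_mul, hrow i, one_mul]
  have s2 : ∑ ij : n × n, Complex.normSq (W ij.1 ij.2) * b ij.2 ^ q = ∑ j, b j ^ q := by
    rw [Fintype.sum_prod_type, Finset.sum_comm]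
    apply Finset.sum_congr rfl
    intro j _
    show (∑ i, Complex.normSq (W i j) * b j ^ q) = b j ^ q
    rw [← Finset.sum_mul, hcol j, one_mul]
  have s3 : ∑ ij : n × n, Complex.normSq (W ij.1 ij.2) * a ij.1 * b ij.2
      = ∑ i, ∑ j, a i * b j * Complex.normSq (W i j) := by
    rw [Fintype.sum_prod_type]
    apply Finset.sum_congr rfl
    intro i _
    apply Finset.sum_congr rfl
    intro j _
    show Complex.normSq (W i j) * a i * b j = a i * b j * Complex.normSq (W i j)
    ring
  rw [s1, s2, s3] at main
  rw [key, key2]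
  exact main

end RevHolderAux

end AuxProofs
/-- Weighted reverse Hölder inequality: for a positive definite density matrix `σ`,
positive definite `X, Y` and `p < 1` with Hölder conjugate `p̂`,
`⟨X,Y⟩_σ = tr(σ^{1/2} X σ^{1/2} Y) ≥ ‖X‖_{p,σ} ‖Y‖_{p̂,σ}`. -/
theorem reverse_holder_weighted {n : Type*} [Fintype n] [DecidableEq n]
    (σ : Matrix n n ℂ) (hσ : σ.PosDef) (hσ1 : σ.trace = 1)
    (X Y : Matrix n n ℂ) (hX : X.PosDef) (hY : Y.PosDef)
    (p phat : ℝ) (hp : p < 1) (hp0 : p ≠ 0) (hconj : 1/p + 1/phat = 1) :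
    wnorm σ p X * wnorm σ phat Y ≤
      ((mpow σ (1/2) * X * mpow σ (1/2) * Y).trace).re := by

  open RevHolderAux in
  have hphat0 : phat ≠ 0 := by
    intro h
    rw [h, div_zero, add_zero, div_eq_one_iff_eq hp0] at hconj
    exact absurd hconj (by linarith)
  have hS1 : (mpow σ (1/(2*p))).PosDef := RevHolderAux.mpow_posDef hσ _
  have hS2 : (mpow σ (1/(2*phat))).PosDef := RevHolderAux.mpow_posDef hσ _
  have hG1 : (gammaPow σ p X).PosDef := by
    rw [gammaPow]
    nth_rewrite 2 [← hS1.1.eq]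
    exact RevHolderAux.posDef_mul_mul_conjTranspose hX hS1.isUnit
  have hG2 : (gammaPow σ phat Y).PosDef := by
    rw [gammaPow]
    nth_rewrite 2 [← hS2.1.eq]
    exact RevHolderAux.posDef_mul_mul_conjTranspose hY hS2.isUnit
  have hsum : 1/(2*p) + 1/(2*phat) = 1/2 := by
    field_simp at hconj ⊢
    linarith
  have hsum2 : 1/(2*phat) + 1/(2*p) = 1/2 := by linarith
  have e : mpow σ ((1:ℝ)/2) = mpow σ (1/(2*p)) * mpow σ (1/(2*phat)) := by
    rw [RevHolderAux.mpow_mul_mpow hσ, hsum]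
  have e' : mpow σ ((1:ℝ)/2) = mpow σ (1/(2*phat)) * mpow σ (1/(2*p)) := by
    rw [RevHolderAux.mpow_mul_mpow hσ, hsum2]
  have big : mpow σ ((1:ℝ)/2) * X * mpow σ ((1:ℝ)/2) * Y
      = mpow σ (1/(2*phat)) * ((gammaPow σ p X) * (mpow σ (1/(2*phat)) * Y)) := by
    nth_rewrite 1 [e']
    nth_rewrite 1 [e]
    simp only [gammaPow, Matrix.mul_assoc]
  have htr : (mpow σ ((1:ℝ)/2) * X * mpow σ ((1:ℝ)/2) * Y).trace
      = (gammaPow σ p X * gammaPow σ phat Y).trace := by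
    rw [big, Matrix.trace_mul_comm]
    simp only [gammaPow, Matrix.mul_assoc]
  have main := RevHolderAux.trace_pair hG1 hG2 hp hp0 hconj
  show schatten p (gammaPow σ p X) * schatten phat (gammaPow σ phat Y) ≤ _
  rw [RevHolderAux.schatten_of_posDef hG1, RevHolderAux.schatten_of_posDef hG2, htr]
  exact main
end

section
/- The power operators satisfy the composition rule I_{q,r} ∘ I_{r,p} = I_{q,p} on positive definite matrices, and I_{p,p}(X) = X for positive semi-definite X. -/
open Matrix BigOperators
open scoped ComplexOrder

section Helpers

variable {m : Type*} [Fintype m] [DecidableEq m]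

lemma contOn_finite {s : Set ℝ} (hs : s.Finite) (f : ℝ → ℝ) : ContinuousOn f s := by
  have := hs.to_subtype
  rw [continuousOn_iff_continuous_restrict]
  exact continuous_of_discreteTopology

lemma contOn_spec (A : Matrix m m ℂ) (f : ℝ → ℝ) : ContinuousOn f (spectrum ℝ A) :=
  contOn_finite (Matrix.finite_real_spectrum (A := A)) f

lemma contOn_spec_img (A : Matrix m m ℂ) (f g : ℝ → ℝ) :
    ContinuousOn g (f '' spectrum ℝ A) :=
  contOn_finite ((Matrix.finite_real_spectrum (A := A)).image f) g

lemma matFun_eq_cfc {A : Matrix m m ℂ} (hA : A.IsHermitian) (f : ℝ → ℝ) :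
    matFun A f = cfc f A := by
  rw [matFun, dif_pos hA, hA.cfc_eq]
  rfl

lemma cfc_isHermitian (A : Matrix m m ℂ) (f : ℝ → ℝ) : (cfc f A).IsHermitian :=
  cfc_predicate f A

lemma spec_pos {A : Matrix m m ℂ} (hA : A.PosDef) : ∀ x ∈ spectrum ℝ A, 0 < x := by
  rw [hA.1.spectrum_real_eq_range_eigenvalues]
  rintro x ⟨i, rfl⟩
  exact hA.eigenvalues_pos i

lemma spec_nonneg {A : Matrix m m ℂ} (hA : A.PosSemidef) : ∀ x ∈ spectrum ℝ A, 0 ≤ x := by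
  rw [hA.1.spectrum_real_eq_range_eigenvalues]
  rintro x ⟨i, rfl⟩
  exact hA.eigenvalues_nonneg i

set_option maxHeartbeats 1000000 in
lemma posDef_conj {A : Matrix m m ℂ} (hA : A.PosDef) {B : Matrix m m ℂ} (hB : IsUnit B) :
    (B * A * Bᴴ).PosDef := by
  refine Matrix.PosDef.of_dotProduct_mulVec_pos (Matrix.isHermitian_mul_mul_conjTranspose B hA.1) fun x hx => ?_
  have hBH : IsUnit Bᴴ := hB.star
  have hxB : Bᴴ *ᵥ x ≠ 0 :=
    ((Matrix.mulVec_injective_iff_isUnit.mpr hBH).ne_iff' (by simp)).2 hx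
  simpa only [star_mulVec, dotProduct_mulVec, vecMul_vecMul,
    conjTranspose_conjTranspose] using hA.dotProduct_mulVec_pos hxB

lemma cfc_posDef {A : Matrix m m ℂ} (hA : A.PosDef) (f : ℝ → ℝ)
    (hf : ∀ x ∈ spectrum ℝ A, 0 < f x) : (cfc f A).PosDef := by
  rw [hA.1.cfc_eq, Matrix.IsHermitian.cfc]
  have hd : (Matrix.diagonal (RCLike.ofReal ∘ f ∘ hA.1.eigenvalues) : Matrix m m ℂ).PosDef := by
    rw [Matrix.posDef_diagonal_iff]
    intro i
    have := hf _ (hA.1.eigenvalues_mem_spectrum_real i)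
    simp only [Function.comp_apply]
    exact Complex.zero_lt_real.mpr this
  have hU : IsUnit (hA.1.eigenvectorUnitary : Matrix m m ℂ) :=
    ⟨Unitary.toUnits hA.1.eigenvectorUnitary, rfl⟩
  simpa only [Unitary.conjStarAlgAut_apply, Matrix.star_eq_conjTranspose] using posDef_conj hd hU

lemma mpow_eq_cfc {A : Matrix m m ℂ} (hA : A.IsHermitian) (r : ℝ) :
    mpow A r = cfc (fun x : ℝ => x ^ r) A := matFun_eq_cfc hA _

lemma mpow_isHermitian {A : Matrix m m ℂ} (hA : A.IsHermitian) (r : ℝ) :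
    (mpow A r).IsHermitian := by
  rw [mpow_eq_cfc hA]
  exact cfc_isHermitian A _

lemma mpow_posDef {A : Matrix m m ℂ} (hA : A.PosDef) (r : ℝ) : (mpow A r).PosDef := by
  rw [mpow_eq_cfc hA.1]
  exact cfc_posDef hA _ (fun x hx => Real.rpow_pos_of_pos (spec_pos hA x hx) r)

lemma mpow_zero' {A : Matrix m m ℂ} (hA : A.IsHermitian) : mpow A 0 = 1 := by
  rw [mpow_eq_cfc hA]
  have : (fun x : ℝ => x ^ (0:ℝ)) = fun _ : ℝ => (1:ℝ) := by
    funext x; exact Real.rpow_zero x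
  rw [this]
  exact cfc_const_one ℝ A hA

lemma mpow_one' {A : Matrix m m ℂ} (hA : A.IsHermitian) : mpow A 1 = A := by
  rw [mpow_eq_cfc hA]
  have : (fun x : ℝ => x ^ (1:ℝ)) = fun x : ℝ => x := by
    funext x; exact Real.rpow_one x
  rw [this]
  exact cfc_id' ℝ A hA

lemma mpow_mul_mpow {A : Matrix m m ℂ} (hA : A.PosDef) (a b : ℝ) :
    mpow A a * mpow A b = mpow A (a + b) := by
  rw [mpow_eq_cfc hA.1 a, mpow_eq_cfc hA.1 b, mpow_eq_cfc hA.1 (a+b),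
    ← cfc_mul _ _ A (contOn_spec A _) (contOn_spec A _)]
  apply cfc_congr
  intro x hx
  exact (Real.rpow_add (spec_pos hA x hx) a b).symm

lemma mpow_cancel {A : Matrix m m ℂ} (hA : A.PosDef) (a : ℝ) :
    mpow A a * mpow A (-a) = 1 := by
  rw [mpow_mul_mpow hA, add_neg_cancel, mpow_zero' hA.1]

lemma mpow_cancel' {A : Matrix m m ℂ} (hA : A.PosDef) (a : ℝ) :
    mpow A (-a) * mpow A a = 1 := by
  rw [mpow_mul_mpow hA, neg_add_cancel, mpow_zero' hA.1]

lemma mpow_mpow {A : Matrix m m ℂ} (hA : A.PosDef) (a b : ℝ) :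
    mpow (mpow A a) b = mpow A (a * b) := by
  have hherm : (mpow A a).IsHermitian := mpow_isHermitian hA.1 a
  have hcomp := cfc_comp (fun x : ℝ => x ^ b) (fun x : ℝ => x ^ a) A hA.1
      (contOn_spec_img A _ _) (contOn_spec A _)
  rw [mpow_eq_cfc hherm b, mpow_eq_cfc hA.1 a, ← hcomp, mpow_eq_cfc hA.1 (a*b)]
  apply cfc_congr
  intro x hx
  simp only [Function.comp_apply]
  exact (Real.rpow_mul (spec_pos hA x hx).le a b).symm

lemma mAbs_psd {Y : Matrix m m ℂ} (hY : Y.PosSemidef) : mAbs Y = Y := by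
  have hherm : Y.IsHermitian := hY.1
  have hYY : Y * Y = cfc (fun x : ℝ => x * x) Y := by
    have hmul := cfc_mul (fun x : ℝ => x) (fun x : ℝ => x) Y (contOn_spec Y _) (contOn_spec Y _)
    have hid := cfc_id' ℝ Y hherm
    rw [hid] at hmul
    exact hmul.symm
  have hherm2 : (Y * Y).IsHermitian := hYY ▸ cfc_isHermitian Y _
  have hcomp := cfc_comp (fun x : ℝ => x ^ (1/2 : ℝ)) (fun x : ℝ => x * x) Y hherm
      (contOn_spec_img Y _ _) (contOn_spec Y _)
  rw [mAbs, hherm.eq, mpow_eq_cfc hherm2, hYY, ← hcomp]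
  calc cfc ((fun x : ℝ => x ^ (1/2 : ℝ)) ∘ fun x : ℝ => x * x) Y
      = cfc (fun x : ℝ => x) Y := by
        apply cfc_congr
        intro x hx
        have h0 : 0 ≤ x := spec_nonneg hY x hx
        simp only [Function.comp_apply]
        have h2 : x * x = x ^ ((2:ℕ) : ℝ) := by
          rw [Real.rpow_natCast]; ring
        rw [h2, ← Real.rpow_mul h0]
        norm_num
    _ = Y := cfc_id' ℝ Y hherm

end Helpers

/-- Composition rule for power operators: `I_{q,r} ∘ I_{r,p} = I_{q,p}` on positive
definite matrices, and `I_{p,p}(X) = X` for positive semi-definite `X`. -/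
theorem powOp_comp {m : Type*} [Fintype m] [DecidableEq m]
    (σ : Matrix m m ℂ) (hσ : σ.PosDef) (hσ1 : σ.trace = 1)
    (p q r : ℝ) (hp : p ≠ 0) (hq : q ≠ 0) (hr : r ≠ 0) :
    (∀ X : Matrix m m ℂ, X.PosDef → powOp σ q r (powOp σ r p X) = powOp σ q p X) ∧
    (∀ X : Matrix m m ℂ, X.PosSemidef → powOp σ p p X = X) := by
  have hs : ∀ e : ℝ, (mpow σ e).PosDef := fun e => mpow_posDef hσ e
  constructor
  · intro X hX
    have hsH : (mpow σ (1/(2*p))).IsHermitian := (hs _).1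
    have hY : (gammaPow σ p X).PosDef := by
      rw [gammaPow]
      have := posDef_conj hX (hs (1/(2*p))).isUnit
      rwa [hsH] at this
    set Y := gammaPow σ p X with hYdef
    have hW : (mpow Y (p/r)).PosDef := mpow_posDef hY _
    have habs : mAbs Y = Y := mAbs_psd hY.posSemidef
    have h1 : powOp σ r p X = mpow σ (-(1/(2*r))) * mpow Y (p/r) * mpow σ (-(1/(2*r))) := by
      rw [powOp, ← hYdef, habs]
    have h2 : gammaPow σ r (powOp σ r p X) = mpow Y (p/r) := by
      rw [h1, gammaPow]
      have hassoc :
          mpow σ (1/(2*r)) * (mpow σ (-(1/(2*r))) * mpow Y (p/r) * mpow σ (-(1/(2*r)))) *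
            mpow σ (1/(2*r)) =
          (mpow σ (1/(2*r)) * mpow σ (-(1/(2*r)))) * mpow Y (p/r) *
            (mpow σ (-(1/(2*r))) * mpow σ (1/(2*r))) := by
        simp only [mul_assoc]
      rw [hassoc, mpow_cancel hσ, mpow_cancel' hσ, one_mul, mul_one]
    have habsW : mAbs (mpow Y (p/r)) = mpow Y (p/r) := mAbs_psd hW.posSemidef
    have hexp : p/r * (r/q) = p/q := by field_simp
    rw [powOp, h2, habsW, mpow_mpow hY, hexp, powOp, ← hYdef, habs]
  · intro X hX
    have hsH : (mpow σ (1/(2*p))).IsHermitian := (hs _).1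
    have hY : (gammaPow σ p X).PosSemidef := by
      rw [gammaPow]
      have := hX.mul_mul_conjTranspose_same (mpow σ (1/(2*p)))
      rwa [hsH] at this
    rw [powOp, mAbs_psd hY, div_self hp, mpow_one' hY.1, gammaPow]
    have hassoc :
        mpow σ (-(1/(2*p))) * (mpow σ (1/(2*p)) * X * mpow σ (1/(2*p))) * mpow σ (-(1/(2*p))) =
        (mpow σ (-(1/(2*p))) * mpow σ (1/(2*p))) * X *
          (mpow σ (1/(2*p)) * mpow σ (-(1/(2*p)))) := by
      simp only [mul_assoc]
    rw [hassoc, mpow_cancel hσ, mpow_cancel' hσ, one_mul, mul_one]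
end

section
/- For every positive definite matrix X and every nonzero real p, the entropy function Ent_{p,σ}(X) is non-negative. -/
open Matrix BigOperators
open scoped ComplexOrder

section EntAux

variable {n : Type*} [Fintype n] [DecidableEq n]

private lemma entP_matFun_eq {A : Matrix n n ℂ} (hA : A.IsHermitian) (f : ℝ → ℝ) :
    matFun A f = (hA.eigenvectorUnitary : Matrix n n ℂ) *
      Matrix.diagonal (fun i => (f (hA.eigenvalues i) : ℂ)) *
      star (hA.eigenvectorUnitary : Matrix n n ℂ) := dif_pos hA

private lemma entP_matFun_id {A : Matrix n n ℂ} (hA : A.IsHermitian) :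
    matFun A (fun x => x) = A := by
  rw [entP_matFun_eq hA]
  conv_rhs => rw [hA.spectral_theorem]
  rfl

private lemma entP_posDef_conj {A : Matrix n n ℂ} (hA : A.PosDef) {B : Matrix n n ℂ}
    (hB : IsUnit B) : (Bᴴ * A * B).PosDef := by
  exact hA.conjTranspose_mul_mul_same (Matrix.mulVec_injective_iff_isUnit.mpr hB)

private lemma entP_matFun_posDef {A : Matrix n n ℂ} (hA : A.IsHermitian) {f : ℝ → ℝ}
    (hf : ∀ i, 0 < f (hA.eigenvalues i)) : (matFun A f).PosDef := by
  rw [entP_matFun_eq hA]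
  have hD : (Matrix.diagonal (fun i => (f (hA.eigenvalues i) : ℂ))).PosDef :=
    Matrix.posDef_diagonal_iff.mpr fun i => by exact_mod_cast hf i
  have hm := hA.eigenvectorUnitary.2
  rw [Unitary.mem_iff] at hm
  have hU : IsUnit (star (hA.eigenvectorUnitary : Matrix n n ℂ)) := ⟨⟨_, _, hm.1, hm.2⟩, rfl⟩
  have h := entP_posDef_conj hD hU
  simpa only [Matrix.star_eq_conjTranspose, Matrix.conjTranspose_conjTranspose] using h

private lemma entP_trace_eq_sum {A : Matrix n n ℂ} (hA : A.IsHermitian) :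
    A.trace = ∑ i, (hA.eigenvalues i : ℂ) := by
  conv_lhs => rw [hA.spectral_theorem]
  rw [Unitary.conjStarAlgAut_apply, Matrix.trace_mul_comm, ← Matrix.mul_assoc,
    Matrix.UnitaryGroup.star_mul_self hA.eigenvectorUnitary, one_mul, Matrix.trace_diagonal]
  rfl

private lemma entP_trace_dndn (a b : n → ℂ) (N : Matrix n n ℂ) :
    (Matrix.diagonal a * N * Matrix.diagonal b * Nᴴ).trace
      = ∑ i, ∑ j, a i * b j * (N i j * star (N i j)) := by
  have h1 : (Matrix.diagonal a * N * Matrix.diagonal b * Nᴴ).trace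
      = ∑ i, ∑ j, (Matrix.diagonal a * N * Matrix.diagonal b) i j * Nᴴ j i := by
    simp [Matrix.trace, Matrix.diag, Matrix.mul_apply]
  rw [h1]
  refine Finset.sum_congr rfl fun i _ => Finset.sum_congr rfl fun j _ => ?_
  simp only [Matrix.mul_diagonal, Matrix.diagonal_mul, Matrix.conjTranspose_apply]
  ring

private lemma entP_trace_matFun_mul {A B : Matrix n n ℂ} (hA : A.IsHermitian)
    (hB : B.IsHermitian) (f g : ℝ → ℝ) :
    (matFun A f * matFun B g).trace.re =
      ∑ i, ∑ j, f (hA.eigenvalues i) * g (hB.eigenvalues j) *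
        Complex.normSq ((star (hA.eigenvectorUnitary : Matrix n n ℂ) *
          (hB.eigenvectorUnitary : Matrix n n ℂ)) i j) := by
  set U := (hA.eigenvectorUnitary : Matrix n n ℂ) with hU
  set V := (hB.eigenvectorUnitary : Matrix n n ℂ) with hV
  set Da := Matrix.diagonal (fun i => (f (hA.eigenvalues i) : ℂ)) with hDa
  set Db := Matrix.diagonal (fun j => (g (hB.eigenvalues j) : ℂ)) with hDb
  set N := star U * V with hN
  have hNH : Nᴴ = star V * U := by
    rw [hN]
    simp [Matrix.star_eq_conjTranspose, Matrix.conjTranspose_mul]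
  rw [entP_matFun_eq hA f, entP_matFun_eq hB g]
  rw [show U * Da * star U * (V * Db * star V) = U * (Da * star U * V * Db * star V) from by
    simp only [Matrix.mul_assoc]]
  rw [Matrix.trace_mul_comm]
  rw [show Da * star U * V * Db * star V * U = Da * N * Db * Nᴴ from by
    rw [hNH, hN]; simp only [Matrix.mul_assoc]]
  rw [hDa, hDb, entP_trace_dndn]
  have key : ∀ i j, ((f (hA.eigenvalues i) : ℂ) * (g (hB.eigenvalues j) : ℂ) *
      (N i j * star (N i j)))
      = ((f (hA.eigenvalues i) * g (hB.eigenvalues j) * Complex.normSq (N i j) : ℝ) : ℂ) := by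
    intro i j
    rw [Complex.star_def, Complex.mul_conj]
    push_cast
    ring
  simp only [key, ← Complex.ofReal_sum, Complex.ofReal_re]

private lemma entP_row_sum {N : Matrix n n ℂ} (hN : N ∈ Matrix.unitaryGroup n ℂ) (i : n) :
    ∑ j, Complex.normSq (N i j) = 1 := by
  have h : N * star N = 1 := Matrix.mem_unitaryGroup_iff.mp hN
  have h2 : (N * star N) i i = (1 : Matrix n n ℂ) i i := by rw [h]
  simp only [Matrix.mul_apply, Matrix.one_apply_eq, Matrix.star_eq_conjTranspose,
    Matrix.conjTranspose_apply, Complex.star_def, Complex.mul_conj] at h2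
  exact_mod_cast h2

private lemma entP_col_sum {N : Matrix n n ℂ} (hN : N ∈ Matrix.unitaryGroup n ℂ) (j : n) :
    ∑ i, Complex.normSq (N i j) = 1 := by
  have h : star N * N = 1 := Matrix.mem_unitaryGroup_iff'.mp hN
  have h2 : (star N * N) j j = (1 : Matrix n n ℂ) j j := by rw [h]
  simp only [Matrix.mul_apply, Matrix.one_apply_eq, Matrix.star_eq_conjTranspose,
    Matrix.conjTranspose_apply, Complex.star_def] at h2
  have h3 : ∑ i, ((Complex.normSq (N i j) : ℂ)) = 1 := by
    rw [← h2]
    refine Finset.sum_congr rfl fun i _ => ?_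
    rw [mul_comm, Complex.mul_conj]
  exact_mod_cast h3

private lemma entP_scalar {ν μ T : ℝ} (hν : 0 < ν) (hμ : 0 < μ) (hT : 0 < T) :
    ν - T * μ ≤ ν * Real.log ν - ν * Real.log μ - ν * Real.log T := by
  have h := Real.log_le_sub_one_of_pos (x := T * μ / ν) (by positivity)
  have h2 : Real.log (T * μ / ν) = Real.log T + Real.log μ - Real.log ν := by
    rw [Real.log_div (by positivity) hν.ne', Real.log_mul hT.ne' hμ.ne']
  rw [h2] at h
  have h3 := mul_le_mul_of_nonneg_left h hν.le
  have h4 : ν * (T * μ / ν - 1) = T * μ - ν := by field_simp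
  nlinarith [h3, h4]

private lemma entP_mAbs_posDef {A : Matrix n n ℂ} (hA : A.PosDef) : mAbs A = A := by
  have hS : (Aᴴ * A).PosSemidef := Matrix.posSemidef_conjTranspose_mul_self A
  have hsq : Aᴴ * A = A ^ 2 := by rw [pow_two, hA.1.eq]
  have h1 : mAbs A = cfc (fun x : ℝ => x ^ ((1:ℝ)/2)) (Aᴴ * A) := by
    rw [mAbs, mpow, entP_matFun_eq hS.1, hS.1.cfc_eq, Matrix.IsHermitian.cfc,
      Unitary.conjStarAlgAut_apply]
    rfl
  have hAsa : IsSelfAdjoint A := hA.1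
  rw [h1, hsq, ← cfc_comp_pow (ha := hAsa) (hf := (Real.continuous_rpow_const (by norm_num)).continuousOn)]
  conv_rhs => rw [← cfc_id' ℝ A]
  apply cfc_congr
  intro x hx
  obtain ⟨i, rfl⟩ := hA.1.spectrum_real_eq_range_eigenvalues ▸ hx
  have hx0 := (hA.eigenvalues_pos i).le
  simp only [id]
  rw [← Real.sqrt_eq_rpow, Real.sqrt_sq hx0]

private lemma entP_klein {ρ σ : Matrix n n ℂ} (hρ : ρ.PosDef) (hσ : σ.PosDef)
    (hσ1 : σ.trace = 1) :
    ρ.trace.re * Real.log (ρ.trace.re) ≤ ((ρ * mlog ρ).trace).re - ((ρ * mlog σ).trace).re := by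
  rcases isEmpty_or_nonempty n with hn | hn
  · exfalso
    rw [Matrix.trace] at hσ1
    simp at hσ1
  set ν := hρ.1.eigenvalues with hνdef
  set μ := hσ.1.eigenvalues with hμdef
  have hν : ∀ i, 0 < ν i := fun i => hρ.eigenvalues_pos i
  have hμ : ∀ j, 0 < μ j := fun j => hσ.eigenvalues_pos j
  set N := star (hρ.1.eigenvectorUnitary : Matrix n n ℂ) *
    (hσ.1.eigenvectorUnitary : Matrix n n ℂ) with hNdef
  have hNu : N ∈ Matrix.unitaryGroup n ℂ := by
    rw [hNdef]
    exact mul_mem (Unitary.star_mem (hρ.1.eigenvectorUnitary).2) (hσ.1.eigenvectorUnitary).2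
  set P : n → n → ℝ := fun i j => Complex.normSq (N i j) with hPdef
  have hProw : ∀ i, ∑ j, P i j = 1 := fun i => entP_row_sum hNu i
  have hPcol : ∀ j, ∑ i, P i j = 1 := fun j => entP_col_sum hNu j
  have hPpos : ∀ i j, 0 ≤ P i j := fun i j => Complex.normSq_nonneg _
  set T := ρ.trace.re with hTdef
  have hTsum : T = ∑ i, ν i := by
    rw [hTdef, entP_trace_eq_sum hρ.1, ← Complex.ofReal_sum, Complex.ofReal_re]
  have hTpos : 0 < T := by
    rw [hTsum]
    exact Finset.sum_pos (fun i _ => hν i) Finset.univ_nonempty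
  have hμ1 : ∑ j, μ j = 1 := by
    have := entP_trace_eq_sum hσ.1
    rw [hσ1, ← Complex.ofReal_sum] at this
    exact_mod_cast this.symm
  -- the two trace terms
  have h1 : ((ρ * mlog ρ).trace).re = ∑ i, ν i * Real.log (ν i) := by
    have hmul : ρ * mlog ρ = matFun ρ (fun x => x) * matFun ρ Real.log := by
      rw [entP_matFun_id hρ.1, mlog]
    rw [hmul, entP_trace_matFun_mul hρ.1 hρ.1]
    have hone : star (hρ.1.eigenvectorUnitary : Matrix n n ℂ) *
        (hρ.1.eigenvectorUnitary : Matrix n n ℂ) = 1 :=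
      Matrix.UnitaryGroup.star_mul_self hρ.1.eigenvectorUnitary
    rw [hone]
    refine Finset.sum_congr rfl fun i _ => ?_
    rw [Finset.sum_eq_single i]
    · simp [Matrix.one_apply_eq]
      rfl
    · intro j _ hj
      simp [Matrix.one_apply_ne (Ne.symm hj)]
    · intro h
      exact absurd (Finset.mem_univ i) h
  have h2 : ((ρ * mlog σ).trace).re = ∑ i, ∑ j, ν i * Real.log (μ j) * P i j := by
    have hmul : ρ * mlog σ = matFun ρ (fun x => x) * matFun σ Real.log := by
      rw [entP_matFun_id hρ.1, mlog]
    rw [hmul, entP_trace_matFun_mul hρ.1 hσ.1]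
  -- pointwise Klein inequality
  have key : ∀ i j, P i j * (ν i - T * μ j) ≤
      P i j * (ν i * Real.log (ν i) - ν i * Real.log (μ j) - ν i * Real.log T) :=
    fun i j => mul_le_mul_of_nonneg_left (entP_scalar (hν i) (hμ j) hTpos) (hPpos i j)
  have hsum : ∑ i, ∑ j, P i j * (ν i - T * μ j) ≤
      ∑ i, ∑ j, P i j * (ν i * Real.log (ν i) - ν i * Real.log (μ j) - ν i * Real.log T) :=
    Finset.sum_le_sum fun i _ => Finset.sum_le_sum fun j _ => key i j
  -- evaluate the sums
  have e1 : ∑ i, ∑ j, P i j * ν i = T := by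
    rw [hTsum]
    refine Finset.sum_congr rfl fun i _ => ?_
    rw [← Finset.sum_mul, hProw i, one_mul]
  have e2 : ∑ i, ∑ j, P i j * (T * μ j) = T := by
    rw [Finset.sum_comm]
    have step : ∀ j, ∑ i, P i j * (T * μ j) = T * μ j := fun j => by
      rw [← Finset.sum_mul, hPcol j, one_mul]
    rw [Finset.sum_congr rfl fun j _ => step j, ← Finset.mul_sum, hμ1, mul_one]
  have e3 : ∑ i, ∑ j, P i j * (ν i * Real.log (ν i)) = ∑ i, ν i * Real.log (ν i) := by
    refine Finset.sum_congr rfl fun i _ => ?_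
    rw [← Finset.sum_mul, hProw i, one_mul]
  have e4 : ∑ i, ∑ j, P i j * (ν i * Real.log T) = T * Real.log T := by
    have step : ∀ i, ∑ j, P i j * (ν i * Real.log T) = ν i * Real.log T := fun i => by
      rw [← Finset.sum_mul, hProw i, one_mul]
    rw [Finset.sum_congr rfl fun i _ => step i, ← Finset.sum_mul, ← hTsum]
  have e5 : ∑ i, ∑ j, P i j * (ν i * Real.log (μ j)) = ∑ i, ∑ j, ν i * Real.log (μ j) * P i j :=
    Finset.sum_congr rfl fun i _ => Finset.sum_congr rfl fun j _ => by ring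
  simp only [mul_sub, Finset.sum_sub_distrib] at hsum
  rw [h1, h2]
  linarith [hsum, e1, e2, e3, e4, e5]
end EntAux

/-- The entropy function `Ent_{p,σ}(X)` is non-negative for positive definite `X`
and nonzero real `p`. -/
theorem ent_nonneg {n : Type*} [Fintype n] [DecidableEq n]
    (σ : Matrix n n ℂ) (hσ : σ.PosDef) (hσ1 : σ.trace = 1)
    (p : ℝ) (hp : p ≠ 0) (X : Matrix n n ℂ) (hX : X.PosDef) :
    0 ≤ Ent σ p X := by
  have hBpd : (mpow σ (1/(2*p))).PosDef :=
    entP_matFun_posDef hσ.1 (fun i => Real.rpow_pos_of_pos (hσ.eigenvalues_pos i) _)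
  have hΓ : (gammaPow σ p X).PosDef := by
    rw [gammaPow]
    rw [show mpow σ (1/(2*p)) * X * mpow σ (1/(2*p)) =
      (mpow σ (1/(2*p)))ᴴ * X * mpow σ (1/(2*p)) from by rw [hBpd.1.eq]]
    exact entP_posDef_conj hX hBpd.isUnit
  have hρ : (mpow (gammaPow σ p X) p).PosDef :=
    entP_matFun_posDef hΓ.1 (fun i => Real.rpow_pos_of_pos (hΓ.eigenvalues_pos i) _)
  have hT0 : 0 ≤ (mpow (gammaPow σ p X) p).trace.re := by
    rw [entP_trace_eq_sum hρ.1, ← Complex.ofReal_sum, Complex.ofReal_re]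
    exact Finset.sum_nonneg fun i _ => (hρ.eigenvalues_pos i).le
  have h3 : wnorm σ p X ^ p = (mpow (gammaPow σ p X) p).trace.re := by
    rw [wnorm, schatten, entP_mAbs_posDef hΓ, ← Real.rpow_mul hT0,
      one_div_mul_cancel hp, Real.rpow_one]
  have hk := entP_klein hρ hσ hσ1
  simp only [Ent]
  rw [h3]
  linarith [hk]
end

section
/- The map X ↦ Ent_{1,σ}(X) is convex on positive semi-definite matrices: for X, Y ≥ 0, Ent_{1,σ}((X+Y)/2) ≤ (Ent_{1,σ}(X) + Ent_{1,σ}(Y))/2. -/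
open Matrix BigOperators
open scoped ComplexOrder

noncomputable section
variable {n : Type*} [Fintype n] [DecidableEq n]

namespace EntAux


variable {A : Matrix n n ℂ}

lemma matFun_def (hA : A.IsHermitian) (f : ℝ → ℝ) :
    matFun A f = (hA.eigenvectorUnitary : Matrix n n ℂ) *
      Matrix.diagonal (fun i => (f (hA.eigenvalues i) : ℂ)) *
      star (hA.eigenvectorUnitary : Matrix n n ℂ) := by
  rw [matFun, dif_pos hA]

lemma matFun_isHermitian (hA : A.IsHermitian) (f : ℝ → ℝ) : (matFun A f).IsHermitian := by
  rw [matFun_def hA f]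
  exact isHermitian_mul_mul_conjTranspose _
    (isHermitian_diagonal_of_self_adjoint _ (by ext i; simp [Pi.star_apply, Complex.conj_ofReal]))

lemma star_mul_self_eigU (hA : A.IsHermitian) :
    star (hA.eigenvectorUnitary : Matrix n n ℂ) * (hA.eigenvectorUnitary : Matrix n n ℂ) = 1 :=
  Matrix.mem_unitaryGroup_iff'.mp hA.eigenvectorUnitary.2

lemma mul_star_self_eigU (hA : A.IsHermitian) :
    (hA.eigenvectorUnitary : Matrix n n ℂ) * star (hA.eigenvectorUnitary : Matrix n n ℂ) = 1 :=
  Matrix.mem_unitaryGroup_iff.mp hA.eigenvectorUnitary.2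

lemma matFun_mul_matFun (hA : A.IsHermitian) (f g : ℝ → ℝ) :
    matFun A f * matFun A g = matFun A (fun x => f x * g x) := by
  rw [matFun_def hA f, matFun_def hA g, matFun_def hA (fun x => f x * g x)]
  set U := (hA.eigenvectorUnitary : Matrix n n ℂ)
  have h1 : star U * U = 1 := star_mul_self_eigU hA
  calc (U * diagonal (fun i => (f (hA.eigenvalues i) : ℂ)) * star U) *
        (U * diagonal (fun i => (g (hA.eigenvalues i) : ℂ)) * star U)
      = U * (diagonal (fun i => (f (hA.eigenvalues i) : ℂ)) * ((star U * U) *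
          diagonal (fun i => (g (hA.eigenvalues i) : ℂ)))) * star U := by
        simp only [Matrix.mul_assoc]
    _ = U * diagonal (fun i => ((f (hA.eigenvalues i) * g (hA.eigenvalues i) : ℝ) : ℂ)) * star U := by
        rw [h1, Matrix.one_mul, diagonal_mul_diagonal]
        simp [Matrix.mul_assoc]

lemma matFun_id (hA : A.IsHermitian) : matFun A (fun x => x) = A := by
  rw [matFun_def hA]
  exact (hA.spectral_theorem).symm

lemma matFun_congr (hA : A.IsHermitian) {f g : ℝ → ℝ}
    (h : ∀ i, f (hA.eigenvalues i) = g (hA.eigenvalues i)) : matFun A f = matFun A g := by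
  rw [matFun_def hA f, matFun_def hA g]
  have : (fun i => ((f (hA.eigenvalues i)) : ℂ)) = fun i => ((g (hA.eigenvalues i)) : ℂ) :=
    funext fun i => by rw [h i]
  rw [this]

lemma trace_matFun (hA : A.IsHermitian) (f : ℝ → ℝ) :
    (matFun A f).trace = ∑ i, (f (hA.eigenvalues i) : ℂ) := by
  rw [matFun_def hA f, Matrix.trace_mul_cycle, star_mul_self_eigU hA,
    Matrix.one_mul, Matrix.trace_diagonal]

lemma matFun_posSemidef (hA : A.IsHermitian) {f : ℝ → ℝ}
    (hf : ∀ i, 0 ≤ f (hA.eigenvalues i)) : (matFun A f).PosSemidef := by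
  rw [matFun_def hA f]
  exact Matrix.PosSemidef.mul_mul_conjTranspose_same
    (Matrix.posSemidef_diagonal_iff.mpr fun i => by
      rw [Complex.le_def]; simp [hf i]) _



variable {A : Matrix n n ℂ}

lemma mpow_one (hA : A.IsHermitian) : mpow A 1 = A := by
  rw [mpow, matFun_congr hA (g := fun x => x) (fun i => Real.rpow_one _), matFun_id hA]

lemma mpow_isHermitian (hA : A.IsHermitian) (r : ℝ) : (mpow A r).IsHermitian :=
  matFun_isHermitian hA _

lemma mpow_half_sq (hA : A.PosSemidef) : mpow A (1/2 : ℝ) * mpow A (1/2 : ℝ) = A := by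
  rw [mpow, matFun_mul_matFun hA.1]
  rw [matFun_congr hA.1 (g := fun x => x) fun i => ?_, matFun_id hA.1]
  have h0 := hA.eigenvalues_nonneg i
  rw [← Real.rpow_add' h0 (by norm_num)]
  norm_num

lemma mpow_half_posSemidef (hA : A.PosSemidef) : (mpow A (1/2 : ℝ)).PosSemidef :=
  matFun_posSemidef hA.1 fun i => Real.rpow_nonneg (hA.eigenvalues_nonneg i) _

lemma mAbs_of_posSemidef (hA : A.PosSemidef) : mAbs A = A := by
  have hM : (Aᴴ * A).PosSemidef := Matrix.posSemidef_conjTranspose_mul_self A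
  have hB : (mpow (Aᴴ * A) (1/2 : ℝ)).PosSemidef := mpow_half_posSemidef hM
  open scoped MatrixOrder Matrix.Norms.L2Operator in
  refine (CFC.sq_eq_sq_iff _ _ hB.nonneg hA.nonneg).mp ?_
  rw [pow_two, pow_two, mpow_half_sq hM, hA.1]

lemma trace_re_eq_sum (hA : A.IsHermitian) : A.trace.re = ∑ i, hA.eigenvalues i := by
  conv_lhs => rw [← matFun_id hA, trace_matFun hA]
  push_cast
  simp

lemma trace_mul_matFun_re (hA : A.IsHermitian) (f : ℝ → ℝ) :
    (A * matFun A f).trace.re = ∑ i, hA.eigenvalues i * f (hA.eigenvalues i) := by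
  have h1 : A * matFun A f = matFun A (fun x => x) * matFun A f := by rw [matFun_id hA]
  rw [h1, matFun_mul_matFun hA, trace_matFun hA]
  push_cast
  simp




/-- `φ x = x log x`. -/
noncomputable def phi (x : ℝ) : ℝ := x * Real.log x

/-- `c x y = x log x - x log y`. -/
noncomputable def cre (x y : ℝ) : ℝ := x * Real.log x - x * Real.log y

lemma cre_eq (hx : 0 ≤ x) (hy : 0 < y) : cre x y = y * phi (x / y) := by
  rcases eq_or_lt_of_le hx with h | hx
  · simp [cre, phi, ← h]
  · rw [cre, phi, Real.log_div (ne_of_gt hx) (ne_of_gt hy)]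
    field_simp

lemma cre_two_point {x₁ y₁ x₂ y₂ : ℝ} (hx₁ : 0 ≤ x₁) (h₁ : x₁ ≤ y₁) (hx₂ : 0 ≤ x₂)
    (h₂ : x₂ ≤ y₂) :
    cre ((x₁ + x₂) / 2) ((y₁ + y₂) / 2) ≤ (cre x₁ y₁ + cre x₂ y₂) / 2 := by
  have hy₁ : 0 ≤ y₁ := hx₁.trans h₁
  have hy₂ : 0 ≤ y₂ := hx₂.trans h₂
  rcases eq_or_lt_of_le hy₁ with hy₁0 | hy₁p
  · -- y₁ = 0, hence x₁ = 0
    have hx₁0 : x₁ = 0 := le_antisymm (hy₁0 ▸ h₁) hx₁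
    rcases eq_or_lt_of_le hy₂ with hy₂0 | hy₂p
    · have hx₂0 : x₂ = 0 := le_antisymm (hy₂0 ▸ h₂) hx₂
      simp [cre, hx₁0, hx₂0, ← hy₁0, ← hy₂0]
    · have half : (0:ℝ) < y₂ / 2 := by linarith
      rw [hx₁0, ← hy₁0]
      rw [show ((0:ℝ) + x₂) / 2 = x₂ / 2 by ring, show ((0:ℝ) + y₂) / 2 = y₂ / 2 by ring]
      rw [cre_eq (by linarith) half, show x₂ / 2 / (y₂ / 2) = x₂ / y₂ by
        field_simp, cre_eq hx₂ hy₂p]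
      simp [cre, hx₁0]
      ring_nf
      linarith [le_refl (y₂ * phi (x₂/y₂))]
  · rcases eq_or_lt_of_le hy₂ with hy₂0 | hy₂p
    · have hx₂0 : x₂ = 0 := le_antisymm (hy₂0 ▸ h₂) hx₂
      have half : (0:ℝ) < y₁ / 2 := by linarith
      rw [hx₂0, ← hy₂0]
      rw [show (x₁ + (0:ℝ)) / 2 = x₁ / 2 by ring, show (y₁ + (0:ℝ)) / 2 = y₁ / 2 by ring]
      rw [cre_eq (by linarith) half, show x₁ / 2 / (y₁ / 2) = x₁ / y₁ by
        field_simp, cre_eq hx₁ hy₁p]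
      simp [cre, hx₂0]
      ring_nf
      linarith [le_refl (y₁ * phi (x₁/y₁))]
    · -- both positive: Jensen two-point
      have hs : 0 < y₁ + y₂ := by linarith
      have h1 : y₁ ≠ 0 := hy₁p.ne'
      have h2 : y₂ ≠ 0 := hy₂p.ne'
      have hs' : y₁ + y₂ ≠ 0 := hs.ne'
      have ha : (0:ℝ) ≤ y₁ / (y₁ + y₂) := by positivity
      have hb : (0:ℝ) ≤ y₂ / (y₁ + y₂) := by positivity
      have hab : y₁ / (y₁ + y₂) + y₂ / (y₁ + y₂) = 1 := by field_simp
      have hm₁ : x₁ / y₁ ∈ Set.Ici (0:ℝ) := Set.mem_Ici.mpr (by positivity)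
      have hm₂ : x₂ / y₂ ∈ Set.Ici (0:ℝ) := Set.mem_Ici.mpr (by positivity)
      have hconv := Real.convexOn_mul_log.2 hm₁ hm₂ ha hb hab
      simp only [smul_eq_mul] at hconv
      have harg : y₁ / (y₁ + y₂) * (x₁ / y₁) + y₂ / (y₁ + y₂) * (x₂ / y₂)
          = (x₁ + x₂) / (y₁ + y₂) := by field_simp
      rw [harg] at hconv
      have key := mul_le_mul_of_nonneg_left hconv
        (show (0:ℝ) ≤ (y₁ + y₂) / 2 by positivity)
      calc cre ((x₁ + x₂) / 2) ((y₁ + y₂) / 2)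
          = (y₁ + y₂) / 2 * phi ((x₁ + x₂) / (y₁ + y₂)) := by
            rw [cre_eq (by linarith) (by linarith),
              show (x₁ + x₂) / 2 / ((y₁ + y₂) / 2) = (x₁ + x₂) / (y₁ + y₂) by
                field_simp]
        _ ≤ (y₁ + y₂) / 2 * (y₁ / (y₁ + y₂) * ((x₁/y₁) * Real.log (x₁/y₁))
              + y₂ / (y₁ + y₂) * ((x₂/y₂) * Real.log (x₂/y₂))) := by
            simpa [phi] using key
        _ = (y₁ * phi (x₁/y₁) + y₂ * phi (x₂/y₂)) / 2 := by
            unfold phi; field_simp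
        _ = (cre x₁ y₁ + cre x₂ y₂) / 2 := by
            rw [cre_eq hx₁ hy₁p, cre_eq hx₂ hy₂p]



variable {A : Matrix n n ℂ}

lemma entry_star_mul_mul (A V : Matrix n n ℂ) (i : n) :
    (star V * A * V) i i = star (fun j => V j i) ⬝ᵥ A *ᵥ (fun j => V j i) := by
  simp only [Matrix.mul_apply, Matrix.star_apply, dotProduct, Matrix.mulVec, Pi.star_apply,
    Finset.sum_mul, Finset.mul_sum]
  rw [Finset.sum_comm]
  exact Finset.sum_congr rfl fun j _ => Finset.sum_congr rfl fun k _ => by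
    simp [Complex.star_def]; ring

lemma entry_nonneg (hA : A.PosSemidef) (V : Matrix n n ℂ) (i : n) :
    0 ≤ ((star V * A * V) i i).re ∧ ((star V * A * V) i i).im = 0 := by
  have h := hA.dotProduct_mulVec_nonneg (fun j => V j i)
  rw [← entry_star_mul_mul] at h
  rw [RCLike.nonneg_iff (K := ℂ)] at h
  simpa using h

lemma entry_real (hA : A.PosSemidef) (V : Matrix n n ℂ) (i : n) :
    (star V * A * V) i i = ((((star V * A * V) i i).re : ℝ) : ℂ) :=
  Complex.ext (by simp) (by simpa using (entry_nonneg hA V i).2)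

lemma sum_entries_eq_trace_re (hA : A.IsHermitian) {V : Matrix n n ℂ}
    (hV : V ∈ Matrix.unitaryGroup n ℂ) :
    ∑ i, ((star V * A * V) i i).re = A.trace.re := by
  have h : ∑ i, ((star V * A * V) i i) = A.trace := by
    have h0 : ∑ i, ((star V * A * V) i i) = (star V * A * V).trace := by
      simp [Matrix.trace, Matrix.diag]
    rw [h0, Matrix.trace_mul_cycle, Matrix.mem_unitaryGroup_iff.mp hV, Matrix.one_mul]
  rw [← h]
  simp [Matrix.trace]

lemma peierls (hA : A.PosSemidef) {V : Matrix n n ℂ} (hV : V ∈ Matrix.unitaryGroup n ℂ) :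
    ∑ i, phi (((star V * A * V) i i).re) ≤ ∑ j, phi (hA.1.eigenvalues j) := by
  set U := (hA.1.eigenvectorUnitary : Matrix n n ℂ) with hU
  set P := star U * V with hP
  have hstar : star P = star V * U := by rw [hP, Matrix.star_mul, star_star]
  have hPP : star P * P = 1 := by
    rw [hstar, hP]
    calc star V * U * (star U * V) = star V * (U * star U) * V := by
          simp only [Matrix.mul_assoc]
      _ = 1 := by rw [mul_star_self_eigU hA.1, Matrix.mul_one,
            Matrix.mem_unitaryGroup_iff'.mp hV]
  have hPP' : P * star P = 1 := by
    rw [hstar, hP]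
    calc star U * V * (star V * U) = star U * (V * star V) * U := by
          simp only [Matrix.mul_assoc]
      _ = 1 := by rw [Matrix.mem_unitaryGroup_iff.mp hV, Matrix.mul_one,
            star_mul_self_eigU hA.1]
  have hkey : star V * A * V =
      star P * Matrix.diagonal (fun j => ((hA.1.eigenvalues j : ℝ) : ℂ)) * P := by
    conv_lhs => rw [hA.1.spectral_theorem, Unitary.conjStarAlgAut_apply]
    rw [hstar, hP]
    simp only [Matrix.mul_assoc, Function.comp]
    rfl
  set w : n → n → ℝ := fun i j => Complex.normSq (P j i) with hw
  have hentry : ∀ i, ((star V * A * V) i i).re = ∑ j, w i j * hA.1.eigenvalues j := by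
    intro i
    rw [hkey, Matrix.mul_apply]
    have : ∀ j, (star P * Matrix.diagonal (fun j => ((hA.1.eigenvalues j : ℝ) : ℂ))) i j * P j i
        = (((w i j * hA.1.eigenvalues j : ℝ)) : ℂ) := by
      intro j
      rw [Matrix.mul_diagonal, Matrix.star_apply]
      push_cast
      rw [show star (P j i) * (hA.1.eigenvalues j : ℂ) * P j i
          = (star (P j i) * P j i) * (hA.1.eigenvalues j : ℂ) by ring]
      rw [show star (P j i) = (starRingEnd ℂ) (P j i) from rfl, mul_comm ((starRingEnd ℂ) (P j i)) (P j i), Complex.mul_conj]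
    rw [Finset.sum_congr rfl fun j _ => this j, ← Complex.ofReal_sum]
    simp
  have hw0 : ∀ i j, 0 ≤ w i j := fun i j => Complex.normSq_nonneg _
  have hrown : ∀ i, ∑ j, w i j = 1 := by
    intro i
    have h := congrFun (congrFun hPP i) i
    rw [Matrix.mul_apply, Matrix.one_apply_eq] at h
    have : ∀ j, (star P) i j * P j i = ((w i j : ℝ) : ℂ) := by
      intro j
      rw [Matrix.star_apply, Complex.star_def, mul_comm, Complex.mul_conj]
    rw [Finset.sum_congr rfl fun j _ => this j, ← Complex.ofReal_sum] at h
    exact_mod_cast h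
  have hcol : ∀ j, ∑ i, w i j = 1 := by
    intro j
    have h := congrFun (congrFun hPP' j) j
    rw [Matrix.mul_apply, Matrix.one_apply_eq] at h
    have : ∀ i, P j i * (star P) i j = ((w i j : ℝ) : ℂ) := by
      intro i
      rw [Matrix.star_apply, Complex.star_def, Complex.mul_conj]
    rw [Finset.sum_congr rfl fun i _ => this i, ← Complex.ofReal_sum] at h
    exact_mod_cast h
  calc ∑ i, phi (((star V * A * V) i i).re)
      = ∑ i, phi (∑ j, w i j • hA.1.eigenvalues j) := by
        simp only [smul_eq_mul]
        exact Finset.sum_congr rfl fun i _ => by rw [hentry i]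
    _ ≤ ∑ i, ∑ j, w i j • phi (hA.1.eigenvalues j) := by
        refine Finset.sum_le_sum fun i _ => ?_
        have := Real.convexOn_mul_log.map_sum_le (fun j _ => hw0 i j) (hrown i)
          (fun j _ => Set.mem_Ici.mpr (hA.eigenvalues_nonneg j))
        simpa [phi] using this
    _ = ∑ j, (∑ i, w i j) * phi (hA.1.eigenvalues j) := by
        rw [Finset.sum_comm]
        simp [Finset.sum_mul, smul_eq_mul]
    _ = ∑ j, phi (hA.1.eigenvalues j) :=
        Finset.sum_congr rfl fun j _ => by rw [hcol j, one_mul]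



variable {σ X Y : Matrix n n ℂ}

lemma gamma_posSemidef (hσ : σ.PosDef) (hX : X.PosSemidef) :
    (gammaPow σ 1 X).PosSemidef := by
  rw [gammaPow]
  have hS : (mpow σ (1/(2*1) : ℝ)).IsHermitian := mpow_isHermitian hσ.1 _
  have h := hX.mul_mul_conjTranspose_same (mpow σ (1/(2*1) : ℝ))
  rwa [hS.eq] at h

lemma gamma_smul_add (σ X Y : Matrix n n ℂ) :
    gammaPow σ 1 ((2⁻¹ : ℂ) • (X + Y))
      = (2⁻¹ : ℂ) • (gammaPow σ 1 X + gammaPow σ 1 Y) := by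
  simp only [gammaPow, mul_add, add_mul, smul_add, smul_mul_assoc, mul_smul_comm]

lemma smul_half_posSemidef {M : Matrix n n ℂ} (hM : M.PosSemidef) :
    ((2⁻¹ : ℂ) • M).PosSemidef := by
  constructor
  · show ((2⁻¹ : ℂ) • M)ᴴ = _
    rw [Matrix.conjTranspose_smul, hM.1]
    congr 1
    simp
  · have h2 : (0:ℂ) ≤ (2⁻¹ : ℂ) := by
      rw [RCLike.nonneg_iff (K := ℂ)]
      norm_num
    exact (hM.smul h2).2

lemma ent_one_eq (hσ : σ.PosDef) {Z : Matrix n n ℂ} (hG : (gammaPow σ 1 Z).PosSemidef) :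
    Ent σ 1 Z = (∑ i, phi (hG.1.eigenvalues i))
      - ((gammaPow σ 1 Z) * mlog σ).trace.re - phi ((gammaPow σ 1 Z).trace.re) := by
  have hw : wnorm σ 1 Z = (gammaPow σ 1 Z).trace.re := by
    rw [wnorm, schatten, mAbs_of_posSemidef hG, mpow_one hG.1]
    norm_num
  rw [Ent, mpow_one hG.1, hw, Real.rpow_one, mlog, trace_mul_matFun_re hG.1]
  rfl




lemma half_re (z w : ℂ) : ((2⁻¹ : ℂ) * z + (2⁻¹ : ℂ) * w).re = (z.re + w.re) / 2 := by
  have h : (2⁻¹ : ℂ) = (((2⁻¹ : ℝ)) : ℂ) := by norm_num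
  rw [h, Complex.add_re, Complex.re_ofReal_mul, Complex.re_ofReal_mul]
  ring

lemma half_re' (z : ℂ) : ((2⁻¹ : ℂ) * z).re = z.re / 2 := by
  have h : (2⁻¹ : ℂ) = (((2⁻¹ : ℝ)) : ℂ) := by norm_num
  rw [h, Complex.re_ofReal_mul]
  ring

lemma sum_cre {x : n → ℝ} {y : ℝ} (h : ∑ i, x i = y) :
    ∑ i, cre (x i) y = (∑ i, phi (x i)) - phi y := by
  simp only [cre, phi]
  rw [Finset.sum_sub_distrib, ← Finset.sum_mul, h]

lemma ent_one_eq' {σ : Matrix n n ℂ} (hσ : σ.PosDef) {Z W : Matrix n n ℂ}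
    (hZW : gammaPow σ 1 Z = W) (hW : W.PosSemidef) :
    Ent σ 1 Z = (∑ i, phi (hW.1.eigenvalues i))
      - (W * mlog σ).trace.re - phi (W.trace.re) := by
  subst hZW; exact ent_one_eq hσ hW


end EntAux

end

open EntAux

/-- Midpoint convexity of `X ↦ Ent_{1,σ}(X)` on positive semi-definite matrices. -/
theorem ent_one_convex {n : Type*} [Fintype n] [DecidableEq n]
    (σ : Matrix n n ℂ) (hσ : σ.PosDef) (hσ1 : σ.trace = 1)
    (X Y : Matrix n n ℂ) (hX : X.PosSemidef) (hY : Y.PosSemidef) :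
    Ent σ 1 (((2 : ℂ)⁻¹) • (X + Y)) ≤ (Ent σ 1 X + Ent σ 1 Y) / 2 := by
  classical
  set A := gammaPow σ 1 X with hAdef
  set B := gammaPow σ 1 Y with hBdef
  have hA : A.PosSemidef := gamma_posSemidef hσ hX
  have hB : B.PosSemidef := gamma_posSemidef hσ hY
  have hCE : gammaPow σ 1 ((2 : ℂ)⁻¹ • (X + Y)) = (2⁻¹ : ℂ) • (A + B) :=
    gamma_smul_add σ X Y
  set C := (2⁻¹ : ℂ) • (A + B) with hCdef
  have hC : C.PosSemidef := smul_half_posSemidef (hA.add hB)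
  rw [ent_one_eq' hσ hCE hC, ent_one_eq' hσ rfl hA, ent_one_eq' hσ rfl hB]
  set V := (hC.1.eigenvectorUnitary : Matrix n n ℂ) with hVdef
  have hV : V ∈ Matrix.unitaryGroup n ℂ := hC.1.eigenvectorUnitary.2
  set a : n → ℝ := fun i => ((star V * A * V) i i).re with hadef
  set b : n → ℝ := fun i => ((star V * B * V) i i).re with hbdef
  -- eigenvalues of C are midpoints of the diagonal entries
  have heig : ∀ i, hC.1.eigenvalues i = (a i + b i) / 2 := by
    intro i
    have hd := hC.1.conjStarAlgAut_star_eigenvectorUnitary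
    rw [Unitary.conjStarAlgAut_apply, Unitary.coe_star, star_star] at hd
    have h1 : (star V * C * V) i i = ((hC.1.eigenvalues i : ℝ) : ℂ) := by
      rw [hd]
      simp [Matrix.diagonal_apply_eq, Function.comp]
    have h2 : star V * C * V
        = (2⁻¹ : ℂ) • (star V * A * V) + (2⁻¹ : ℂ) • (star V * B * V) := by
      rw [hCdef]
      simp only [mul_add, add_mul, smul_add, smul_mul_assoc, mul_smul_comm]
    rw [h2] at h1
    have h3 := congrArg Complex.re h1
    rw [Matrix.add_apply, Matrix.smul_apply, Matrix.smul_apply, smul_eq_mul, smul_eq_mul,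
      half_re, Complex.ofReal_re] at h3
    exact h3.symm
  have hsA : ∑ i, a i = A.trace.re := sum_entries_eq_trace_re hA.1 hV
  have hsB : ∑ i, b i = B.trace.re := sum_entries_eq_trace_re hB.1 hV
  have ha0 : ∀ i, 0 ≤ a i := fun i => (entry_nonneg hA V i).1
  have hb0 : ∀ i, 0 ≤ b i := fun i => (entry_nonneg hB V i).1
  have haA : ∀ i, a i ≤ A.trace.re := fun i => hsA ▸
    Finset.single_le_sum (fun j _ => ha0 j) (Finset.mem_univ i)
  have hbB : ∀ i, b i ≤ B.trace.re := fun i => hsB ▸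
    Finset.single_le_sum (fun j _ => hb0 j) (Finset.mem_univ i)
  have htrC : C.trace.re = (A.trace.re + B.trace.re) / 2 := by
    rw [hCdef, Matrix.trace_smul, Matrix.trace_add, smul_eq_mul, mul_add, half_re]
  have hsum_eig : ∑ i, hC.1.eigenvalues i = C.trace.re := (trace_re_eq_sum hC.1).symm
  have hlog : (C * mlog σ).trace.re
      = ((A * mlog σ).trace.re + (B * mlog σ).trace.re) / 2 := by
    have : C * mlog σ = (2⁻¹ : ℂ) • (A * mlog σ) + (2⁻¹ : ℂ) • (B * mlog σ) := by
      rw [hCdef]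
      simp only [add_mul, smul_add, smul_mul_assoc]
    rw [this, Matrix.trace_add, Matrix.trace_smul, Matrix.trace_smul, smul_eq_mul,
      smul_eq_mul, half_re]
  have hmain : (∑ i, phi (hC.1.eigenvalues i)) - phi (C.trace.re)
      ≤ (((∑ j, phi (hA.1.eigenvalues j)) - phi (A.trace.re))
        + ((∑ j, phi (hB.1.eigenvalues j)) - phi (B.trace.re))) / 2 := by
    have hpA := peierls hA hV
    have hpB := peierls hB hV
    calc (∑ i, phi (hC.1.eigenvalues i)) - phi (C.trace.re)
        = ∑ i, cre (hC.1.eigenvalues i) (C.trace.re) := (sum_cre hsum_eig).symm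
      _ ≤ ∑ i, (cre (a i) (A.trace.re) + cre (b i) (B.trace.re)) / 2 := by
          refine Finset.sum_le_sum fun i _ => ?_
          rw [heig i, htrC]
          exact cre_two_point (ha0 i) (haA i) (hb0 i) (hbB i)
      _ = ((∑ i, cre (a i) (A.trace.re)) + (∑ i, cre (b i) (B.trace.re))) / 2 := by
          rw [← Finset.sum_add_distrib, ← Finset.sum_div]
      _ = (((∑ i, phi (a i)) - phi (A.trace.re))
            + ((∑ i, phi (b i)) - phi (B.trace.re))) / 2 := by
          rw [sum_cre hsA, sum_cre hsB]
      _ ≤ _ := by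
          have h1 : ∑ i, phi (a i) ≤ ∑ j, phi (hA.1.eigenvalues j) := hpA
          have h2 : ∑ i, phi (b i) ≤ ∑ j, phi (hB.1.eigenvalues j) := hpB
          linarith
  rw [hlog]
  linarith
end

section
/- Let L be a linear superoperator on matrices that is self-adjoint with respect to the inner product ⟨X,Y⟩_{1,σ} := tr(σ X† Y) and satisfies L(Y†) = L(Y)†. Then L commutes with the modular operator Δ_σ(X) := σ X σ^{-1}, i.e., Δ_σ ∘ L = L ∘ Δ_σ. -/
open Matrix BigOperators
open scoped ComplexOrder

/-- A hermitian-preserving superoperator that is self-adjoint with respect to the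
inner product `⟨X,Y⟩_{1,σ} = tr(σ X† Y)` commutes with the modular operator
`Δ_σ(X) = σ X σ⁻¹`. -/
theorem modular_commute {n : Type*} [Fintype n] [DecidableEq n]
    (σ : Matrix n n ℂ) (hσ : σ.PosDef) (hσ1 : σ.trace = 1)
    (L : Matrix n n ℂ →ₗ[ℂ] Matrix n n ℂ)
    (hherm : ∀ X, L (Xᴴ) = (L X)ᴴ)
    (hsa : ∀ X Y, (σ * Xᴴ * L Y).trace = (σ * (L X)ᴴ * Y).trace) :
    ∀ X, σ * L X * σ⁻¹ = L (σ * X * σ⁻¹) := by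
  have hunit : IsUnit σ.det := by
    exact isUnit_iff_ne_zero.mpr (by exact_mod_cast hσ.det_pos.ne')
  have hinv : σ * σ⁻¹ = 1 := Matrix.mul_nonsing_inv σ hunit
  have hinv' : σ⁻¹ * σ = 1 := Matrix.nonsing_inv_mul σ hunit
  -- step 1
  have h1 : ∀ X Y, (σ * X * L Y).trace = (σ * L X * Y).trace := by
    intro X Y
    have := hsa Xᴴ Y
    simpa [hherm] using this
  -- step 2
  have h2 : ∀ W, L (σ⁻¹ * W * σ) = σ⁻¹ * L W * σ := by
    intro W
    have key : ∀ Y, (σ * L (σ⁻¹ * W * σ) * Y).trace = (σ * (σ⁻¹ * L W * σ) * Y).trace := by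
      intro Y
      rw [← h1]
      have e1 : σ * (σ⁻¹ * W * σ) * L Y = W * (σ * L Y) := by
        rw [← mul_assoc, ← mul_assoc, ← mul_assoc, hinv, one_mul, mul_assoc]
      have e2 : σ * (σ⁻¹ * L W * σ) * Y = L W * (σ * Y) := by
        rw [← mul_assoc, ← mul_assoc, ← mul_assoc, hinv, one_mul, mul_assoc]
      rw [e1, e2, Matrix.trace_mul_comm, Matrix.trace_mul_comm (L W)]
      exact (h1 Y W).symm
    -- nondegeneracy
    have hz : ∀ (M : Matrix n n ℂ), (∀ Y, (M * Y).trace = 0) → M = 0 := by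
      intro M hM
      ext i j
      have := hM (Matrix.single j i 1)
      simpa [Matrix.trace, Matrix.mul_apply, Matrix.single, Matrix.diag, ite_and, Finset.sum_ite_eq] using this
    have := hz (σ * L (σ⁻¹ * W * σ) - σ * (σ⁻¹ * L W * σ)) (by
      intro Y
      rw [Matrix.sub_mul, Matrix.trace_sub, key, sub_self])
    have hs : σ * L (σ⁻¹ * W * σ) = σ * (σ⁻¹ * L W * σ) := by
      have := sub_eq_zero.mp this
      exact this
    calc L (σ⁻¹ * W * σ) = σ⁻¹ * (σ * L (σ⁻¹ * W * σ)) := by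
          rw [← mul_assoc, hinv', one_mul]
      _ = σ⁻¹ * (σ * (σ⁻¹ * L W * σ)) := by rw [hs]
      _ = σ⁻¹ * L W * σ := by rw [← mul_assoc, ← mul_assoc, ← mul_assoc, hinv', one_mul, mul_assoc]
  intro X
  have := h2 (σ * X * σ⁻¹)
  have e : σ⁻¹ * (σ * X * σ⁻¹) * σ = X := by
    rw [← mul_assoc, ← mul_assoc, hinv', one_mul, mul_assoc, hinv', mul_one]
  rw [e] at this
  rw [this, ← mul_assoc, ← mul_assoc, hinv, one_mul, mul_assoc, mul_assoc, hinv, mul_one, ← mul_assoc]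
end

section
/- If a hermitian-preserving superoperator L is self-adjoint with respect to ⟨X,Y⟩_{1,σ} := tr(σ X† Y), then L is also self-adjoint with respect to the KMS inner product ⟨X,Y⟩_σ := tr(σ^{1/2} X† σ^{1/2} Y). -/
open Matrix BigOperators
open scoped ComplexOrder

section KMSAux

variable {n : Type*} [Fintype n] [DecidableEq n]

private lemma key_scalar {α β γ δ eα eβ eγ eδ : ℝ} {a b : ℂ}
    (hα : 0 < α) (hβ : 0 < β) (hγ : 0 < γ) (hδ : 0 < δ)
    (heα : 0 ≤ eα) (heβ : 0 ≤ eβ) (heγ : 0 ≤ eγ) (heδ : 0 ≤ eδ)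
    (hqα : eα ^ 2 = α) (hqβ : eβ ^ 2 = β) (hqγ : eγ ^ 2 = γ) (hqδ : eδ ^ 2 = δ)
    (h1 : (α : ℂ) * a = (δ : ℂ) * b) (h2 : (γ : ℂ) * b = (β : ℂ) * a) :
    (eα : ℂ) * (eβ : ℂ) * a = (eγ : ℂ) * (eδ : ℂ) * b := by
  by_cases hb : b = 0
  · have hα' : (α : ℂ) ≠ 0 := by exact_mod_cast hα.ne'
    have ha : a = 0 := by
      have h0 : (α : ℂ) * a = 0 := by rw [h1, hb, mul_zero]
      exact (mul_eq_zero.mp h0).resolve_left hα'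
    simp [ha, hb]
  · have hγ' : (γ : ℂ) ≠ 0 := by exact_mod_cast hγ.ne'
    have ha : a ≠ 0 := by
      intro ha; apply hb
      have h0 : (γ : ℂ) * b = 0 := by rw [h2, ha, mul_zero]
      exact (mul_eq_zero.mp h0).resolve_left hγ'
    have hc : ((γ * α : ℝ) : ℂ) * a = ((δ * β : ℝ) : ℂ) * a := by
      push_cast
      calc (γ : ℂ) * α * a = γ * ((α : ℂ) * a) := by ring
        _ = γ * ((δ : ℂ) * b) := by rw [h1]
        _ = δ * ((γ : ℂ) * b) := by ring
        _ = δ * ((β : ℂ) * a) := by rw [h2]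
        _ = (δ : ℂ) * β * a := by ring
    have hreal : γ * α = δ * β := by
      have := mul_right_cancel₀ ha hc
      exact_mod_cast this
    have hkey : eα * eβ * δ = eγ * eδ * α := by
      have hsq : (eα * eβ * δ) ^ 2 = (eγ * eδ * α) ^ 2 := by
        have h' : α * β * δ ^ 2 = γ * δ * α ^ 2 := by linear_combination (-(δ * α)) * hreal
        calc (eα * eβ * δ) ^ 2 = eα ^ 2 * eβ ^ 2 * δ ^ 2 := by ring
          _ = α * β * δ ^ 2 := by rw [hqα, hqβ]
          _ = γ * δ * α ^ 2 := h'
          _ = eγ ^ 2 * eδ ^ 2 * α ^ 2 := by rw [hqγ, hqδ]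
          _ = (eγ * eδ * α) ^ 2 := by ring
      have hp : 0 ≤ eα * eβ * δ := by positivity
      have hq : 0 ≤ eγ * eδ * α := by positivity
      rw [← Real.sqrt_sq hp, ← Real.sqrt_sq hq, hsq]
    have hαC : (α : ℂ) ≠ 0 := by exact_mod_cast hα.ne'
    apply mul_left_cancel₀ hαC
    calc (α : ℂ) * ((eα : ℂ) * (eβ : ℂ) * a)
        = ((eα * eβ : ℝ) : ℂ) * ((α : ℂ) * a) := by push_cast; ring
      _ = ((eα * eβ : ℝ) : ℂ) * ((δ : ℂ) * b) := by rw [h1]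
      _ = ((eα * eβ * δ : ℝ) : ℂ) * b := by push_cast; ring
      _ = ((eγ * eδ * α : ℝ) : ℂ) * b := by rw [hkey]
      _ = (α : ℂ) * ((eγ : ℂ) * (eδ : ℂ) * b) := by push_cast; ring

private lemma trace_diag (c : n → ℂ) (A B : Matrix n n ℂ) :
    (Matrix.diagonal c * Aᴴ * B).trace
      = ∑ i, ∑ j, c i * star (A j i) * B j i := by
  simp only [Matrix.trace, Matrix.diag_apply, Matrix.mul_apply, Matrix.diagonal_apply,
    Matrix.conjTranspose_apply, ite_mul, zero_mul, Finset.sum_ite_eq, Finset.mem_univ,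
    if_true]

private lemma trace_diag2 (c c' : n → ℂ) (A B : Matrix n n ℂ) :
    (Matrix.diagonal c * Aᴴ * Matrix.diagonal c' * B).trace
      = ∑ i, ∑ j, c i * star (A j i) * c' j * B j i := by
  simp only [Matrix.trace, Matrix.diag_apply, Matrix.mul_apply, Matrix.diagonal_apply,
    Matrix.conjTranspose_apply, ite_mul, mul_ite, zero_mul, mul_zero, Finset.sum_ite_eq,
    Finset.sum_ite_eq', Finset.mem_univ, if_true]

private lemma sum_perm4 (F : n → n → n → n → ℂ) :
    (∑ i, ∑ j, ∑ r, ∑ s, F i j r s) = ∑ i, ∑ j, ∑ r, ∑ s, F s r i j := by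
  have pack : ∀ G : n → n → n → n → ℂ, (∑ i, ∑ j, ∑ r, ∑ s, G i j r s)
      = ∑ p : n × n × n × n, G p.1 p.2.1 p.2.2.1 p.2.2.2 := by
    intro G
    simp only [Fintype.sum_prod_type]
  rw [pack F, pack (fun i j r s => F s r i j)]
  exact Fintype.sum_equiv
    ⟨fun p => (p.2.2.1, p.2.2.2, p.2.1, p.1), fun q => (q.2.2.2, q.2.2.1, q.1, q.2.1),
      fun p => rfl, fun p => rfl⟩ _ _ (fun p => by simp)

private lemma diag_case (d e : n → ℝ) (hd : ∀ i, 0 < d i) (he : ∀ i, 0 ≤ e i)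
    (hed : ∀ i, e i ^ 2 = d i) (L : Matrix n n ℂ →ₗ[ℂ] Matrix n n ℂ)
    (hherm : ∀ X, L (Xᴴ) = (L X)ᴴ)
    (hsa : ∀ X Y, (Matrix.diagonal (fun i => (d i : ℂ)) * Xᴴ * L Y).trace
      = (Matrix.diagonal (fun i => (d i : ℂ)) * (L X)ᴴ * Y).trace)
    (X Y : Matrix n n ℂ) :
    (Matrix.diagonal (fun i => (e i : ℂ)) * Xᴴ * Matrix.diagonal (fun i => (e i : ℂ)) *
        L Y).trace
      = (Matrix.diagonal (fun i => (e i : ℂ)) * (L X)ᴴ *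
          Matrix.diagonal (fun i => (e i : ℂ)) * Y).trace := by
  set E : n → n → Matrix n n ℂ := fun r s => Matrix.single r s 1 with hEdef
  have hEH : ∀ p q, (E p q)ᴴ = E q p := by
    intro p q
    ext a b
    simp only [E, Matrix.conjTranspose_apply, Matrix.single, Matrix.of_apply]
    by_cases h1 : p = b <;> by_cases h2 : q = a <;> simp [h1, h2, and_comm]
  have hEapp : ∀ r s a b, E r s a b = if r = a then (if s = b then (1 : ℂ) else 0) else 0 := by
    intro r s a b
    simp [E, Matrix.single, ite_and]
  have hE : ∀ p q r s, (d q : ℂ) * (L (E r s)) p q = (d s : ℂ) * (L (E q p)) s r := by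
    intro p q r s
    have h := hsa (E p q) (E r s)
    rw [trace_diag, trace_diag] at h
    simp only [hEapp, apply_ite (star : ℂ → ℂ), star_one, star_zero,
      mul_ite, ite_mul, mul_one, mul_zero, zero_mul, Finset.sum_ite_eq,
      Finset.sum_ite_eq', Finset.sum_const_zero, Finset.mem_univ,
      if_true] at h
    rw [h]
    congr 1
    have : star ((L (E p q)) r s) = ((L (E p q))ᴴ) s r := rfl
    rw [this, ← hherm, hEH]
  have hexp : ∀ (B : Matrix n n ℂ) (a b : n),
      L B a b = ∑ r, ∑ s, B r s * (L (E r s)) a b := by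
    intro B a b
    conv_lhs => rw [Matrix.matrix_eq_sum_single B]
    rw [map_sum]
    simp only [map_sum, Matrix.sum_apply]
    refine Finset.sum_congr rfl fun r _ => Finset.sum_congr rfl fun s _ => ?_
    have hs : Matrix.single r s (B r s) = B r s • E r s := by
      simp [E, Matrix.smul_single, smul_eq_mul]
    rw [hs, _root_.map_smul, Matrix.smul_apply, smul_eq_mul]
  rw [trace_diag2, trace_diag2]
  have lhs_eq : (∑ i, ∑ j, (e i : ℂ) * star (X j i) * (e j : ℂ) * (L Y) j i)
      = ∑ i, ∑ j, ∑ r, ∑ s,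
          (e i : ℂ) * (e j : ℂ) * star (X j i) * Y r s * (L (E r s)) j i := by
    refine Finset.sum_congr rfl fun i _ => Finset.sum_congr rfl fun j _ => ?_
    rw [hexp Y j i, Finset.mul_sum]
    refine Finset.sum_congr rfl fun r _ => ?_
    rw [Finset.mul_sum]
    refine Finset.sum_congr rfl fun s _ => ?_
    ring
  have rhs_eq : (∑ i, ∑ j, (e i : ℂ) * star ((L X) j i) * (e j : ℂ) * Y j i)
      = ∑ i, ∑ j, ∑ r, ∑ s,
          (e i : ℂ) * (e j : ℂ) * star (X s r) * Y j i * (L (E r s)) i j := by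
    refine Finset.sum_congr rfl fun i _ => Finset.sum_congr rfl fun j _ => ?_
    have hst : star ((L X) j i) = (L (Xᴴ)) i j := by
      rw [hherm]; rfl
    rw [hst, hexp (Xᴴ) i j]
    simp only [Finset.mul_sum, Finset.sum_mul]
    refine Finset.sum_congr rfl fun r _ => Finset.sum_congr rfl fun s _ => ?_
    simp only [Matrix.conjTranspose_apply]
    ring
  rw [lhs_eq, rhs_eq]
  rw [show (∑ i, ∑ j, ∑ r, ∑ s,
      (e i : ℂ) * (e j : ℂ) * star (X s r) * Y j i * (L (E r s)) i j)
    = ∑ i, ∑ j, ∑ r, ∑ s,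
      (e s : ℂ) * (e r : ℂ) * star (X j i) * Y r s * (L (E i j)) s r from
    sum_perm4 (fun i j r s => (e i : ℂ) * (e j : ℂ) * star (X s r) * Y j i * (L (E r s)) i j)]
  refine Finset.sum_congr rfl fun i _ => Finset.sum_congr rfl fun j _ =>
    Finset.sum_congr rfl fun r _ => Finset.sum_congr rfl fun s _ => ?_
  have h1 := hE j i r s
  have h2 := hE s r i j
  have hk := key_scalar (hd i) (hd j) (hd r) (hd s) (he i) (he j) (he r) (he s)
    (hed i) (hed j) (hed r) (hed s) h1 h2
  linear_combination (star (X j i) * Y r s) * hk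

end KMSAux

/-- A hermitian-preserving superoperator that is self-adjoint with respect to
`⟨X,Y⟩_{1,σ} = tr(σ X† Y)` is also self-adjoint with respect to the KMS inner
product `⟨X,Y⟩_σ = tr(σ^{1/2} X† σ^{1/2} Y)`. -/
theorem kms_selfadjoint {n : Type*} [Fintype n] [DecidableEq n]
    (σ : Matrix n n ℂ) (hσ : σ.PosDef) (hσ1 : σ.trace = 1)
    (L : Matrix n n ℂ →ₗ[ℂ] Matrix n n ℂ)
    (hherm : ∀ X, L (Xᴴ) = (L X)ᴴ)
    (hsa : ∀ X Y, (σ * Xᴴ * L Y).trace = (σ * (L X)ᴴ * Y).trace) :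
    ∀ X Y, (mpow σ (1/2) * Xᴴ * mpow σ (1/2) * L Y).trace =
      (mpow σ (1/2) * (L X)ᴴ * mpow σ (1/2) * Y).trace := by
  intro X Y
  have hA : σ.IsHermitian := hσ.1
  set U : Matrix n n ℂ := (hA.eigenvectorUnitary : Matrix n n ℂ) with hUdef
  set d : n → ℝ := hA.eigenvalues with hddef
  set e : n → ℝ := fun i => d i ^ ((1 : ℝ)/2) with hedef
  have hd : ∀ i, 0 < d i := fun i => hσ.eigenvalues_pos i
  have he : ∀ i, 0 ≤ e i := fun i => Real.rpow_nonneg (hd i).le _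
  have hed : ∀ i, e i ^ 2 = d i := by
    intro i
    rw [hedef]
    rw [← Real.rpow_natCast (d i ^ ((1:ℝ)/2)) 2, ← Real.rpow_mul (hd i).le]
    norm_num
  have hU2 : U * Uᴴ = 1 := by
    have := Matrix.mem_unitaryGroup_iff.mp hA.eigenvectorUnitary.2
    rwa [Matrix.star_eq_conjTranspose] at this
  have hU1 : Uᴴ * U = 1 := by
    have := Matrix.mem_unitaryGroup_iff'.mp hA.eigenvectorUnitary.2
    rwa [Matrix.star_eq_conjTranspose] at this
  have hcan1 : ∀ M : Matrix n n ℂ, Uᴴ * (U * M) = M := fun M => by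
    rw [← Matrix.mul_assoc, hU1, Matrix.one_mul]
  have hcan2 : ∀ M : Matrix n n ℂ, U * (Uᴴ * M) = M := fun M => by
    rw [← Matrix.mul_assoc, hU2, Matrix.one_mul]
  have hspec : σ = U * Matrix.diagonal (fun i => (d i : ℂ)) * Uᴴ := by
    have h := hA.spectral_theorem
    rw [Unitary.conjStarAlgAut_apply, Matrix.star_eq_conjTranspose] at h
    exact h
  have hpow : mpow σ (1/2) = U * Matrix.diagonal (fun i => (e i : ℂ)) * Uᴴ := by
    rw [mpow, matFun, dif_pos hA, Matrix.star_eq_conjTranspose]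
  -- conjugated superoperator
  set L' : Matrix n n ℂ →ₗ[ℂ] Matrix n n ℂ :=
    { toFun := fun Z => Uᴴ * L (U * Z * Uᴴ) * U
      map_add' := fun A B => by
        simp only [Matrix.mul_add, Matrix.add_mul, map_add]
      map_smul' := fun c A => by
        simp only [Matrix.mul_smul, Matrix.smul_mul, _root_.map_smul,
          RingHom.id_apply] } with hL'def
  have hL'app : ∀ Z, L' Z = Uᴴ * L (U * Z * Uᴴ) * U := fun Z => rfl
  have hherm' : ∀ Z, L' (Zᴴ) = (L' Z)ᴴ := by
    intro Z
    rw [hL'app, hL'app]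
    simp only [Matrix.conjTranspose_mul, Matrix.conjTranspose_conjTranspose,
      Matrix.mul_assoc, ← hherm]
  -- trace transfer lemmas
  have key : ∀ (A M : Matrix n n ℂ) (c : n → ℂ),
      (Matrix.diagonal c * Aᴴ * (Uᴴ * M * U)).trace
        = ((U * Matrix.diagonal c * Uᴴ) * (U * A * Uᴴ)ᴴ * M).trace := by
    intro A M c
    have h1 : Matrix.diagonal c * Aᴴ * (Uᴴ * M * U)
        = (Matrix.diagonal c * (Aᴴ * (Uᴴ * M))) * U := by
      simp only [Matrix.mul_assoc]
    rw [h1, Matrix.trace_mul_comm]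
    congr 1
    simp only [Matrix.conjTranspose_mul, Matrix.conjTranspose_conjTranspose,
      Matrix.mul_assoc, hcan1]
  have key2 : ∀ (N B : Matrix n n ℂ) (c : n → ℂ),
      (Matrix.diagonal c * (Uᴴ * N * U) * B).trace
        = ((U * Matrix.diagonal c * Uᴴ) * N * (U * B * Uᴴ)).trace := by
    intro N B c
    have h1 : (U * Matrix.diagonal c * Uᴴ) * N * (U * B * Uᴴ)
        = (U * (Matrix.diagonal c * (Uᴴ * (N * (U * B))))) * Uᴴ := by
      simp only [Matrix.mul_assoc]
    rw [h1, Matrix.trace_mul_comm (U * (Matrix.diagonal c * (Uᴴ * (N * (U * B))))) Uᴴ, hcan1]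
    congr 1
    simp only [Matrix.mul_assoc]
  have key3 : ∀ (A B : Matrix n n ℂ) (c c' : n → ℂ),
      ((U * Matrix.diagonal c * Uᴴ) * Aᴴ * (U * Matrix.diagonal c' * Uᴴ) * B).trace
        = (Matrix.diagonal c * (Uᴴ * A * U)ᴴ * Matrix.diagonal c' * (Uᴴ * B * U)).trace := by
    intro A B c c'
    have h1 : (U * Matrix.diagonal c * Uᴴ) * Aᴴ * (U * Matrix.diagonal c' * Uᴴ) * B
        = U * (Matrix.diagonal c * (Uᴴ * (Aᴴ * (U * (Matrix.diagonal c' * (Uᴴ * B)))))) := by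
      simp only [Matrix.mul_assoc]
    rw [h1, Matrix.trace_mul_comm]
    simp only [Matrix.conjTranspose_mul, Matrix.conjTranspose_conjTranspose,
      Matrix.mul_assoc]
  have hsa' : ∀ A B, (Matrix.diagonal (fun i => (d i : ℂ)) * Aᴴ * L' B).trace
      = (Matrix.diagonal (fun i => (d i : ℂ)) * (L' A)ᴴ * B).trace := by
    intro A B
    have h := hsa (U * A * Uᴴ) (U * B * Uᴴ)
    rw [hspec] at h
    calc (Matrix.diagonal (fun i => (d i : ℂ)) * Aᴴ * L' B).trace
        = ((U * Matrix.diagonal (fun i => (d i : ℂ)) * Uᴴ) * (U * A * Uᴴ)ᴴ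
            * L (U * B * Uᴴ)).trace := by
          rw [hL'app]; exact key A (L (U * B * Uᴴ)) _
      _ = ((U * Matrix.diagonal (fun i => (d i : ℂ)) * Uᴴ) * (L (U * A * Uᴴ))ᴴ
            * (U * B * Uᴴ)).trace := h
      _ = (Matrix.diagonal (fun i => (d i : ℂ)) * (L' A)ᴴ * B).trace := by
          have hAH : (L' A)ᴴ = Uᴴ * (L (U * A * Uᴴ))ᴴ * U := by
            rw [hL'app]
            simp only [Matrix.conjTranspose_mul, Matrix.conjTranspose_conjTranspose,
              Matrix.mul_assoc]
          rw [hAH]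
          exact (key2 ((L (U * A * Uᴴ))ᴴ) B _).symm
  have main := diag_case d e hd he hed L' hherm' hsa' (Uᴴ * X * U) (Uᴴ * Y * U)
  have hLX : L' (Uᴴ * X * U) = Uᴴ * L X * U := by
    rw [hL'app]
    have h0 : U * (Uᴴ * X * U) * Uᴴ = X := by
      have h1 : U * (Uᴴ * X * U) * Uᴴ = U * Uᴴ * X * (U * Uᴴ) := by
        simp only [Matrix.mul_assoc]
      rw [h1, hU2, Matrix.one_mul, Matrix.mul_one]
    rw [h0]
  have hLY : L' (Uᴴ * Y * U) = Uᴴ * L Y * U := by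
    rw [hL'app]
    have h0 : U * (Uᴴ * Y * U) * Uᴴ = Y := by
      have h1 : U * (Uᴴ * Y * U) * Uᴴ = U * Uᴴ * Y * (U * Uᴴ) := by
        simp only [Matrix.mul_assoc]
      rw [h1, hU2, Matrix.one_mul, Matrix.mul_one]
    rw [h0]
  rw [hLY, hLX] at main
  rw [hpow, key3 X (L Y) _ _, key3 (L X) Y _ _]
  exact main
end

section
/- Let Φ be a completely positive unital map on B(H) commuting with Δ_σ(X) = σ X σ^{-1} for a positive definite density matrix σ. Then there exist operators R_k ∈ B(H) and scalars ω_k ≥ 0 such that σ R_k = ω_k R_k σ, Φ(X) = Σ_k R_k X R_k† for all X, and Σ_k R_k R_k† = I. -/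
open Matrix BigOperators
open scoped ComplexOrder

/-- The Choi matrix of a superoperator. -/
noncomputable def choi {n : Type*} [Fintype n] [DecidableEq n]
    (Φ : Matrix n n ℂ →ₗ[ℂ] Matrix n n ℂ) : Matrix (n × n) (n × n) ℂ :=
  Matrix.of fun p q => Φ (Matrix.single p.1 q.1 1) p.2 q.2

open Kronecker

namespace KrausAux

variable {n : Type*} [Fintype n] [DecidableEq n]

lemma kron_conjT {N M : Type*} [Fintype N] [Fintype M]
    (A : Matrix N N ℂ) (B : Matrix M M ℂ) : (A ⊗ₖ B)ᴴ = Aᴴ ⊗ₖ Bᴴ := by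
  ext ⟨i, a⟩ ⟨j, b⟩
  simp [Matrix.conjTranspose_apply, star_mul']

lemma mul_std_mul' (A B : Matrix n n ℂ) (i j k l : n) :
    (A * Matrix.single i j (1 : ℂ) * B) k l = A k i * B j l := by
  rw [Matrix.mul_assoc, Matrix.mul_apply]
  rw [Finset.sum_eq_single i]
  · rw [Matrix.single_mul_apply_same, one_mul]
  · intro u _ hu
    rw [Matrix.single_mul_apply_of_ne (h := hu), mul_zero]
  · intro h; exact absurd (Finset.mem_univ i) h

lemma diag_sqrt_commute {N : Type*} [Fintype N] [DecidableEq N]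
    (lam : N → ℝ) (M : Matrix N N ℂ)
    (h : Matrix.diagonal (fun p => (lam p : ℂ)) * M
        = M * Matrix.diagonal (fun p => (lam p : ℂ))) :
    Matrix.diagonal (fun p => (Real.sqrt (lam p) : ℂ)) * M
      = M * Matrix.diagonal (fun p => (Real.sqrt (lam p) : ℂ)) := by
  ext p q
  have h' : (lam p : ℂ) * M p q = M p q * (lam q : ℂ) := by
    have := congrFun (congrFun h p) q
    simpa [Matrix.diagonal_mul, Matrix.mul_diagonal] using this
  rw [Matrix.diagonal_mul, Matrix.mul_diagonal]
  rcases eq_or_ne (M p q) 0 with h0 | h0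
  · simp [h0]
  · have hl : lam p = lam q := by
      rw [mul_comm (M p q) _] at h'
      exact_mod_cast mul_right_cancel₀ h0 h'
    rw [hl, mul_comm]

lemma sum_std_diag : (∑ i : n, Matrix.single i i (1 : ℂ)) = 1 := by
  ext a b
  simp only [Matrix.sum_apply, Matrix.single, Matrix.of_apply, Matrix.one_apply]
  rcases eq_or_ne a b with rfl | hab
  · rw [Finset.sum_eq_single a] <;> simp +contextual
  · rw [Finset.sum_eq_zero] <;> simp +contextual [hab, fun (i : n) (h : i = a) => h ▸ hab]

lemma choi_expand (Φ : Matrix n n ℂ →ₗ[ℂ] Matrix n n ℂ) (X : Matrix n n ℂ) (a b : n) :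
    Φ X a b = ∑ i, ∑ j, X i j * choi Φ (i, a) (j, b) := by
  conv_lhs => rw [Matrix.matrix_eq_sum_single X]
  rw [map_sum, Matrix.sum_apply]
  refine Finset.sum_congr rfl fun i _ => ?_
  rw [map_sum, Matrix.sum_apply]
  refine Finset.sum_congr rfl fun j _ => ?_
  have h : Matrix.single i j (X i j) = X i j • Matrix.single i j (1 : ℂ) := by
    simp
  rw [h, _root_.map_smul, Matrix.smul_apply, smul_eq_mul]
  rfl

lemma choi_conj_out (Φ : Matrix n n ℂ →ₗ[ℂ] Matrix n n ℂ) (P Q : Matrix n n ℂ) :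
    (1 ⊗ₖ P) * choi Φ * (1 ⊗ₖ Q) =
      Matrix.of fun p q => (P * Φ (Matrix.single p.1 q.1 1) * Q) p.2 q.2 := by
  ext ⟨i, a⟩ ⟨j, b⟩
  simp only [Matrix.mul_apply, Fintype.sum_prod_type, Matrix.kroneckerMap_apply,
    Matrix.one_apply, ite_mul, mul_ite, zero_mul, mul_zero, one_mul,
    Finset.sum_ite_eq, Finset.sum_ite_eq', Finset.mem_univ, if_true,
    Matrix.of_apply, Finset.sum_mul, Finset.mul_sum, choi]
  simp [Finset.sum_ite_eq, Finset.sum_ite_eq']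

lemma choi_conj_in (Φ : Matrix n n ℂ →ₗ[ℂ] Matrix n n ℂ) (P Q : Matrix n n ℂ) :
    (Pᵀ ⊗ₖ 1) * choi Φ * (Qᵀ ⊗ₖ 1) =
      Matrix.of fun p q => Φ (P * Matrix.single p.1 q.1 1 * Q) p.2 q.2 := by
  ext ⟨i, a⟩ ⟨j, b⟩
  simp only [Matrix.of_apply]
  rw [choi_expand]
  simp only [mul_std_mul']
  simp only [Matrix.mul_apply, Fintype.sum_prod_type, Matrix.kroneckerMap_apply,
    Matrix.one_apply, Matrix.transpose_apply, ite_mul, mul_ite, zero_mul, mul_zero, mul_one, one_mul,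
    Finset.sum_ite_eq, Finset.sum_ite_eq', Finset.mem_univ, if_true,
    Finset.sum_mul, Finset.mul_sum, choi, Matrix.of_apply]
  rw [Finset.sum_comm]
  exact Finset.sum_congr rfl fun k _ => Finset.sum_congr rfl fun l _ => by ring

end KrausAux

/-- A completely positive unital map commuting with the modular operator
`Δ_σ(X) = σ X σ⁻¹` has a Kraus decomposition `Φ(X) = Σ_k R_k X R_k†` with
`Σ_k R_k R_k† = I` and `σ R_k = ω_k R_k σ` for some scalars `ω_k ≥ 0`. -/
theorem kraus_modular {n : Type*} [Fintype n] [DecidableEq n]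
    (σ : Matrix n n ℂ) (hσ : σ.PosDef) (hσ1 : σ.trace = 1)
    (Φ : Matrix n n ℂ →ₗ[ℂ] Matrix n n ℂ)
    (hCP : (choi Φ).PosSemidef) (hunital : Φ 1 = 1)
    (hmod : ∀ X, σ * Φ X * σ⁻¹ = Φ (σ * X * σ⁻¹)) :
    ∃ (m : ℕ) (R : Fin m → Matrix n n ℂ) (ω : Fin m → ℝ),
      (∀ k, 0 ≤ ω k) ∧
      (∀ k, σ * R k = (ω k : ℂ) • (R k * σ)) ∧
      (∀ X, Φ X = ∑ k, R k * X * (R k)ᴴ) ∧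
      (∑ k, R k * (R k)ᴴ = 1) := by
  classical
  have hdet : IsUnit σ.det := isUnit_iff_ne_zero.mpr hσ.det_pos.ne'
  set Dm : Matrix (n × n) (n × n) ℂ := (σ⁻¹)ᵀ ⊗ₖ σ with hDmdef
  have hDps : Dm.PosSemidef := by
    obtain ⟨E, hE⟩ : ∃ E : Matrix n n ℂ, (σ⁻¹)ᵀ = Eᴴ * E := by
      open scoped MatrixOrder in
      exact CStarAlgebra.nonneg_iff_eq_star_mul_self.mp hσ.inv.transpose.posSemidef.nonneg
    obtain ⟨F, hF⟩ : ∃ F : Matrix n n ℂ, σ = Fᴴ * F := by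
      open scoped MatrixOrder in
      exact CStarAlgebra.nonneg_iff_eq_star_mul_self.mp hσ.posSemidef.nonneg
    have h : Dm = (E ⊗ₖ F)ᴴ * (E ⊗ₖ F) := by
      rw [KrausAux.kron_conjT, ← Matrix.mul_kronecker_mul, ← hE, ← hF]
    rw [h]; exact Matrix.posSemidef_conjTranspose_mul_self _
  have hM : (1 ⊗ₖ σ) * choi Φ * (1 ⊗ₖ σ⁻¹) = (σᵀ ⊗ₖ 1) * choi Φ * ((σ⁻¹)ᵀ ⊗ₖ 1) := by
    rw [KrausAux.choi_conj_out, KrausAux.choi_conj_in]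
    ext ⟨i, a⟩ ⟨j, b⟩
    simp only [Matrix.of_apply]
    rw [hmod]
  have e1 : (1 ⊗ₖ σ⁻¹) * (1 ⊗ₖ σ) = (1 : Matrix (n × n) (n × n) ℂ) := by
    rw [← Matrix.mul_kronecker_mul, Matrix.one_mul, Matrix.nonsing_inv_mul σ hdet,
      Matrix.one_kronecker_one]
  have e2 : ((σ⁻¹)ᵀ ⊗ₖ 1) * (σᵀ ⊗ₖ 1) = (1 : Matrix (n × n) (n × n) ℂ) := by
    rw [← Matrix.mul_kronecker_mul, Matrix.mul_one, ← Matrix.transpose_mul,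
      Matrix.mul_nonsing_inv σ hdet, Matrix.transpose_one, Matrix.one_kronecker_one]
  have e3 : ((σ⁻¹)ᵀ ⊗ₖ 1) * (1 ⊗ₖ σ) = Dm := by
    rw [← Matrix.mul_kronecker_mul, Matrix.mul_one, Matrix.one_mul]
  have hcomm : choi Φ * Dm = Dm * choi Φ := by
    have key : ((σ⁻¹)ᵀ ⊗ₖ 1) * ((1 ⊗ₖ σ) * choi Φ * (1 ⊗ₖ σ⁻¹)) * (1 ⊗ₖ σ)
        = Dm * choi Φ := by
      calc ((σ⁻¹)ᵀ ⊗ₖ 1) * ((1 ⊗ₖ σ) * choi Φ * (1 ⊗ₖ σ⁻¹)) * (1 ⊗ₖ σ)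
          = (((σ⁻¹)ᵀ ⊗ₖ 1) * (1 ⊗ₖ σ)) * choi Φ * ((1 ⊗ₖ σ⁻¹) * (1 ⊗ₖ σ)) := by
            simp only [Matrix.mul_assoc]
        _ = Dm * choi Φ := by rw [e1, e3, Matrix.mul_one]
    have key2 : ((σ⁻¹)ᵀ ⊗ₖ 1) * ((σᵀ ⊗ₖ 1) * choi Φ * ((σ⁻¹)ᵀ ⊗ₖ 1)) * (1 ⊗ₖ σ)
        = choi Φ * Dm := by
      calc ((σ⁻¹)ᵀ ⊗ₖ 1) * ((σᵀ ⊗ₖ 1) * choi Φ * ((σ⁻¹)ᵀ ⊗ₖ 1)) * (1 ⊗ₖ σ)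
          = (((σ⁻¹)ᵀ ⊗ₖ 1) * (σᵀ ⊗ₖ 1)) * choi Φ * (((σ⁻¹)ᵀ ⊗ₖ 1) * (1 ⊗ₖ σ)) := by
            simp only [Matrix.mul_assoc]
        _ = choi Φ * Dm := by rw [e2, e3, Matrix.one_mul]
    rw [← key2, ← hM, key]
  -- spectral decomposition of the Choi matrix
  have hCh : (choi Φ).IsHermitian := hCP.isHermitian
  set V := (hCh.eigenvectorUnitary : Matrix (n × n) (n × n) ℂ) with hVdef
  set lam := hCh.eigenvalues with hlamdef
  have hV1 : V * star V = 1 := Matrix.mem_unitaryGroup_iff.mp hCh.eigenvectorUnitary.2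
  have hV2 : star V * V = 1 := Matrix.mem_unitaryGroup_iff'.mp hCh.eigenvectorUnitary.2
  have hCspec : choi Φ = V * Matrix.diagonal (fun p => (lam p : ℂ)) * star V :=
    hCh.spectral_theorem
  have cancel1 : ∀ X : Matrix (n × n) (n × n) ℂ, star V * (V * X) = X := fun X => by
    rw [← Matrix.mul_assoc, hV2, Matrix.one_mul]
  have cancel2 : ∀ X : Matrix (n × n) (n × n) ℂ, V * (star V * X) = X := fun X => by
    rw [← Matrix.mul_assoc, hV1, Matrix.one_mul]
  set dgs : Matrix (n × n) (n × n) ℂ := Matrix.diagonal (fun p => (Real.sqrt (lam p) : ℂ))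
    with hdgsdef
  set S : Matrix (n × n) (n × n) ℂ := V * dgs * star V with hSdef
  have hdgdg : dgs * dgs = Matrix.diagonal (fun p => (lam p : ℂ)) := by
    rw [hdgsdef, Matrix.diagonal_mul_diagonal]
    exact congrArg Matrix.diagonal (funext fun p => by
      rw [← Complex.ofReal_mul, Real.mul_self_sqrt (hCP.eigenvalues_nonneg p)])
  have hSS : S * S = choi Φ := by
    rw [hSdef, hCspec]
    calc (V * dgs * star V) * (V * dgs * star V)
        = V * (dgs * (star V * (V * (dgs * star V)))) := by simp only [Matrix.mul_assoc]
      _ = V * (dgs * (dgs * star V)) := by rw [cancel1]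
      _ = V * ((dgs * dgs) * star V) := by rw [Matrix.mul_assoc]
      _ = V * Matrix.diagonal (fun p => (lam p : ℂ)) * star V := by
            rw [hdgdg, Matrix.mul_assoc]
  have hstardgs : star dgs = dgs := by
    rw [hdgsdef, Matrix.star_eq_conjTranspose, Matrix.diagonal_conjTranspose]
    exact congrArg Matrix.diagonal (funext fun p => by
      simp [Function.comp, Complex.conj_ofReal])
  have hSH : star S = S := by
    rw [hSdef, Matrix.star_mul, Matrix.star_mul, star_star, hstardgs, Matrix.mul_assoc]
  -- sqrt commutes with Dm
  set D' : Matrix (n × n) (n × n) ℂ := star V * Dm * V with hD'def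
  have hDmV : V * D' * star V = Dm := by
    rw [hD'def]
    calc V * (star V * Dm * V) * star V = V * (star V * (Dm * (V * star V))) := by
          simp only [Matrix.mul_assoc]
      _ = Dm := by rw [hV1, Matrix.mul_one, cancel2]
  have h1 : Matrix.diagonal (fun p => (lam p : ℂ)) * D'
      = D' * Matrix.diagonal (fun p => (lam p : ℂ)) := by
    have hA : star V * ((V * Matrix.diagonal (fun p => (lam p : ℂ)) * star V) * Dm) * V
        = Matrix.diagonal (fun p => (lam p : ℂ)) * D' := by
      rw [hD'def]
      calc star V * ((V * Matrix.diagonal (fun p => (lam p : ℂ)) * star V) * Dm) * V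
          = star V * (V * (Matrix.diagonal (fun p => (lam p : ℂ)) * (star V * (Dm * V)))) := by
            simp only [Matrix.mul_assoc]
        _ = Matrix.diagonal (fun p => (lam p : ℂ)) * (star V * (Dm * V)) := by rw [cancel1]
        _ = Matrix.diagonal (fun p => (lam p : ℂ)) * (star V * Dm * V) := by
            rw [Matrix.mul_assoc]
    have hB : star V * (Dm * (V * Matrix.diagonal (fun p => (lam p : ℂ)) * star V)) * V
        = D' * Matrix.diagonal (fun p => (lam p : ℂ)) := by
      rw [hD'def]
      calc star V * (Dm * (V * Matrix.diagonal (fun p => (lam p : ℂ)) * star V)) * V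
          = star V * (Dm * (V * (Matrix.diagonal (fun p => (lam p : ℂ)) * (star V * V)))) := by
            simp only [Matrix.mul_assoc]
        _ = star V * (Dm * (V * Matrix.diagonal (fun p => (lam p : ℂ)))) := by
            rw [hV2, Matrix.mul_one]
        _ = star V * Dm * V * Matrix.diagonal (fun p => (lam p : ℂ)) := by
            simp only [Matrix.mul_assoc]
    have h := congrArg (fun M => star V * M * V) hcomm
    rw [hCspec] at h
    rw [hA, hB] at h
    exact h
  have h2 := KrausAux.diag_sqrt_commute lam D' h1
  have hSD : S * Dm = Dm * S := by
    rw [hSdef, ← hDmV]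
    calc (V * dgs * star V) * (V * D' * star V)
        = V * (dgs * (star V * (V * (D' * star V)))) := by simp only [Matrix.mul_assoc]
      _ = V * (dgs * (D' * star V)) := by rw [cancel1]
      _ = V * ((dgs * D') * star V) := by simp only [Matrix.mul_assoc]
      _ = V * ((D' * dgs) * star V) := by rw [hdgsdef, h2]
      _ = V * (D' * (dgs * star V)) := by simp only [Matrix.mul_assoc]
      _ = (V * D' * star V) * (V * dgs * star V) := by
          rw [show (V * D' * star V) * (V * dgs * star V)
              = V * (D' * (star V * (V * (dgs * star V)))) from by simp only [Matrix.mul_assoc],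
            cancel1]
  -- spectral decomposition of Dm
  have hDmH : Dm.IsHermitian := hDps.isHermitian
  set Wm := (hDmH.eigenvectorUnitary : Matrix (n × n) (n × n) ℂ) with hWdef
  set dW := hDmH.eigenvalues with hdWdef
  have hW1 : Wm * star Wm = 1 := Matrix.mem_unitaryGroup_iff.mp hDmH.eigenvectorUnitary.2
  have hW2 : star Wm * Wm = 1 := Matrix.mem_unitaryGroup_iff'.mp hDmH.eigenvectorUnitary.2
  have hDmspec : Dm = Wm * Matrix.diagonal (fun p => (dW p : ℂ)) * star Wm :=
    hDmH.spectral_theorem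
  have hDW : Dm * Wm = Wm * Matrix.diagonal (fun p => (dW p : ℂ)) := by
    conv_lhs => rw [hDmspec]
    calc (Wm * Matrix.diagonal (fun p => (dW p : ℂ)) * star Wm) * Wm
        = Wm * Matrix.diagonal (fun p => (dW p : ℂ)) * (star Wm * Wm) := by
          simp only [Matrix.mul_assoc]
      _ = Wm * Matrix.diagonal (fun p => (dW p : ℂ)) := by rw [hW2, Matrix.mul_one]
  have hcol : Dm * (S * Wm) = (S * Wm) * Matrix.diagonal (fun p => (dW p : ℂ)) := by
    rw [← Matrix.mul_assoc, ← hSD, Matrix.mul_assoc, hDW, ← Matrix.mul_assoc]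
  have hTT : (S * Wm) * star (S * Wm) = choi Φ := by
    rw [Matrix.star_mul]
    calc (S * Wm) * (star Wm * star S) = S * ((Wm * star Wm) * star S) := by
          simp only [Matrix.mul_assoc]
      _ = S * star S := by rw [hW1, Matrix.one_mul]
      _ = choi Φ := by rw [hSH, hSS]
  set e : Fin (Fintype.card (n × n)) ≃ n × n := (Fintype.equivFin (n × n)).symm with he
  have hCT : ∀ p q, choi Φ p q = ∑ k, (S * Wm) p (e k) * star ((S * Wm) q (e k)) := by
    intro p q
    rw [← hTT, Matrix.mul_apply]
    simp only [Matrix.star_apply]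
    exact (Equiv.sum_comp e fun r => (S * Wm) p r * star ((S * Wm) q r)).symm
  refine ⟨Fintype.card (n × n), fun k => Matrix.of fun a i => (S * Wm) (i, a) (e k),
    fun k => dW (e k), fun k => hDps.eigenvalues_nonneg _, ?_, ?_, ?_⟩
  · -- modular relation
    intro k
    set R : Matrix n n ℂ := Matrix.of fun a i => (S * Wm) (i, a) (e k) with hRdef
    have hent : ∀ i a, ∑ j, ∑ b, (σ⁻¹ j i * σ a b) * R b j = (dW (e k) : ℂ) * R a i := by
      intro i a
      have h := congrFun (congrFun hcol (i, a)) (e k)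
      rw [Matrix.mul_apply, Matrix.mul_diagonal, Fintype.sum_prod_type] at h
      calc ∑ j, ∑ b, (σ⁻¹ j i * σ a b) * R b j
          = ∑ j, ∑ b, Dm (i, a) (j, b) * (S * Wm) (j, b) (e k) := by
            refine Finset.sum_congr rfl fun j _ => Finset.sum_congr rfl fun b _ => ?_
            rw [hDmdef]
            simp only [Matrix.kroneckerMap_apply, Matrix.transpose_apply, hRdef, Matrix.of_apply]
        _ = (S * Wm) (i, a) (e k) * (dW (e k) : ℂ) := h
        _ = (dW (e k) : ℂ) * R a i := by
            rw [hRdef, mul_comm]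
            rfl
    have hmodk : σ * R * σ⁻¹ = ((dW (e k) : ℝ) : ℂ) • R := by
      ext a i
      rw [Matrix.smul_apply, smul_eq_mul, Matrix.mul_apply]
      calc ∑ j, (σ * R) a j * σ⁻¹ j i
          = ∑ j, ∑ b, (σ⁻¹ j i * σ a b) * R b j := by
            refine Finset.sum_congr rfl fun j _ => ?_
            rw [Matrix.mul_apply, Finset.sum_mul]
            exact Finset.sum_congr rfl fun b _ => by ring
        _ = (dW (e k) : ℂ) * R a i := hent i a
    have hstep : σ * R = (σ * R * σ⁻¹) * σ := by
      rw [Matrix.mul_assoc (σ * R), Matrix.nonsing_inv_mul σ hdet, Matrix.mul_one]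
    rw [hstep, hmodk, Matrix.smul_mul]
  · -- Kraus decomposition
    intro X
    ext a b
    rw [Matrix.sum_apply, KrausAux.choi_expand Φ X a b]
    calc ∑ i, ∑ j, X i j * choi Φ (i, a) (j, b)
        = ∑ i, ∑ j, ∑ k, (S * Wm) (i, a) (e k) * X i j * star ((S * Wm) (j, b) (e k)) := by
          refine Finset.sum_congr rfl fun i _ => Finset.sum_congr rfl fun j _ => ?_
          rw [hCT, Finset.mul_sum]
          exact Finset.sum_congr rfl fun kk _ => by ring
      _ = ∑ i, ∑ k, ∑ j, (S * Wm) (i, a) (e k) * X i j * star ((S * Wm) (j, b) (e k)) := by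
          exact Finset.sum_congr rfl fun i _ => Finset.sum_comm
      _ = ∑ k, ∑ i, ∑ j, (S * Wm) (i, a) (e k) * X i j * star ((S * Wm) (j, b) (e k)) :=
          Finset.sum_comm
      _ = ∑ k, ((Matrix.of fun a i => (S * Wm) (i, a) (e k)) * X *
            ((Matrix.of fun a i => (S * Wm) (i, a) (e k)))ᴴ) a b := by
          have hk : ∀ R : Matrix n n ℂ,
              (R * X * Rᴴ) a b = ∑ j, ∑ i, R a i * X i j * star (R b j) := by
            intro R
            rw [Matrix.mul_apply]
            refine Finset.sum_congr rfl fun j _ => ?_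
            rw [Matrix.mul_apply, Finset.sum_mul]
            exact Finset.sum_congr rfl fun i _ => by
              rw [Matrix.conjTranspose_apply]
          refine Finset.sum_congr rfl fun k _ => ?_
          rw [hk, Finset.sum_comm]
          exact Finset.sum_congr rfl fun j _ => Finset.sum_congr rfl fun i _ => rfl
  · -- unitality
    ext a b
    rw [Matrix.sum_apply]
    calc ∑ k, ((Matrix.of fun a i => (S * Wm) (i, a) (e k)) *
          ((Matrix.of fun a i => (S * Wm) (i, a) (e k)))ᴴ) a b
        = ∑ k, ∑ i, (S * Wm) (i, a) (e k) * star ((S * Wm) (i, b) (e k)) := by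
          refine Finset.sum_congr rfl fun k _ => ?_
          rw [Matrix.mul_apply]
          refine Finset.sum_congr rfl fun i _ => ?_
          rw [Matrix.conjTranspose_apply]
          simp only [Matrix.of_apply, Matrix.star_apply]
      _ = ∑ i, ∑ k, (S * Wm) (i, a) (e k) * star ((S * Wm) (i, b) (e k)) :=
          Finset.sum_comm
      _ = ∑ i : n, choi Φ (i, a) (i, b) := Finset.sum_congr rfl fun i _ => (hCT _ _).symm
      _ = ∑ i : n, Φ (Matrix.single i i 1) a b := rfl
      _ = Φ (∑ i, Matrix.single i i 1) a b := by rw [map_sum, Matrix.sum_apply]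
      _ = Φ 1 a b := by rw [KrausAux.sum_std_diag]
      _ = (1 : Matrix n n ℂ) a b := by rw [hunital]
end

section
/- Let P and Q be probability distributions on a finite set with D(P‖Q) < ∞ and γ = max_x P(x)/Q(x). For any test f : Ω^n → [0,1], if α := 1 − E_{P^{⊗n}}[f] is the Type I error and β := E_{Q^{⊗n}}[f] the Type II error, then β ≥ (1−α) · exp(−n D(P‖Q) − 2√(n γ log(1/(1−α)))). -/
open Matrix BigOperators
open scoped ComplexOrder

-- exp x ≤ 1 + x + x^2/2 for x ≤ 0
lemma aux_exp_quad_neg {x : ℝ} (hx : x ≤ 0) : Real.exp x ≤ 1 + x + x^2/2 := by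
  have key : AntitoneOn (fun x : ℝ => 1 + x + x^2/2 - Real.exp x) (Set.Iic 0) := by
    apply antitoneOn_of_deriv_nonpos (convex_Iic 0)
    · fun_prop
    · fun_prop
    · intro y hy
      simp only [interior_Iic, Set.mem_Iio] at hy
      have h1 : HasDerivAt (fun x : ℝ => 1 + x + x^2/2 - Real.exp x)
          ((1 + 2 * y / 2) - Real.exp y) y := by
        have ha : HasDerivAt (fun x : ℝ => 1 + x + x^2/2) (1 + 2 * y / 2) y := by
          have h0 : HasDerivAt (fun x : ℝ => 1 + x) 1 y := by
            simpa using (hasDerivAt_id y).const_add 1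
          have hc : HasDerivAt (fun x : ℝ => x^2/2) (2 * y / 2) y := by
            simpa using (hasDerivAt_pow 2 y).div_const 2
          exact h0.add hc
        exact ha.sub (Real.hasDerivAt_exp y)
      rw [h1.deriv]
      nlinarith [Real.add_one_le_exp y]
  have := key (Set.mem_Iic.2 hx) (Set.mem_Iic.2 le_rfl) hx
  simp at this
  nlinarith [this]

-- exp x ≤ 1 + x + x^2/2 * exp x for x ≥ 0
lemma aux_exp_quad_pos {x : ℝ} (hx : 0 ≤ x) : Real.exp x ≤ 1 + x + x^2/2 * Real.exp x := by
  have key : MonotoneOn (fun x : ℝ => (1 + x) * Real.exp (-x) + x^2/2) (Set.Ici 0) := by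
    apply monotoneOn_of_deriv_nonneg (convex_Ici 0)
    · fun_prop
    · fun_prop
    · intro y hy
      simp only [interior_Ici, Set.mem_Ioi] at hy
      have h1 : HasDerivAt (fun x : ℝ => (1 + x) * Real.exp (-x) + x^2/2)
          (1 * Real.exp (-y) + (1 + y) * (Real.exp (-y) * (-1)) + (2 * y / 2)) y := by
        have ha : HasDerivAt (fun x : ℝ => (1 + x)) 1 y := by
          simpa using (hasDerivAt_id y).const_add 1
        have hb : HasDerivAt (fun x : ℝ => Real.exp (-x)) (Real.exp (-y) * (-1)) y := by
          have := (Real.hasDerivAt_exp (-y)).comp y (hasDerivAt_neg y)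
          simpa [Function.comp_def] using this
        have hc : HasDerivAt (fun x : ℝ => x^2/2) (2 * y / 2) y := by
          have := (hasDerivAt_pow 2 y).div_const 2
          simpa using this
        exact (ha.mul hb).add hc
      rw [h1.deriv]
      have h2 : Real.exp (-y) ≤ 1 := Real.exp_le_one_iff.2 (by linarith)
      have h3 : 0 < Real.exp (-y) := Real.exp_pos _
      nlinarith
  have h0 : ((1:ℝ) + 0) * Real.exp (-0) + 0^2/2 ≤ (1 + x) * Real.exp (-x) + x^2/2 :=
    key (Set.mem_Ici.2 le_rfl) (Set.mem_Ici.2 hx) hx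
  simp at h0
  have hp : 0 < Real.exp (-x) := Real.exp_pos _
  have hx2 : Real.exp (-x) * Real.exp x = 1 := by
    rw [← Real.exp_add]; simp
  nlinarith [Real.exp_pos x]

-- log t ≤ t / e
lemma aux_log_le {t : ℝ} (ht : 0 < t) : Real.log t ≤ t / Real.exp 1 := by
  have h := Real.log_le_sub_one_of_pos (x := t / Real.exp 1) (by positivity)
  rw [Real.log_div (ne_of_gt ht) (ne_of_gt (Real.exp_pos 1)), Real.log_exp] at h
  linarith

lemma aux_t_log_sq {P Q : ℝ} (hP : 0 < P) (hQ : 0 < Q) (h : P ≤ Q) :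
    P * (Real.log (P/Q))^2 ≤ 4 / (Real.exp 1)^2 * Q := by
  set e := Real.exp 1 with he
  have hepos : 0 < e := Real.exp_pos 1
  have ht : 0 < Q / P := by positivity
  have h1 : Real.log (Q/P) = 2 * Real.log (Real.sqrt (Q/P)) := by
    rw [Real.log_sqrt ht.le]; ring
  have h2 : Real.log (Real.sqrt (Q/P)) ≤ Real.sqrt (Q/P) / e :=
    aux_log_le (Real.sqrt_pos.2 ht)
  have h3 : 0 ≤ Real.log (Q/P) := Real.log_nonneg (by rw [le_div_iff₀ hP]; linarith)
  have h4 : Real.log (P/Q) = - Real.log (Q/P) := by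
    rw [← Real.log_inv]; congr 1; field_simp
  have h5 : Real.sqrt (Q/P) ^ 2 = Q / P := Real.sq_sqrt ht.le
  have hls : 0 ≤ Real.log (Real.sqrt (Q/P)) := by linarith
  have h7 : (Real.sqrt (Q/P)/e)^2 = (Q/P)/e^2 := by rw [div_pow, h5]
  have h6 : (Real.log (Q/P))^2 ≤ 4 * (Q/P) / e^2 := by
    have hp := pow_le_pow_left₀ hls h2 2
    rw [h7] at hp
    have hr : 4 * (Q/P) / e^2 = 4*((Q/P)/e^2) := by ring
    rw [h1, mul_pow, hr]
    norm_num
    linarith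
  rw [h4]
  have : P * (Real.log (Q/P))^2 ≤ P * (4 * (Q/P) / e^2) := by
    apply mul_le_mul_of_nonneg_left h6 hP.le
  calc P * (- Real.log (Q/P))^2 = P * (Real.log (Q/P))^2 := by ring
    _ ≤ P * (4 * (Q/P) / e^2) := this
    _ = 4 / e^2 * Q := by field_simp

lemma aux_log_sq_gamma {γ : ℝ} (hγ : 1 ≤ γ) :
    (Real.log γ)^2 * γ^((1:ℝ)/4) ≤ 64/(9*(Real.exp 1)^2) * γ := by
  set e := Real.exp 1 with he
  have hepos : 0 < e := Real.exp_pos 1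
  have hγ0 : 0 < γ := by linarith
  have h1 : Real.log γ = (8/3 : ℝ) * Real.log (γ ^ ((3:ℝ)/8)) := by
    rw [Real.log_rpow hγ0]; ring
  have h2 : Real.log (γ ^ ((3:ℝ)/8)) ≤ γ ^ ((3:ℝ)/8) / e :=
    aux_log_le (Real.rpow_pos_of_pos hγ0 _)
  have h2' : 0 ≤ Real.log (γ ^ ((3:ℝ)/8)) :=
    Real.log_nonneg (Real.one_le_rpow hγ (by norm_num))
  have h3 : (Real.log γ)^2 ≤ 64/9 * (γ ^ ((3:ℝ)/8))^2 / e^2 := by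
    have hp := pow_le_pow_left₀ h2' h2 2
    rw [div_pow] at hp
    have hr : 64/9 * (γ ^ ((3:ℝ)/8))^2 / e^2 = (8/3:ℝ)^2 * ((γ ^ ((3:ℝ)/8))^2/e^2) := by ring
    rw [h1, mul_pow, hr]
    have : (0:ℝ) < (8/3:ℝ)^2 := by norm_num
    exact mul_le_mul_of_nonneg_left hp (by norm_num)
  have h4 : (γ ^ ((3:ℝ)/8))^2 = γ ^ ((3:ℝ)/4) := by
    rw [← Real.rpow_natCast (γ ^ ((3:ℝ)/8)) 2, ← Real.rpow_mul hγ0.le]; norm_num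
  have h5 : γ ^ ((3:ℝ)/4) * γ^((1:ℝ)/4) = γ := by
    rw [← Real.rpow_add hγ0]; norm_num
  have h6 : (0:ℝ) ≤ γ^((1:ℝ)/4) := (Real.rpow_pos_of_pos hγ0 _).le
  calc (Real.log γ)^2 * γ^((1:ℝ)/4) ≤ (64/9 * (γ ^ ((3:ℝ)/8))^2 / e^2) * γ^((1:ℝ)/4) :=
        mul_le_mul_of_nonneg_right h3 h6
    _ = 64/(9*e^2) * (γ ^ ((3:ℝ)/4) * γ^((1:ℝ)/4)) := by rw [h4]; ring
    _ = 64/(9*e^2) * γ := by rw [h5]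

lemma aux_pointwise {P Q γ l : ℝ} (hP : 0 ≤ P) (hQ : 0 < Q) (hPQ : P ≤ γ * Q)
    (hγ : 1 ≤ γ) (hl : 0 ≤ l) (hl4 : l ≤ 1/4) :
    P * Real.exp (l * Real.log (P/Q)) ≤
      P + l * (P * Real.log (P/Q)) +
        l^2/2 * (4/(Real.exp 1)^2 * Q + 64/(9*(Real.exp 1)^2) * γ * P) := by
  set e := Real.exp 1 with he
  have hepos : 0 < e := Real.exp_pos 1
  rcases eq_or_lt_of_le hP with h0 | hPpos
  · rw [← h0]
    simp
    positivity
  set L := Real.log (P/Q) with hL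
  rcases le_or_gt P Q with hle | hgt
  · -- L ≤ 0 case
    have hLneg : L ≤ 0 := Real.log_nonpos (by positivity) (by rw [div_le_one hQ]; exact hle)
    have h1 : Real.exp (l * L) ≤ 1 + l * L + (l*L)^2/2 :=
      aux_exp_quad_neg (mul_nonpos_of_nonneg_of_nonpos hl hLneg)
    have h2 : P * Real.exp (l*L) ≤ P * (1 + l*L + (l*L)^2/2) :=
      mul_le_mul_of_nonneg_left h1 hP
    have h3 : P * L^2 ≤ 4/e^2 * Q := aux_t_log_sq hPpos hQ hle
    have h7 : l^2 * (P * L^2) ≤ l^2 * (4/e^2 * Q) :=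
      mul_le_mul_of_nonneg_left h3 (sq_nonneg l)
    have h8 : (0:ℝ) ≤ 64/(9*e^2) * γ * P := by positivity
    nlinarith [h7, h8, h2]
  · -- L ≥ 0 case
    have hLpos : 0 ≤ L := Real.log_nonneg (by rw [le_div_iff₀ hQ]; linarith)
    have hLle : L ≤ Real.log γ := by
      apply Real.log_le_log (by positivity)
      rw [div_le_iff₀ hQ]; linarith
    have hx : 0 ≤ l * L := mul_nonneg hl hLpos
    have h1 : Real.exp (l*L) ≤ 1 + l*L + (l*L)^2/2 * Real.exp (l*L) := aux_exp_quad_pos hx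
    have hγ0 : 0 < γ := by linarith
    have h2 : Real.exp (l*L) ≤ γ ^ ((1:ℝ)/4) := by
      rw [Real.rpow_def_of_pos hγ0]
      apply Real.exp_le_exp.2
      nlinarith [Real.log_nonneg hγ]
    have h3 : (l*L)^2/2 * Real.exp (l*L) ≤ l^2/2 * ((Real.log γ)^2 * γ^((1:ℝ)/4)) := by
      have e1 : (l*L)^2 ≤ l^2 * (Real.log γ)^2 := by
        have := pow_le_pow_left₀ hLpos hLle 2
        calc (l*L)^2 = l^2 * L^2 := by ring
          _ ≤ l^2 * (Real.log γ)^2 := mul_le_mul_of_nonneg_left this (sq_nonneg l)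
      have e2 : 0 < Real.exp (l*L) := Real.exp_pos _
      nlinarith [Real.rpow_pos_of_pos hγ0 ((1:ℝ)/4)]
    have h4 := aux_log_sq_gamma hγ
    have h5 : P * Real.exp (l*L) ≤ P * (1 + l*L + l^2/2 * (64/(9*e^2) * γ)) := by
      apply mul_le_mul_of_nonneg_left _ hP
      calc Real.exp (l*L) ≤ 1 + l*L + (l*L)^2/2 * Real.exp (l*L) := h1
        _ ≤ 1 + l*L + l^2/2 * (64/(9*e^2) * γ) := by nlinarith
    have hQ4 : 0 ≤ l^2/2 * (4/e^2 * Q) := by positivity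
    nlinarith

lemma aux_mgf {Ω : Type*} [Fintype Ω] (P Q : Ω → ℝ) (hP : ∀ x, 0 ≤ P x)
    (hQ : ∀ x, 0 < Q x) (hP1 : ∑ x, P x = 1) (hQ1 : ∑ x, Q x = 1)
    (γ : ℝ) (hγ1 : 1 ≤ γ) (hPQ : ∀ x, P x ≤ γ * Q x)
    (l : ℝ) (hl : 0 ≤ l) (hl4 : l ≤ 1/4) :
    ∑ ω, P ω * Real.exp (l * Real.log (P ω / Q ω)) ≤
      1 + l * (∑ ω, P ω * Real.log (P ω / Q ω)) + γ * l^2 := by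
  set e := Real.exp 1 with he
  have hepos : 0 < e := Real.exp_pos 1
  have key : ∀ ω, P ω * Real.exp (l * Real.log (P ω / Q ω)) ≤
      P ω + l * (P ω * Real.log (P ω / Q ω)) +
        l^2/2 * (4/e^2 * Q ω + 64/(9*e^2) * γ * P ω) := fun ω =>
    aux_pointwise (hP ω) (hQ ω) (hPQ ω) hγ1 hl hl4
  calc ∑ ω, P ω * Real.exp (l * Real.log (P ω / Q ω))
      ≤ ∑ ω, (P ω + l * (P ω * Real.log (P ω / Q ω)) +
        l^2/2 * (4/e^2 * Q ω + 64/(9*e^2) * γ * P ω)) := Finset.sum_le_sum fun ω _ => key ω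
    _ = 1 + l * (∑ ω, P ω * Real.log (P ω / Q ω)) + l^2/2 * (4/e^2 + 64/(9*e^2) * γ) := by
        simp only [Finset.sum_add_distrib, ← Finset.mul_sum, ← Finset.sum_mul]
        rw [hP1, hQ1]
        ring
    _ ≤ 1 + l * (∑ ω, P ω * Real.log (P ω / Q ω)) + γ * l^2 := by
        have he2 : (7:ℝ) ≤ e^2 := by nlinarith [Real.exp_one_gt_d9]
        have i1 : 4/e^2 ≤ 4/7 := by
          apply div_le_div_of_nonneg_left (by norm_num) (by norm_num) he2
        have i2 : 64/(9*e^2) ≤ 64/63 := by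
          apply div_le_div_of_nonneg_left (by norm_num) (by norm_num) (by linarith)
        have h9 : 4/e^2 + 64/(9*e^2)*γ ≤ 2*γ := by
          have : 64/(9*e^2)*γ ≤ 64/63*γ := mul_le_mul_of_nonneg_right i2 (by linarith)
          linarith
        have h10 : l^2/2 * (4/e^2 + 64/(9*e^2)*γ) ≤ l^2/2 * (2*γ) :=
          mul_le_mul_of_nonneg_left h9 (by positivity)
        linarith

lemma aux_prod_sum {Ω : Type*} [Fintype Ω] (m : ℕ) (g : Ω → ℝ) :
    ∑ x : Fin m → Ω, ∏ i, g (x i) = (∑ ω, g ω) ^ m := by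
  classical
  rw [← Fintype.piFinset_univ, Finset.sum_prod_piFinset]
  simp [Finset.prod_const]

lemma gibbs_step {X : Type*} [Fintype X] (p ff Λ : X → ℝ)
    (hp : ∀ x, 0 ≤ p x) (hf0 : ∀ x, 0 ≤ ff x) (hf1 : ∀ x, ff x ≤ 1)
    (l c : ℝ) (hc : 0 < c) :
    l * (∑ x, p x * ff x * Λ x) ≤
      (1/c) * (∑ x, p x * Real.exp (l * Λ x)) + (Real.log c - 1) * (∑ x, p x * ff x) := by
  have h1 : ∀ x, p x * ff x * (l * Λ x) ≤
      p x * ff x * (Real.exp (l * Λ x)/c + (Real.log c - 1)) := by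
    intro x
    apply mul_le_mul_of_nonneg_left _ (mul_nonneg (hp x) (hf0 x))
    have h := Real.log_le_sub_one_of_pos (show 0 < Real.exp (l * Λ x) / c by positivity)
    rw [Real.log_div (Real.exp_ne_zero _) hc.ne', Real.log_exp] at h
    linarith
  have h2 : ∀ x, p x * ff x * (Real.exp (l * Λ x)/c) ≤ p x * Real.exp (l * Λ x)/c := by
    intro x
    have hle : p x * ff x ≤ p x := mul_le_of_le_one_right (hp x) (hf1 x)
    have hee : 0 ≤ Real.exp (l * Λ x) / c := by positivity
    calc p x * ff x * (Real.exp (l*Λ x)/c) ≤ p x * (Real.exp (l*Λ x)/c) :=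
          mul_le_mul_of_nonneg_right hle hee
      _ = p x * Real.exp (l*Λ x)/c := by ring
  calc l * (∑ x, p x * ff x * Λ x) = ∑ x, p x * ff x * (l * Λ x) := by
        rw [Finset.mul_sum]; apply Finset.sum_congr rfl; intros; ring
    _ ≤ ∑ x, (p x * Real.exp (l*Λ x)/c + p x * ff x * (Real.log c - 1)) := by
        apply Finset.sum_le_sum; intro x _
        calc p x * ff x * (l * Λ x)
            ≤ p x * ff x * (Real.exp (l * Λ x)/c + (Real.log c - 1)) := h1 x
          _ = p x * ff x * (Real.exp (l*Λ x)/c) + p x * ff x * (Real.log c - 1) := by ring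
          _ ≤ p x * Real.exp (l*Λ x)/c + p x * ff x * (Real.log c - 1) := by linarith [h2 x]
    _ = (1/c) * (∑ x, p x * Real.exp (l * Λ x)) + (Real.log c - 1) * (∑ x, p x * ff x) := by
        rw [Finset.sum_add_distrib, Finset.mul_sum, Finset.mul_sum]
        congr 1 <;> (apply Finset.sum_congr rfl; intros; ring)

lemma jensen_step {X : Type*} [Fintype X] (p q ff Λ : X → ℝ)
    (hp : ∀ x, 0 ≤ p x) (hq : ∀ x, 0 < q x)
    (hf0 : ∀ x, 0 ≤ ff x) (hf1 : ∀ x, ff x ≤ 1)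
    (hΛ : ∀ x, p x ≠ 0 → Real.log (q x / p x) = - Λ x)
    (hSpos : 0 < ∑ x, p x * ff x) :
    (∑ x, p x * ff x) *
      Real.exp (-((∑ x, p x * ff x * Λ x) / (∑ x, p x * ff x))) ≤ ∑ x, q x * ff x := by
  classical
  set S := ∑ x, p x * ff x with hS
  set T : Finset X := Finset.univ.filter (fun x => p x ≠ 0) with hT
  have hmemT : ∀ x ∈ T, p x ≠ 0 := by
    intro x hx; rw [hT, Finset.mem_filter] at hx; exact hx.2
  have hpT : ∀ x ∈ T, 0 < p x := fun x hx => lt_of_le_of_ne (hp x) (Ne.symm (hmemT x hx))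
  have hsumT : ∑ x ∈ T, p x * ff x = S := by
    rw [hS, hT]
    apply Finset.sum_filter_of_ne
    intro x _ hne h0
    apply hne; rw [h0]; ring
  have hET : ∑ x ∈ T, p x * ff x * Λ x = ∑ x, p x * ff x * Λ x := by
    rw [hT]
    apply Finset.sum_filter_of_ne
    intro x _ hne h0
    apply hne; rw [h0]; ring
  set w : X → ℝ := fun x => p x * ff x / S with hw
  have hw0 : ∀ x ∈ T, 0 ≤ w x := fun x _ =>
    div_nonneg (mul_nonneg (hp x) (hf0 x)) hSpos.le
  have hw1 : ∑ x ∈ T, w x = 1 := by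
    rw [hw]; simp only []
    rw [← Finset.sum_div, hsumT, div_self hSpos.ne']
  have hz0 : ∀ x ∈ T, (0:ℝ) ≤ q x / p x := fun x _ => div_nonneg (hq x).le (hp x)
  have amgm := Real.geom_mean_le_arith_mean_weighted T w (fun x => q x / p x) hw0 hw1 hz0
  have hL : ∏ x ∈ T, (q x / p x) ^ (w x) =
      Real.exp (∑ x ∈ T, w x * Real.log (q x / p x)) := by
    rw [Real.exp_sum]
    apply Finset.prod_congr rfl
    intro x hx
    rw [Real.rpow_def_of_pos (div_pos (hq x) (hpT x hx)), mul_comm]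
  have hsum_log : ∑ x ∈ T, w x * Real.log (q x / p x) =
      -((∑ x, p x * ff x * Λ x) / S) := by
    calc ∑ x ∈ T, w x * Real.log (q x / p x)
        = ∑ x ∈ T, -(p x * ff x * Λ x) / S := by
          apply Finset.sum_congr rfl
          intro x hx
          rw [hΛ x (hmemT x hx), hw]
          field_simp
      _ = -((∑ x ∈ T, p x * ff x * Λ x) / S) := by
          rw [← Finset.sum_div, Finset.sum_neg_distrib, neg_div]
      _ = -((∑ x, p x * ff x * Λ x) / S) := by rw [hET]
  have hRHS : ∑ x ∈ T, w x * (q x / p x) ≤ (∑ x, q x * ff x) / S := by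
    have heq : ∀ x ∈ T, w x * (q x / p x) = q x * ff x / S := by
      intro x hx
      have hne := hmemT x hx
      rw [hw]
      field_simp
    rw [Finset.sum_congr rfl heq, ← Finset.sum_div]
    apply (div_le_div_iff_of_pos_right hSpos).2
    apply Finset.sum_le_sum_of_subset_of_nonneg (Finset.filter_subset _ _)
    intro x _ _
    exact mul_nonneg (hq x).le (hf0 x)
  have hfinal : Real.exp (-((∑ x, p x * ff x * Λ x) / S)) ≤ (∑ x, q x * ff x) / S := by
    rw [← hsum_log, ← hL]
    exact le_trans amgm hRHS
  rw [mul_comm]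
  exact (le_div_iff₀ hSpos).1 hfinal

set_option maxHeartbeats 1000000 in
lemma key_lambda {Ω : Type*} [Fintype Ω] (m : ℕ) (P Q : Ω → ℝ)
    (hP : ∀ x, 0 ≤ P x) (hQ : ∀ x, 0 < Q x)
    (hP1 : ∑ x, P x = 1) (hQ1 : ∑ x, Q x = 1)
    (γ : ℝ) (hγ1 : 1 ≤ γ) (hPQ : ∀ x, P x ≤ γ * Q x)
    (f : (Fin m → Ω) → ℝ) (hf0 : ∀ x, 0 ≤ f x) (hf1 : ∀ x, f x ≤ 1)
    (l : ℝ) (hl0 : 0 < l) (hl4 : l ≤ 1/4)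
    (S : ℝ) (hSdef : S = ∑ x : Fin m → Ω, (∏ i, P (x i)) * f x) (hSpos : 0 < S) :
    ∑ x : Fin m → Ω, (∏ i, P (x i)) * f x * (∑ i, Real.log (P (x i) / Q (x i))) ≤
      S * ((m : ℝ) * (∑ ω, P ω * Real.log (P ω / Q ω)) + (m:ℝ) * γ * l
        + (- Real.log S) / l) := by
  classical
  set D := ∑ ω, P ω * Real.log (P ω / Q ω) with hD
  set M := ∑ ω, P ω * Real.exp (l * Real.log (P ω / Q ω)) with hM
  have hMpos : 0 < M := by
    obtain ⟨ω, hω⟩ : ∃ ω, 0 < P ω := by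
      by_contra hcon; push_neg at hcon
      have h := Finset.sum_nonpos (fun ω (_ : ω ∈ Finset.univ) => hcon ω)
      rw [hP1] at h; linarith
    exact Finset.sum_pos' (fun ω _ => mul_nonneg (hP ω) (Real.exp_pos _).le)
      ⟨ω, Finset.mem_univ ω, mul_pos hω (Real.exp_pos _)⟩
  have hMle : M ≤ 1 + l * D + γ * l^2 :=
    aux_mgf P Q hP hQ hP1 hQ1 γ hγ1 hPQ l hl0.le hl4
  have hc : 0 < M ^ m / S := by positivity
  have gibbs := gibbs_step (fun x : Fin m → Ω => ∏ i, P (x i)) f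
    (fun x => ∑ i, Real.log (P (x i)/Q (x i)))
    (fun x => Finset.prod_nonneg fun i _ => hP _) hf0 hf1 l (M^m/S) hc
  beta_reduce at gibbs
  have hfact : ∑ x : Fin m → Ω, (∏ i, P (x i)) *
      Real.exp (l * ∑ i, Real.log (P (x i) / Q (x i))) = M ^ m := by
    have h1 : ∀ x : Fin m → Ω, (∏ i, P (x i)) *
        Real.exp (l * ∑ i, Real.log (P (x i) / Q (x i))) =
        ∏ i, (P (x i) * Real.exp (l * Real.log (P (x i) / Q (x i)))) := by
      intro x
      rw [Finset.prod_mul_distrib, Finset.mul_sum, Real.exp_sum]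
    calc ∑ x : Fin m → Ω, (∏ i, P (x i)) *
          Real.exp (l * ∑ i, Real.log (P (x i) / Q (x i)))
        = ∑ x : Fin m → Ω, ∏ i, (P (x i) * Real.exp (l * Real.log (P (x i) / Q (x i)))) :=
          Finset.sum_congr rfl (fun x _ => h1 x)
      _ = M ^ m := by
          rw [hM]
          exact aux_prod_sum m (fun ω => P ω * Real.exp (l * Real.log (P ω / Q ω)))
  rw [hfact, ← hSdef] at gibbs
  have hsimp : (1/(M^m/S)) * M^m = S := by field_simp
  have hlogc : Real.log (M^m/S) = (m:ℝ) * Real.log M - Real.log S := by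
    rw [Real.log_div (by positivity) hSpos.ne', Real.log_pow]
    try tauto
  have hlogM : Real.log M ≤ l * D + γ * l^2 := by
    have h := Real.log_le_sub_one_of_pos hMpos
    linarith
  have hstep : l * (∑ x : Fin m → Ω, (∏ i, P (x i)) * f x *
      (∑ i, Real.log (P (x i) / Q (x i)))) ≤ S * ((m:ℝ) * Real.log M - Real.log S) := by
    rw [hsimp, hlogc] at gibbs
    nlinarith [gibbs]
  have hmono : S * ((m:ℝ) * Real.log M - Real.log S) ≤
      S * ((m:ℝ)*(l*D + γ*l^2) + (- Real.log S)) := by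
    apply mul_le_mul_of_nonneg_left _ hSpos.le
    have h := mul_le_mul_of_nonneg_left hlogM (Nat.cast_nonneg m)
    linarith
  have hEq : l * (S * ((m:ℝ)*D + (m:ℝ)*γ*l + (-Real.log S)/l)) =
      S*((m:ℝ)*(l*D + γ*l^2) + (-Real.log S)) := by
    have hl' : l ≠ 0 := ne_of_gt hl0
    field_simp
  have hfin := le_trans hstep hmono
  rw [← hEq] at hfin
  exact le_of_mul_le_mul_left hfin hl0
set_option maxHeartbeats 2000000 in
/-- Strong converse bound for classical hypothesis testing via reverse
hypercontractivity: `β ≥ (1-α) exp(-n D(P‖Q) - 2 √(n γ log(1/(1-α))))`. -/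
theorem classical_hypothesis_testing {Ω : Type*} [Fintype Ω] [Nonempty Ω] (m : ℕ)
    (P Q : Ω → ℝ) (hP : ∀ x, 0 ≤ P x) (hQ : ∀ x, 0 < Q x)
    (hP1 : ∑ x, P x = 1) (hQ1 : ∑ x, Q x = 1)
    (γ : ℝ) (hγ : γ = ⨆ x, P x / Q x)
    (f : (Fin m → Ω) → ℝ) (hf : ∀ x, 0 ≤ f x ∧ f x ≤ 1)
    (α β : ℝ)
    (hα : α = 1 - ∑ x : Fin m → Ω, (∏ i, P (x i)) * f x)
    (hβ : β = ∑ x : Fin m → Ω, (∏ i, Q (x i)) * f x) :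
    (1 - α) * Real.exp (-(m * (∑ x, P x * Real.log (P x / Q x)))
      - 2 * Real.sqrt (m * γ * Real.log (1 / (1 - α)))) ≤ β := by
  classical
  have hγ0 : ∀ ω : Ω, P ω / Q ω ≤ γ := by
    intro ω
    rw [hγ]
    exact le_ciSup (f := fun x => P x / Q x) (Set.Finite.bddAbove (Set.finite_range _)) ω
  have hPQ : ∀ ω, P ω ≤ γ * Q ω := by
    intro ω
    have h := hγ0 ω
    rw [div_le_iff₀ (hQ ω)] at h
    linarith
  have hγ1 : 1 ≤ γ := by
    obtain ⟨ω, hω⟩ : ∃ ω, Q ω ≤ P ω := by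
      by_contra hcon
      push_neg at hcon
      have h := Finset.sum_lt_sum_of_nonempty Finset.univ_nonempty
        (fun ω (_ : ω ∈ Finset.univ) => hcon ω)
      rw [hP1, hQ1] at h
      exact lt_irrefl 1 h
    have h1 : (1:ℝ) ≤ P ω / Q ω := (one_le_div (hQ ω)).2 hω
    exact le_trans h1 (hγ0 ω)
  have hγpos : 0 < γ := by linarith
  set D := ∑ x, P x * Real.log (P x / Q x) with hD
  have hD0 : 0 ≤ D := by
    have key : ∀ ω, P ω - Q ω ≤ P ω * Real.log (P ω / Q ω) := by
      intro ω
      rcases eq_or_lt_of_le (hP ω) with h0 | hpos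
      · rw [← h0, zero_mul, zero_sub]
        linarith [(hQ ω).le]
      · have hlog := Real.log_le_sub_one_of_pos (div_pos (hQ ω) hpos)
        have heq : Real.log (P ω / Q ω) = - Real.log (Q ω / P ω) := by
          rw [← Real.log_inv]
          congr 1
          field_simp
        rw [heq]
        have h2 : P ω * (Q ω / P ω) = Q ω := by field_simp
        nlinarith
    calc (0:ℝ) = ∑ ω, (P ω - Q ω) := by rw [Finset.sum_sub_distrib, hP1, hQ1]; ring
      _ ≤ D := Finset.sum_le_sum (fun ω _ => key ω)
  have hℓle : ∀ ω : Ω, Real.log (P ω / Q ω) ≤ Real.log γ := by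
    intro ω
    rcases eq_or_lt_of_le (hP ω) with h0 | hpos
    · rw [← h0, zero_div, Real.log_zero]
      exact Real.log_nonneg hγ1
    · exact Real.log_le_log (div_pos hpos (hQ ω)) (hγ0 ω)
  set S := ∑ x : Fin m → Ω, (∏ i, P (x i)) * f x with hSdef
  have h1α : 1 - α = S := by rw [hα]; ring
  have hq0 : ∀ x : Fin m → Ω, (0:ℝ) < ∏ i, Q (x i) :=
    fun x => Finset.prod_pos fun i _ => hQ _
  have hp0 : ∀ x : Fin m → Ω, (0:ℝ) ≤ ∏ i, P (x i) :=
    fun x => Finset.prod_nonneg fun i _ => hP _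
  have hβ0 : 0 ≤ β := by
    rw [hβ]
    exact Finset.sum_nonneg fun x _ => mul_nonneg (hq0 x).le (hf x).1
  have hS0 : 0 ≤ S := Finset.sum_nonneg fun x _ => mul_nonneg (hp0 x) (hf x).1
  rcases eq_or_lt_of_le hS0 with hSz | hSpos
  · rw [h1α, ← hSz, zero_mul]
    exact hβ0
  have hS1 : S ≤ 1 := by
    calc S ≤ ∑ x : Fin m → Ω, ∏ i, P (x i) :=
          Finset.sum_le_sum fun x _ => mul_le_of_le_one_right (hp0 x) (hf x).2
      _ = 1 := by rw [aux_prod_sum m P, hP1, one_pow]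
  rw [h1α, hβ]
  set L := Real.log (1/S) with hLdef
  have hLeq : L = - Real.log S := by rw [hLdef, one_div, Real.log_inv]
  have hL0 : 0 ≤ L := by
    rw [hLeq]
    have h := Real.log_nonpos hS0 hS1
    linarith
  set E := ∑ x : Fin m → Ω, (∏ i, P (x i)) * f x * (∑ i, Real.log (P (x i) / Q (x i)))
    with hEdef
  have key : ∀ l : ℝ, 0 < l → l ≤ 1/4 →
      E ≤ S * ((m : ℝ) * D + (m:ℝ) * γ * l + L / l) := by
    intro l h1 h2
    have h := key_lambda m P Q hP hQ hP1 hQ1 γ hγ1 hPQ f (fun x => (hf x).1)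
      (fun x => (hf x).2) l h1 h2 S hSdef hSpos
    rw [hLeq]
    exact h
  have hEbound : E ≤ S * ((m:ℝ) * D + 2 * Real.sqrt ((m:ℝ) * γ * L)) := by
    rcases Nat.eq_zero_or_pos m with hm | hm
    · subst hm
      have hE0 : E = 0 := by
        rw [hEdef]
        apply Finset.sum_eq_zero
        intro x _
        simp
      rw [hE0]
      have hz : ((0:ℕ):ℝ) * γ * L = 0 := by push_cast; ring
      rw [hz, Real.sqrt_zero]
      push_cast
      simp
    · have hm1 : (1:ℝ) ≤ (m:ℝ) := by exact_mod_cast hm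
      have hmγ : 0 < (m:ℝ) * γ := mul_pos (by linarith) hγpos
      rcases eq_or_lt_of_le hL0 with hLz | hLpos
      · have hsq : Real.sqrt ((m:ℝ)*γ*L) = 0 := by rw [← hLz, mul_zero, Real.sqrt_zero]
        rw [hsq]
        have hE0 : E ≤ S * ((m:ℝ) * D) := by
          by_contra hcon
          push_neg at hcon
          set ε := E - S * ((m:ℝ)*D) with hε
          have hεpos : 0 < ε := by linarith
          have hdenpos : 0 < 2 * S * ((m:ℝ)*γ) := by positivity
          set l := min (ε / (2 * S * ((m:ℝ)*γ))) (1/4) with hl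
          have hl0 : 0 < l := lt_min (div_pos hεpos hdenpos) (by norm_num)
          have h := key l hl0 (min_le_right _ _)
          rw [← hLz, zero_div] at h
          have hb : S * ((m:ℝ)*γ) * l ≤ ε / 2 := by
            have h1 : l ≤ ε / (2 * S * ((m:ℝ)*γ)) := min_le_left _ _
            have h2 : S * ((m:ℝ)*γ) * l ≤ S * ((m:ℝ)*γ) * (ε / (2 * S * ((m:ℝ)*γ))) :=
              mul_le_mul_of_nonneg_left h1 (by positivity)
            have h3 : S * ((m:ℝ)*γ) * (ε / (2 * S * ((m:ℝ)*γ))) = ε / 2 := by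
              field_simp
            linarith
          nlinarith [h, hb]
        nlinarith [hE0]
      · set lstar := Real.sqrt L / Real.sqrt ((m:ℝ)*γ) with hls
        have hsl : 0 < Real.sqrt L := Real.sqrt_pos.2 hLpos
        have hsm : 0 < Real.sqrt ((m:ℝ)*γ) := Real.sqrt_pos.2 hmγ
        have hlpos : 0 < lstar := div_pos hsl hsm
        have hWprod : Real.sqrt ((m:ℝ)*γ*L) = Real.sqrt ((m:ℝ)*γ) * Real.sqrt L :=
          Real.sqrt_mul hmγ.le L
        rcases le_or_gt lstar (1/4) with h14 | h14
        · have h := key lstar hlpos h14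
          have e1 : (m:ℝ)*γ*lstar = Real.sqrt ((m:ℝ)*γ) * Real.sqrt L := by
            rw [hls]
            rw [show (m:ℝ)*γ = Real.sqrt ((m:ℝ)*γ) * Real.sqrt ((m:ℝ)*γ) from
              (Real.mul_self_sqrt hmγ.le).symm]
            field_simp
            simp only [Real.sqrt_sq hsm.le, Real.sqrt_mul_self hsm.le]
          have e2 : L / lstar = Real.sqrt ((m:ℝ)*γ) * Real.sqrt L := by
            rw [hls, div_div_eq_mul_div]
            rw [show L * Real.sqrt ((m:ℝ)*γ) / Real.sqrt L =
              Real.sqrt ((m:ℝ)*γ) * (L / Real.sqrt L) from by ring]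
            rw [Real.div_sqrt]
          rw [e1, e2] at h
          rw [hWprod]
          calc E ≤ S * ((m:ℝ)*D + Real.sqrt ((m:ℝ)*γ) * Real.sqrt L +
                Real.sqrt ((m:ℝ)*γ) * Real.sqrt L) := h
            _ = S * ((m:ℝ)*D + 2*(Real.sqrt ((m:ℝ)*γ) * Real.sqrt L)) := by ring
        · have hLgt : (m:ℝ)*γ/16 < L := by
            have h4 : Real.sqrt ((m:ℝ)*γ) < 4 * Real.sqrt L := by
              rw [hls, lt_div_iff₀ hsm] at h14
              linarith
            have h5 := sq_lt_sq' (by nlinarith : -(4*Real.sqrt L) < Real.sqrt ((m:ℝ)*γ)) h4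
            nlinarith [h5, Real.sq_sqrt hmγ.le, Real.sq_sqrt hL0]
          have hWge : (m:ℝ)*γ/4 ≤ Real.sqrt ((m:ℝ)*γ*L) := by
            rw [show (m:ℝ)*γ/4 = Real.sqrt (((m:ℝ)*γ/4)^2) from
              (Real.sqrt_sq (by positivity)).symm]
            apply Real.sqrt_le_sqrt
            nlinarith
          have hEle : E ≤ S * ((m:ℝ) * Real.log γ) := by
            rw [hEdef]
            have hstep : ∀ x : Fin m → Ω, (∏ i, P (x i)) * f x *
                (∑ i, Real.log (P (x i)/Q (x i))) ≤
                (∏ i, P (x i)) * f x * ((m:ℝ) * Real.log γ) := by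
              intro x
              apply mul_le_mul_of_nonneg_left _ (mul_nonneg (hp0 x) (hf x).1)
              calc ∑ i, Real.log (P (x i)/Q (x i)) ≤ ∑ _i : Fin m, Real.log γ :=
                    Finset.sum_le_sum fun i _ => hℓle (x i)
                _ = (m:ℝ) * Real.log γ := by
                    simp [Finset.sum_const, Finset.card_univ, nsmul_eq_mul]
            calc ∑ x : Fin m → Ω, (∏ i, P (x i)) * f x * (∑ i, Real.log (P (x i)/Q (x i)))
                ≤ ∑ x : Fin m → Ω, (∏ i, P (x i)) * f x * ((m:ℝ)*Real.log γ) :=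
                  Finset.sum_le_sum fun x _ => hstep x
              _ = (∑ x : Fin m → Ω, (∏ i, P (x i)) * f x) * ((m:ℝ)*Real.log γ) := by
                  rw [← Finset.sum_mul]
              _ = S * ((m:ℝ)*Real.log γ) := by rw [← hSdef]
          have hfinal : S * ((m:ℝ)*Real.log γ) ≤
              S * ((m:ℝ)*D + 2*Real.sqrt ((m:ℝ)*γ*L)) := by
            apply mul_le_mul_of_nonneg_left _ hS0
            have hlogγ : Real.log γ ≤ γ/2 := by
              have h1 := aux_log_le hγpos
              have h2 : γ / Real.exp 1 ≤ γ/2 := by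
                apply div_le_div_of_nonneg_left (by linarith) (by norm_num)
                nlinarith [Real.exp_one_gt_d9]
              linarith
            have h3 : (m:ℝ) * Real.log γ ≤ (m:ℝ) * (γ/2) :=
              mul_le_mul_of_nonneg_left hlogγ (by linarith)
            have h4 : 0 ≤ (m:ℝ) * D := mul_nonneg (by linarith) hD0
            nlinarith [hWge]
          linarith [hEle, hfinal]
  have jens := jensen_step (fun x : Fin m → Ω => ∏ i, P (x i)) (fun x => ∏ i, Q (x i)) f
    (fun x => ∑ i, Real.log (P (x i) / Q (x i))) hp0 hq0 (fun x => (hf x).1)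
    (fun x => (hf x).2) ?hΛ ?hpos
  case hΛ =>
    intro x hpx
    beta_reduce
    have hPne : ∀ i, P (x i) ≠ 0 := by
      intro i h0
      exact hpx (Finset.prod_eq_zero (Finset.mem_univ i) h0)
    have hqne : (∏ i, Q (x i)) ≠ 0 := (hq0 x).ne'
    rw [Real.log_div hqne hpx, Real.log_prod (fun i _ => ((hQ (x i)).ne')),
      Real.log_prod (fun i _ => hPne i)]
    rw [show (∑ i, Real.log (P (x i) / Q (x i))) =
      ∑ i, (Real.log (P (x i)) - Real.log (Q (x i))) from
      Finset.sum_congr rfl fun i _ => Real.log_div (hPne i) ((hQ (x i)).ne')]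
    rw [Finset.sum_sub_distrib]
    ring
  case hpos => exact hSdef ▸ hSpos
  beta_reduce at jens
  rw [← hSdef, ← hEdef] at jens
  calc S * Real.exp (-((m:ℝ)*D) - 2*Real.sqrt ((m:ℝ)*γ*L)) ≤ S * Real.exp (-(E/S)) := by
        apply mul_le_mul_of_nonneg_left _ hS0
        apply Real.exp_le_exp.2
        have hdiv : E / S ≤ (m:ℝ)*D + 2*Real.sqrt ((m:ℝ)*γ*L) := by
          rw [div_le_iff₀ hSpos]
          nlinarith [hEbound]
        linarith
    _ ≤ ∑ x : Fin m → Ω, (∏ i, Q (x i)) * f x := jens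
end

section
/- Let X be a positive semi-definite 2×2 block matrix X = [[A, C],[C†, B]] with blocks in B(H'), and let ρ be a positive definite density matrix on H'. Then ‖C‖_{2,ρ} ≤ ‖A‖_{2,ρ}^{1/2} ‖B‖_{2,ρ}^{1/2}, and consequently the 2×2 matrix M = [[‖A‖_{2,ρ}, ‖C‖_{2,ρ}],[‖C†‖_{2,ρ}, ‖B‖_{2,ρ}]] is positive semi-definite. -/
open Matrix BigOperators
open scoped ComplexOrder

/-- The weighted 2-norm `‖Y‖_{2,ρ} = ‖ρ^{1/4} Y ρ^{1/4}‖_2`. -/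
noncomputable def wnorm2 {n : Type*} [Fintype n] [DecidableEq n]
    (ρ : Matrix n n ℂ) (Y : Matrix n n ℂ) : ℝ :=
  Real.sqrt ((((mpow ρ (1/4) * Y * mpow ρ (1/4))ᴴ *
    (mpow ρ (1/4) * Y * mpow ρ (1/4))).trace).re)


lemma trace_ct_mul {m n : Type*} [Fintype m] [Fintype n] (P Q : Matrix m n ℂ) :
    (Pᴴ * Q).trace = ∑ p : m × n, (starRingEnd ℂ) (P p.1 p.2) * Q p.1 p.2 := by
  rw [Matrix.trace, Fintype.sum_prod_type_right]
  simp [Matrix.diag, Matrix.mul_apply, Matrix.conjTranspose_apply]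

lemma trace_ct_mul_self_re {m n : Type*} [Fintype m] [Fintype n] (P : Matrix m n ℂ) :
    (Pᴴ * P).trace.re = ∑ p : m × n, ‖P p.1 p.2‖ ^ 2 := by
  rw [trace_ct_mul, Complex.re_sum]
  refine Finset.sum_congr rfl fun p _ => ?_
  rw [← Complex.normSq_eq_conj_mul_self]
  rw [Complex.normSq_eq_norm_sq]
  simp [← Complex.ofReal_pow]

lemma frob_cs {m n : Type*} [Fintype m] [Fintype n] (P Q : Matrix m n ℂ) :
    ‖(Pᴴ * Q).trace‖ ≤
      Real.sqrt ((Pᴴ * P).trace.re) * Real.sqrt ((Qᴴ * Q).trace.re) := by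
  let x : EuclideanSpace ℂ (m × n) := WithLp.toLp 2 (fun p : m × n => P p.1 p.2)
  let y : EuclideanSpace ℂ (m × n) := WithLp.toLp 2 (fun p : m × n => Q p.1 p.2)
  have h1 : (Pᴴ * Q).trace = inner (𝕜 := ℂ) x y := by
    rw [trace_ct_mul, PiLp.inner_apply]; simp [x, y, RCLike.inner_apply, mul_comm]
  have h2 : Real.sqrt ((Pᴴ * P).trace.re) = ‖x‖ := by
    rw [trace_ct_mul_self_re, EuclideanSpace.norm_eq]
  have h3 : Real.sqrt ((Qᴴ * Q).trace.re) = ‖y‖ := by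
    rw [trace_ct_mul_self_re, EuclideanSpace.norm_eq]
  rw [h1, h2, h3]
  exact norm_inner_le_norm x y

lemma trace_ct_mul_self_re_nonneg {m n : Type*} [Fintype m] [Fintype n] (P : Matrix m n ℂ) :
    0 ≤ (Pᴴ * P).trace.re := by
  rw [trace_ct_mul_self_re]; positivity

lemma frob_cs_re {m n : Type*} [Fintype m] [Fintype n] (P Q : Matrix m n ℂ) :
    (Pᴴ * Q).trace.re ≤
      Real.sqrt ((Pᴴ * P).trace.re) * Real.sqrt ((Qᴴ * Q).trace.re) :=
  le_trans (Complex.re_le_norm _) (frob_cs P Q)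

lemma key_ineq {m n : Type*} [Fintype m] [Fintype n] [DecidableEq n] (T₀ T₁ : Matrix m n ℂ) :
    (((T₀ᴴ * T₁)ᴴ) * (T₀ᴴ * T₁)).trace.re ≤
      Real.sqrt ((((T₀ᴴ * T₀)ᴴ) * (T₀ᴴ * T₀)).trace.re) *
        Real.sqrt ((((T₁ᴴ * T₁)ᴴ) * (T₁ᴴ * T₁)).trace.re) := by
  set C : Matrix n n ℂ := T₀ᴴ * T₁ with hCdef
  set A : Matrix n n ℂ := T₀ᴴ * T₀ with hAdef
  set B : Matrix n n ℂ := T₁ᴴ * T₁ with hBdef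
  set a : ℝ := Real.sqrt ((Aᴴ * A).trace.re) with hadef
  set b : ℝ := Real.sqrt ((Bᴴ * B).trace.re) with hbdef
  have ha0 : 0 ≤ a := Real.sqrt_nonneg _
  have hb0 : 0 ≤ b := Real.sqrt_nonneg _
  have hH : (Cᴴ * C).PosSemidef := Matrix.posSemidef_conjTranspose_mul_self C
  have hherm : (Cᴴ * C).IsHermitian := hH.1
  set U : Matrix n n ℂ := (hherm.eigenvectorUnitary : Matrix n n ℂ) with hUdef
  set ev : n → ℝ := hherm.eigenvalues with hevdef
  have hev : ∀ i, 0 ≤ ev i := hH.eigenvalues_nonneg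
  have hUU : star U * U = 1 := Unitary.coe_star_mul_self hherm.eigenvectorUnitary
  set d : (n → ℝ) → Matrix n n ℂ :=
    fun f => U * Matrix.diagonal (fun i => (f i : ℂ)) * star U with hddef
  have hmul : ∀ f g, d f * d g = d (fun i => f i * g i) := by
    intro f g
    simp only [hddef]
    simp only [Matrix.mul_assoc]
    rw [← Matrix.mul_assoc (star U) U, hUU, Matrix.one_mul,
      ← Matrix.mul_assoc (Matrix.diagonal _) (Matrix.diagonal _),
      Matrix.diagonal_mul_diagonal]
    norm_cast
  have htr : ∀ f, (d f).trace = ((∑ i, f i : ℝ) : ℂ) := by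
    intro f
    rw [hddef]
    simp only
    rw [Matrix.trace_mul_comm, ← Matrix.mul_assoc, hUU, Matrix.one_mul,
      Matrix.trace_diagonal]
    norm_cast
  have hconj : ∀ f, (d f)ᴴ = d f := by
    intro f
    simp only [hddef]
    rw [Matrix.conjTranspose_mul, Matrix.conjTranspose_mul, Matrix.diagonal_conjTranspose]
    simp [Matrix.star_eq_conjTranspose, Matrix.mul_assoc, Pi.star_def, Complex.conj_ofReal]
    
  have hspec : Cᴴ * C = d ev := by
    have h := hherm.spectral_theorem
    rw [hddef]
    simpa [Function.comp_def] using h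
  -- the functions
  set s : n → ℝ := fun i => Real.sqrt (Real.sqrt (ev i)) with hsdef
  set g : n → ℝ := fun i => if ev i = 0 then 0 else (s i)⁻¹ with hgdef
  have hs0 : ∀ i, 0 ≤ s i := fun i => Real.sqrt_nonneg _
  have hss : ∀ i, s i * s i = Real.sqrt (ev i) := fun i => Real.mul_self_sqrt (Real.sqrt_nonneg _)
  have hsqsq : ∀ i, Real.sqrt (ev i) * Real.sqrt (ev i) = ev i :=
    fun i => Real.mul_self_sqrt (hev i)
  have hgev : ∀ i, g i * ev i * s i = ev i := by
    intro i
    by_cases h : ev i = 0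
    · simp [hgdef, h]
    · have hspos : 0 < s i := by
        rw [hsdef]
        have : 0 < ev i := lt_of_le_of_ne (hev i) (Ne.symm h)
        positivity
      rw [hgdef]
      simp only [h, if_false]
      field_simp
  have hggev : ∀ i, g i * g i * ev i = Real.sqrt (ev i) := by
    intro i
    by_cases h : ev i = 0
    · simp [hgdef, h, Real.sqrt_eq_zero', h.le, h]
    · have hspos : 0 < s i := by
        rw [hsdef]
        have : 0 < ev i := lt_of_le_of_ne (hev i) (Ne.symm h)
        positivity
      rw [hgdef]
      simp only [h, if_false]
      rw [← hsqsq i, ← hss i]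
      field_simp
      rw [show s i ^ 4 = (s i ^ 2) ^ 2 by ring, Real.sqrt_sq (by positivity)]
  set x : ℝ := ∑ i, ev i with hxdef
  have hx0 : 0 ≤ x := Finset.sum_nonneg fun i _ => hev i
  have htrH : (Cᴴ * C).trace.re = x := by rw [hspec, htr]; simp [hxdef]
  -- matrices
  set F : Matrix n n ℂ := d g with hFdef
  set N : Matrix n n ℂ := d s with hNdef
  set M : Matrix n n ℂ := C * F with hMdef
  -- step A : Mᴴ * C * N = d ev
  have hMCN : Mᴴ * C * N = d ev := by
    rw [hMdef, Matrix.conjTranspose_mul, hconj, Matrix.mul_assoc F Cᴴ C, hspec,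
      hFdef, hNdef, hmul, hmul]
    exact congrArg d (funext hgev)
  have hAherm : Aᴴ = A := by rw [hAdef, Matrix.conjTranspose_mul, Matrix.conjTranspose_conjTranspose]
  have hBherm : Bᴴ = B := by rw [hBdef, Matrix.conjTranspose_mul, Matrix.conjTranspose_conjTranspose]
  set rA : ℝ := ((T₀ * M)ᴴ * (T₀ * M)).trace.re with hrAdef
  set rB : ℝ := ((T₁ * N)ᴴ * (T₁ * N)).trace.re with hrBdef
  have hrA0 : 0 ≤ rA := trace_ct_mul_self_re_nonneg _
  have hrB0 : 0 ≤ rB := trace_ct_mul_self_re_nonneg _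
  have hmain : x ≤ Real.sqrt rA * Real.sqrt rB := by
    have h := frob_cs (T₀ * M) (T₁ * N)
    have he : (T₀ * M)ᴴ * (T₁ * N) = d ev := by
      rw [Matrix.conjTranspose_mul, Matrix.mul_assoc Mᴴ T₀ᴴ (T₁ * N),
        ← Matrix.mul_assoc T₀ᴴ T₁ N, ← hCdef, ← Matrix.mul_assoc Mᴴ C N, hMCN]
    rw [he, htr] at h
    have h' : ‖((x : ℝ) : ℂ)‖ ≤ Real.sqrt rA * Real.sqrt rB := by
      rw [hxdef]; exact h
    rwa [Complex.norm_real, Real.norm_eq_abs, abs_of_nonneg hx0] at h'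
  have hAe : (T₀ * M)ᴴ * (T₀ * M) = Mᴴ * A * M := by
    rw [Matrix.conjTranspose_mul, Matrix.mul_assoc Mᴴ T₀ᴴ (T₀ * M),
      ← Matrix.mul_assoc T₀ᴴ T₀ M, ← hAdef, ← Matrix.mul_assoc Mᴴ A M]
  have hBe : (T₁ * N)ᴴ * (T₁ * N) = Nᴴ * B * N := by
    rw [Matrix.conjTranspose_mul, Matrix.mul_assoc Nᴴ T₁ᴴ (T₁ * N),
      ← Matrix.mul_assoc T₁ᴴ T₁ N, ← hBdef, ← Matrix.mul_assoc Nᴴ B N]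
  have hMM : Mᴴ * M = d (fun i => Real.sqrt (ev i)) := by
    rw [hMdef, Matrix.conjTranspose_mul, hconj, Matrix.mul_assoc (d g) Cᴴ (C * (d g)),
      ← Matrix.mul_assoc Cᴴ C (d g), hspec, ← Matrix.mul_assoc (d g) (d ev) (d g),
      hmul, hmul]
    refine congrArg d (funext fun i => ?_)
    rw [mul_right_comm]
    exact hggev i
  have hNN : N * N = d (fun i => Real.sqrt (ev i)) := by
    rw [hNdef, hmul]
    exact congrArg d (funext hss)
  have hPP2 : ((M * Mᴴ)ᴴ * (M * Mᴴ)).trace = (x : ℂ) := by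
    rw [Matrix.conjTranspose_mul, Matrix.conjTranspose_conjTranspose,
      Matrix.mul_assoc M Mᴴ (M * Mᴴ), Matrix.trace_mul_comm M (Mᴴ * (M * Mᴴ)),
      ← Matrix.mul_assoc Mᴴ M Mᴴ, Matrix.mul_assoc (Mᴴ * M) Mᴴ M, hMM, hmul, htr]
    norm_cast
    rw [hxdef]
    exact Finset.sum_congr rfl fun i _ => hsqsq i
  have hQQ2 : ((N * N)ᴴ * (N * N)).trace = (x : ℂ) := by
    rw [hNN, hconj, hmul, htr]
    norm_cast
    rw [hxdef]
    exact Finset.sum_congr rfl fun i _ => hsqsq i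
  have htrA : ((T₀ * M)ᴴ * (T₀ * M)).trace = (Aᴴ * (M * Mᴴ)).trace := by
    rw [hAe, Matrix.trace_mul_comm (Mᴴ * A) M, ← Matrix.mul_assoc M Mᴴ A,
      Matrix.trace_mul_comm (M * Mᴴ) A, hAherm]
  have htrB : ((T₁ * N)ᴴ * (T₁ * N)).trace = (Bᴴ * (N * N)).trace := by
    rw [hBe, hconj, Matrix.trace_mul_comm (N * B) N, ← Matrix.mul_assoc N N B,
      Matrix.trace_mul_comm (N * N) B, hBherm]
  have hrAb : rA ≤ a * Real.sqrt x := by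
    have h2 := frob_cs_re A (M * Mᴴ)
    rw [hPP2] at h2
    simp only [Complex.ofReal_re] at h2
    calc rA = (Aᴴ * (M * Mᴴ)).trace.re := by rw [hrAdef, htrA]
      _ ≤ a * Real.sqrt x := h2
  have hrBb : rB ≤ b * Real.sqrt x := by
    have h2 := frob_cs_re B (N * N)
    rw [hQQ2] at h2
    simp only [Complex.ofReal_re] at h2
    calc rB = (Bᴴ * (N * N)).trace.re := by rw [hrBdef, htrB]
      _ ≤ b * Real.sqrt x := h2
  rw [show ((Cᴴ * C).trace.re) = x from htrH]
  clear_value M N F rA rB x g s d ev U a b A B C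
  have h5 : x ≤ Real.sqrt (a * Real.sqrt x) * Real.sqrt (b * Real.sqrt x) :=
    hmain.trans (mul_le_mul (Real.sqrt_le_sqrt hrAb) (Real.sqrt_le_sqrt hrBb)
      (Real.sqrt_nonneg _) (Real.sqrt_nonneg _))
  have h6 : Real.sqrt (a * Real.sqrt x) * Real.sqrt (b * Real.sqrt x)
      = Real.sqrt (a * b * x) := by
    rw [← Real.sqrt_mul (by positivity)]
    congr 1
    rw [show a * Real.sqrt x * (b * Real.sqrt x) = a * b * (Real.sqrt x * Real.sqrt x) by ring,
      Real.mul_self_sqrt hx0]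
  rcases eq_or_lt_of_le hx0 with h | h
  · rw [← h]; positivity
  · have h7 : x ≤ Real.sqrt (a * b * x) := h6 ▸ h5
    have h8 := Real.sq_sqrt (show (0:ℝ) ≤ a * b * x by positivity)
    nlinarith [h7, h, Real.sqrt_nonneg (a * b * x)]

lemma matFun_conjTranspose {n : Type*} [Fintype n] [DecidableEq n]
    (A : Matrix n n ℂ) (f : ℝ → ℝ) : (matFun A f)ᴴ = matFun A f := by
  unfold matFun
  split_ifs with hA
  · rw [Matrix.conjTranspose_mul, Matrix.conjTranspose_mul, Matrix.diagonal_conjTranspose]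
    simp [Matrix.star_eq_conjTranspose, Matrix.mul_assoc, Pi.star_def, Complex.conj_ofReal]
  · simp

lemma wnorm2_nonneg {n : Type*} [Fintype n] [DecidableEq n]
    (ρ Y : Matrix n n ℂ) : 0 ≤ wnorm2 ρ Y := Real.sqrt_nonneg _


lemma two_by_two_psd (a b c : ℝ) (ha : 0 ≤ a) (hb : 0 ≤ b) (hc : 0 ≤ c)
    (h : c ≤ Real.sqrt a * Real.sqrt b) : (!![a, c; c, b]).PosSemidef := by
  rw [Matrix.posSemidef_iff_dotProduct_mulVec]
  constructor
  · ext i j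
    fin_cases i <;> fin_cases j <;> simp [Matrix.conjTranspose_apply]
  · intro v
    have hv2 : star v = v := by funext i; simp
    rw [hv2]
    have hexp : v ⬝ᵥ (!![a, c; c, b]) *ᵥ v
        = a * (v 0 * v 0) + c * (v 0 * v 1) + c * (v 1 * v 0) + b * (v 1 * v 1) := by
      simp [dotProduct, Matrix.mulVec, Fin.sum_univ_two]
      ring
    rw [hexp]
    rcases le_or_gt 0 (v 0 * v 1) with hv | hv
    · nlinarith [mul_nonneg hc hv, mul_nonneg ha (mul_self_nonneg (v 0)),
        mul_nonneg hb (mul_self_nonneg (v 1))]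
    · have hprod : c * (v 0 * v 1) ≥ (Real.sqrt a * Real.sqrt b) * (v 0 * v 1) :=
        mul_le_mul_of_nonpos_right h hv.le
      nlinarith [hprod, sq_nonneg (Real.sqrt a * v 0 + Real.sqrt b * v 1),
        Real.sq_sqrt ha, Real.sq_sqrt hb]

/-- For a positive semi-definite `2×2` block matrix `X = [[A, C],[C†, B]]` and a
positive definite density matrix `ρ`, `‖C‖_{2,ρ} ≤ ‖A‖_{2,ρ}^{1/2} ‖B‖_{2,ρ}^{1/2}`,
and the `2×2` real matrix of weighted norms is positive semi-definite. -/
theorem block_norm_matrix_psd {n : Type*} [Fintype n] [DecidableEq n]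
    (ρ : Matrix n n ℂ) (hρ : ρ.PosDef) (hρ1 : ρ.trace = 1)
    (X : Matrix (Fin 2 × n) (Fin 2 × n) ℂ) (hX : X.PosSemidef)
    (A B C : Matrix n n ℂ)
    (hA : A = Matrix.of fun i j => X (0, i) (0, j))
    (hB : B = Matrix.of fun i j => X (1, i) (1, j))
    (hC : C = Matrix.of fun i j => X (0, i) (1, j)) :
    wnorm2 ρ C ≤ Real.sqrt (wnorm2 ρ A) * Real.sqrt (wnorm2 ρ B) ∧
    (!![wnorm2 ρ A, wnorm2 ρ C; wnorm2 ρ (Cᴴ), wnorm2 ρ B]).PosSemidef := by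
  have hσ : (mpow ρ (1/4 : ℝ))ᴴ = mpow ρ (1/4 : ℝ) := matFun_conjTranspose ρ _
  obtain ⟨S, hS⟩ : ∃ S : Matrix (Fin 2 × n) (Fin 2 × n) ℂ, X = Sᴴ * S := by
    obtain ⟨S, hS, -, hSS⟩ := (open scoped MatrixOrder in
      CFC.exists_sqrt_of_isSelfAdjoint_of_quasispectrumRestricts (a := X) hX.isHermitian
        (QuasispectrumRestricts.nnreal_of_nonneg hX.nonneg))
    exact ⟨S, by rw [← Matrix.star_eq_conjTranspose, hS.star_eq]; exact hSS.symm⟩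
  set S₀ : Matrix (Fin 2 × n) n ℂ := S.submatrix id (fun j => ((0 : Fin 2), j)) with hS0def
  set S₁ : Matrix (Fin 2 × n) n ℂ := S.submatrix id (fun j => ((1 : Fin 2), j)) with hS1def
  set T₀ : Matrix (Fin 2 × n) n ℂ := S₀ * mpow ρ (1/4 : ℝ) with hT0def
  set T₁ : Matrix (Fin 2 × n) n ℂ := S₁ * mpow ρ (1/4 : ℝ) with hT1def
  have hSA : S₀ᴴ * S₀ = A := by
    rw [hA, hS]
    ext i j
    simp [Matrix.mul_apply, Matrix.conjTranspose_apply, Matrix.submatrix_apply, hS0def]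
  have hSB : S₁ᴴ * S₁ = B := by
    rw [hB, hS]
    ext i j
    simp [Matrix.mul_apply, Matrix.conjTranspose_apply, Matrix.submatrix_apply, hS1def]
  have hSC : S₀ᴴ * S₁ = C := by
    rw [hC, hS]
    ext i j
    simp [Matrix.mul_apply, Matrix.conjTranspose_apply, Matrix.submatrix_apply,
      hS0def, hS1def]
  have hA' : mpow ρ (1/4 : ℝ) * A * mpow ρ (1/4 : ℝ) = T₀ᴴ * T₀ := by
    rw [hT0def, Matrix.conjTranspose_mul, hσ, ← hSA]
    simp only [Matrix.mul_assoc]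
  have hB' : mpow ρ (1/4 : ℝ) * B * mpow ρ (1/4 : ℝ) = T₁ᴴ * T₁ := by
    rw [hT1def, Matrix.conjTranspose_mul, hσ, ← hSB]
    simp only [Matrix.mul_assoc]
  have hC' : mpow ρ (1/4 : ℝ) * C * mpow ρ (1/4 : ℝ) = T₀ᴴ * T₁ := by
    rw [hT0def, hT1def, Matrix.conjTranspose_mul, hσ, ← hSC]
    simp only [Matrix.mul_assoc]
  have eA : wnorm2 ρ A = Real.sqrt (((T₀ᴴ * T₀)ᴴ * (T₀ᴴ * T₀)).trace.re) := by
    rw [wnorm2, hA']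
  have eB : wnorm2 ρ B = Real.sqrt (((T₁ᴴ * T₁)ᴴ * (T₁ᴴ * T₁)).trace.re) := by
    rw [wnorm2, hB']
  have eC : wnorm2 ρ C = Real.sqrt (((T₀ᴴ * T₁)ᴴ * (T₀ᴴ * T₁)).trace.re) := by
    rw [wnorm2, hC']
  have part1 : wnorm2 ρ C ≤ Real.sqrt (wnorm2 ρ A) * Real.sqrt (wnorm2 ρ B) := by
    rw [eA, eB, eC, ← Real.sqrt_mul (Real.sqrt_nonneg _)]
    exact Real.sqrt_le_sqrt (key_ineq T₀ T₁)
  have hCH : wnorm2 ρ Cᴴ = wnorm2 ρ C := by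
    rw [wnorm2, wnorm2]
    congr 1
    have h1 : mpow ρ (1/4 : ℝ) * Cᴴ * mpow ρ (1/4 : ℝ)
        = (mpow ρ (1/4 : ℝ) * C * mpow ρ (1/4 : ℝ))ᴴ := by
      rw [Matrix.conjTranspose_mul, Matrix.conjTranspose_mul, hσ]
      simp only [Matrix.mul_assoc]
    rw [h1, Matrix.conjTranspose_conjTranspose, Matrix.trace_mul_comm]
  refine ⟨part1, ?_⟩
  have hwA0 : 0 ≤ wnorm2 ρ A := wnorm2_nonneg ρ A
  have hwB0 : 0 ≤ wnorm2 ρ B := wnorm2_nonneg ρ B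
  have hwC0 : 0 ≤ wnorm2 ρ C := wnorm2_nonneg ρ C
  rw [hCH]
  exact two_by_two_psd _ _ _ hwA0 hwB0 hwC0 part1
end
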